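/- arXiv:1104.2818 — 3 statements merged into one kernel-verified Lean document; each statement's English description precedes it below -/
import Mathlib

section
/- Let F be a hard 3-satisfiable weighted CNF formula. Then there is an assignment satisfying clauses of total weight at least (2/3) w(F) + (2/21) |V(F)|. -/
open Classical

/-- A clause: a finite set of literals, each a (variable, polarity) pair. -/
abbrev Clause := Finset (ℕ × Bool)

/-- A truth assignment satisfies a clause if some literal evaluates to true. -/
def SatC (τ : ℕ → Bool) (C : Clause) : Prop := ∃ l ∈ C, τ l.1 = l.2

/-- A CNF formula: clauses are nonempty and contain no variable together with its negation. -/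
def IsCNF (F : Finset Clause) : Prop :=
  ∀ C ∈ F, C.Nonempty ∧ ∀ v : ℕ, ¬((v, true) ∈ C ∧ (v, false) ∈ C)

/-- Total weight of a set of clauses. -/
def wt (w : Clause → ℕ) (G : Finset Clause) : ℕ := ∑ C ∈ G, w C

/-- Total weight of the clauses of `G` satisfied by `τ`. -/
noncomputable def satWt (w : Clause → ℕ) (τ : ℕ → Bool) (G : Finset Clause) : ℕ :=
  ∑ C ∈ G.filter (fun C => SatC τ C), w C

/-- `F` is 2-satisfiable. -/
def Sat2 (F : Finset Clause) : Prop :=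
  ∀ C1 ∈ F, ∀ C2 ∈ F, ∃ τ, SatC τ C1 ∧ SatC τ C2

/-- `F` is 3-satisfiable. -/
def Sat3 (F : Finset Clause) : Prop :=
  ∀ C1 ∈ F, ∀ C2 ∈ F, ∀ C3 ∈ F, ∃ τ, SatC τ C1 ∧ SatC τ C2 ∧ SatC τ C3

/-- The set of variables of a formula. -/
def vars (F : Finset Clause) : Finset ℕ := F.sup (fun C => C.image Prod.fst)

/-- The set of clauses of `F` containing a variable of `U`. -/
noncomputable def FU (F : Finset Clause) (U : Finset ℕ) : Finset Clause :=
  F.filter (fun C => ∃ l ∈ C, l.1 ∈ U)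

/-- Unit variables: variables occurring in unit clauses. -/
def unitVars (F : Finset Clause) : Finset ℕ :=
  (F.filter (fun C => C.card = 1)).sup (fun C => C.image Prod.fst)

/-- All unit clauses of `F` are positive. -/
def UnitPos (F : Finset Clause) : Prop :=
  ∀ C ∈ F, C.card = 1 → ∃ x, C = {(x, true)}

/-- A hard clause: a positive unit clause, or a two-literal clause `{¬x, y}` / `{¬x, ¬y}`
with `x` a unit variable and `y` not a unit variable. -/
def IsHard (F : Finset Clause) (C : Clause) : Prop :=
  (∃ x, C = {(x, true)}) ∨
  (∃ x ∈ unitVars F, ∃ y ∉ unitVars F, ∃ b : Bool, C = {(x, false), (y, b)})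

/-- The soft (non-hard) clauses of `F`. -/
noncomputable def softF (F : Finset Clause) : Finset Clause :=
  F.filter (fun C => ¬ IsHard F C)

/-- Two-literal hard clauses. -/
noncomputable def F2set (F : Finset Clause) : Finset Clause :=
  F.filter (fun C => ∃ x ∈ unitVars F, ∃ y ∉ unitVars F, ∃ b : Bool, C = {(x, false), (y, b)})

/-- Non-unit variables occurring in two-literal hard clauses. -/
noncomputable def V2set (F : Finset Clause) : Finset ℕ :=
  ((F2set F).sup (fun C => C.image Prod.fst)) \ unitVars F

/-- `F` is a hard formula: every clause is hard. -/
def HardFormula (F : Finset Clause) : Prop := ∀ C ∈ F, IsHard F C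

/-- `F` is expanding: every set `X` of variables is covered by clauses of total weight at least `|X|`. -/
def Expanding (F : Finset Clause) (w : Clause → ℕ) : Prop :=
  ∀ X ⊆ vars F, X.card ≤ wt w (FU F X)

/-- Extend an assignment on the variables of `F` to all of `ℕ`. -/
noncomputable def extAssign (F : Finset Clause) (α : {v // v ∈ vars F} → Bool) : ℕ → Bool :=
  fun n => if h : n ∈ vars F then α ⟨n, h⟩ else false

/-- The probability that the random assignment (unit variables true with probability 2/3,
other variables true with probability 1/2, independently) satisfies the clause `C`. -/
noncomputable def probSat (F : Finset Clause) (C : Clause) : ℝ :=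
  ∑ α : {v // v ∈ vars F} → Bool,
    (∏ v : {v // v ∈ vars F},
      (if (v : ℕ) ∈ unitVars F then (if α v then (2:ℝ)/3 else 1/3) else 1/2)) *
    (if SatC (extAssign F α) C then 1 else 0)


set_option linter.unusedSectionVars false
set_option linter.unusedVariables false
set_option maxHeartbeats 1000000


section SplitMachinery
variable {ι γ : Type} [Fintype ι] [DecidableEq ι] [Fintype γ]

/-- Rebuild a function from its value at `i` and its values elsewhere. -/
def expandFn (i : ι) (v : γ) (g : {j : ι // j ≠ i} → γ) : ι → γ :=
  fun j => if h : j = i then v else g ⟨j, h⟩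

lemma expandFn_same (i : ι) (v : γ) (g : {j : ι // j ≠ i} → γ) : expandFn i v g i = v := by
  simp [expandFn]

lemma expandFn_ne (i : ι) (v : γ) (g : {j : ι // j ≠ i} → γ) {j : ι} (h : j ≠ i) :
    expandFn i v g j = g ⟨j, h⟩ := by simp [expandFn, h]

/-- Splitting off one coordinate as an equivalence. -/
def splitEquiv (i : ι) (γ : Type) [Fintype γ] : (γ × ({j : ι // j ≠ i} → γ)) ≃ (ι → γ) where
  toFun p := expandFn i p.1 p.2
  invFun α := (α i, fun j => α j.1)
  left_inv := by
    rintro ⟨v, g⟩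
    refine Prod.ext (expandFn_same ..) ?_
    funext j
    exact expandFn_ne i v g j.2
  right_inv := by
    intro α
    funext j
    by_cases h : j = i <;> simp [expandFn, h]

lemma sum_split (i : ι) (f : (ι → γ) → ℝ) :
    ∑ α : ι → γ, f α = ∑ g : {j : ι // j ≠ i} → γ, ∑ v : γ, f (expandFn i v g) := by
  rw [← Equiv.sum_comp (splitEquiv i γ) f, Fintype.sum_prod_type]
  exact Finset.sum_comm

lemma card_ne_subtype (i : ι) : Fintype.card {j : ι // j ≠ i} = Fintype.card ι - 1 := by
  simp [Fintype.card_subtype_compl]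

/-- One-coordinate marginal computation. -/
lemma sum_ite_coord (i : ι) (p : γ → Prop) [DecidablePred p] (c : ℝ) :
    ∑ α : ι → γ, (if p (α i) then c else 0)
      = (Fintype.card γ : ℝ) ^ (Fintype.card ι - 1) * ∑ v : γ, (if p v then c else 0) := by
  rw [sum_split i]
  have : ∀ g : {j : ι // j ≠ i} → γ,
      (∑ v : γ, if p ((expandFn i v g) i) then c else 0) = ∑ v : γ, (if p v then c else 0) := by
    intro g; refine Finset.sum_congr rfl fun v _ => by rw [expandFn_same]
  rw [Finset.sum_congr rfl fun g _ => this g, Finset.sum_const, Finset.card_univ,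
    Fintype.card_fun, card_ne_subtype, nsmul_eq_mul]
  push_cast
  ring

lemma pow_pred_mul {q : ℝ} {K : ℕ} (hK : 1 ≤ K) : q ^ (K - 1) * q = q ^ K := by
  rw [← pow_succ]; congr 1; omega

lemma two_mul_max (a b : ℝ) : 2 * max a b = a + b + |a - b| := by
  rcases le_total a b with h | h
  · rw [max_eq_right h, abs_of_nonpos (by linarith)]; ring
  · rw [max_eq_left h, abs_of_nonneg (by linarith)]; ring

end SplitMachinery

-- ## Structural lemmas

noncomputable def hdat (F : Finset Clause) (C : Clause) : ℕ × ℕ × Bool :=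
  if h : ∃ p : ℕ × ℕ × Bool, p.1 ∈ unitVars F ∧ p.2.1 ∉ unitVars F ∧
      C = {(p.1, false), (p.2.1, p.2.2)} then h.choose else (0, 0, true)

noncomputable def xC (F : Finset Clause) (C : Clause) : ℕ := (hdat F C).1
noncomputable def yC (F : Finset Clause) (C : Clause) : ℕ := (hdat F C).2.1
noncomputable def bC (F : Finset Clause) (C : Clause) : Bool := (hdat F C).2.2

lemma hdat_spec {F : Finset Clause} {C : Clause} (hC : C ∈ F2set F) :
    xC F C ∈ unitVars F ∧ yC F C ∉ unitVars F ∧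
      C = {(xC F C, false), (yC F C, bC F C)} := by
  rw [F2set, Finset.mem_filter] at hC
  obtain ⟨-, x, hx, y, hy, b, rfl⟩ := hC
  have h : ∃ p : ℕ × ℕ × Bool, p.1 ∈ unitVars F ∧ p.2.1 ∉ unitVars F ∧
      ({(x, false), (y, b)} : Clause) = {(p.1, false), (p.2.1, p.2.2)} :=
    ⟨(x, y, b), hx, hy, rfl⟩
  have : hdat F {(x, false), (y, b)} = h.choose := dif_pos h
  rw [xC, yC, bC, this]
  exact ⟨h.choose_spec.1, h.choose_spec.2.1, h.choose_spec.2.2⟩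

lemma pair_eq {F : Finset Clause} {x x' y y' : ℕ} {b b' : Bool}
    (hx : x ∈ unitVars F) (hx' : x' ∈ unitVars F)
    (hy : y ∉ unitVars F) (hy' : y' ∉ unitVars F)
    (h : ({(x, false), (y, b)} : Clause) = {(x', false), (y', b')}) :
    x = x' ∧ y = y' ∧ b = b' := by
  have h1 : ((x : ℕ), false) ∈ ({(x', false), (y', b')} : Clause) := by
    rw [← h]; simp
  have h2 : ((y : ℕ), b) ∈ ({(x', false), (y', b')} : Clause) := by
    rw [← h]; simp
  simp only [Finset.mem_insert, Finset.mem_singleton, Prod.mk.injEq] at h1 h2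
  rcases h1 with ⟨hxx, -⟩ | ⟨hxy, -⟩
  · rcases h2 with ⟨hyx, -⟩ | ⟨hyy, hbb⟩
    · exact absurd (hyx ▸ hy) (by simpa using hx')
    · exact ⟨hxx, hyy, hbb⟩
  · exact absurd (hxy ▸ hx) (by simpa using hy')

lemma xC_ne_yC {F : Finset Clause} {C : Clause} (hC : C ∈ F2set F) : xC F C ≠ yC F C := by
  obtain ⟨hx, hy, -⟩ := hdat_spec hC
  intro h; exact hy (h ▸ hx)

lemma card_F2 {F : Finset Clause} {C : Clause} (hC : C ∈ F2set F) : C.card = 2 := by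
  obtain ⟨hx, hy, hCe⟩ := hdat_spec hC
  have hne : (xC F C, false) ∉ ({(yC F C, bC F C)} : Finset (ℕ × Bool)) := by
    simp only [Finset.mem_singleton]
    exact fun h => xC_ne_yC hC (congrArg Prod.fst h)
  rw [hCe, Finset.card_insert_of_notMem hne, Finset.card_singleton]

lemma unit_mem {F : Finset Clause} (hhard : HardFormula F) {x : ℕ}
    (hx : x ∈ unitVars F) : ({(x, true)} : Clause) ∈ F := by
  rw [unitVars, Finset.mem_sup] at hx
  obtain ⟨C, hC, hxC⟩ := hx
  rw [Finset.mem_filter] at hC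
  obtain ⟨hCF, hcard⟩ := hC
  rcases hhard C hCF with ⟨z, rfl⟩ | ⟨a, ha, b, hb, c, rfl⟩
  · simp only [Finset.image_singleton, Finset.mem_singleton] at hxC
    rw [hxC]; exact hCF
  · exfalso
    have : a ≠ b := fun h => hb (h ▸ ha)
    rw [Finset.card_insert_of_notMem (by simp [this]), Finset.card_singleton] at hcard
    omega

lemma key3 {F : Finset Clause} (h3 : Sat3 F) {x y : ℕ}
    (h1 : ({(x, true)} : Clause) ∈ F)
    (h2 : ({(x, false), (y, true)} : Clause) ∈ F)
    (h4 : ({(x, false), (y, false)} : Clause) ∈ F) : False := by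
  obtain ⟨τ, hτ1, hτ2, hτ3⟩ := h3 _ h1 _ h2 _ h4
  obtain ⟨l, hl, hτl⟩ := hτ1
  simp only [Finset.mem_singleton] at hl
  subst hl
  obtain ⟨l2, hl2, hτl2⟩ := hτ2
  obtain ⟨l3, hl3, hτl3⟩ := hτ3
  simp only [Finset.mem_insert, Finset.mem_singleton] at hl2 hl3
  rcases hl2 with rfl | rfl <;> rcases hl3 with rfl | rfl <;>
    simp_all

lemma F2_inj {F : Finset Clause} (h3 : Sat3 F) (hhard : HardFormula F)
    {C C' : Clause} (hC : C ∈ F2set F) (hC' : C' ∈ F2set F)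
    (hxy : xC F C = xC F C') (hyy : yC F C = yC F C') : C = C' := by
  obtain ⟨hx, hy, hCe⟩ := hdat_spec hC
  obtain ⟨hx', hy', hCe'⟩ := hdat_spec hC'
  by_cases hb : bC F C = bC F C'
  · rw [hCe, hCe', hxy, hyy, hb]
  · exfalso
    have hCF : C ∈ F := (Finset.mem_filter.mp hC).1
    have hCF' : C' ∈ F := (Finset.mem_filter.mp hC').1
    have hu : ({(xC F C, true)} : Clause) ∈ F := unit_mem hhard hx
    rw [hCe] at hCF
    rw [hCe', ← hxy, ← hyy] at hCF'
    rcases Bool.eq_false_or_eq_true (bC F C) with hb1 | hb1 <;>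
      rcases Bool.eq_false_or_eq_true (bC F C') with hb2 | hb2
    · exact hb (hb1.trans hb2.symm)
    · rw [hb1] at hCF; rw [hb2] at hCF'
      exact key3 h3 hu hCF hCF'
    · rw [hb1] at hCF; rw [hb2] at hCF'
      exact key3 h3 hu hCF' hCF
    · exact hb (hb1.trans hb2.symm)

lemma F1_eq {F : Finset Clause} (hhard : HardFormula F) :
    F.filter (fun C => C.card = 1) = (unitVars F).image (fun x => ({(x, true)} : Clause)) := by
  ext C
  simp only [Finset.mem_filter, Finset.mem_image]
  constructor
  · rintro ⟨hCF, hcard⟩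
    rcases hhard C hCF with ⟨z, rfl⟩ | ⟨a, ha, b, hb, c, rfl⟩
    · refine ⟨z, ?_, rfl⟩
      rw [unitVars, Finset.mem_sup]
      exact ⟨{(z, true)}, Finset.mem_filter.mpr ⟨hCF, by simp⟩, by simp⟩
    · exfalso
      have : a ≠ b := fun h => hb (h ▸ ha)
      rw [Finset.card_insert_of_notMem (by simp [this]), Finset.card_singleton] at hcard
      omega
  · rintro ⟨x, hx, rfl⟩
    exact ⟨unit_mem hhard hx, by simp⟩

lemma F_union {F : Finset Clause} (hhard : HardFormula F) :
    F = F.filter (fun C => C.card = 1) ∪ F2set F := by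
  ext C
  simp only [Finset.mem_union, Finset.mem_filter, F2set]
  constructor
  · intro hCF
    rcases hhard C hCF with ⟨z, rfl⟩ | h2
    · exact Or.inl ⟨hCF, by simp⟩
    · exact Or.inr ⟨hCF, h2⟩
  · rintro (⟨h, -⟩ | ⟨h, -⟩) <;> exact h

lemma F_disj {F : Finset Clause} :
    Disjoint (F.filter (fun C => C.card = 1)) (F2set F) := by
  rw [Finset.disjoint_left]
  intro C hC1 hC2
  have := card_F2 hC2
  rw [Finset.mem_filter] at hC1
  omega

lemma yC_mem_V2 {F : Finset Clause} {C : Clause} (hC : C ∈ F2set F) :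
    yC F C ∈ V2set F := by
  obtain ⟨hx, hy, hCe⟩ := hdat_spec hC
  rw [V2set, Finset.mem_sdiff]
  refine ⟨?_, hy⟩
  rw [Finset.mem_sup]
  refine ⟨C, hC, ?_⟩
  set x := xC F C with hxd
  set y := yC F C with hyd
  set b := bC F C with hbd
  rw [hCe]
  simp

lemma xC_mem_U {F : Finset Clause} {C : Clause} (hC : C ∈ F2set F) :
    xC F C ∈ unitVars F := (hdat_spec hC).1

lemma V2_surj {F : Finset Clause} {y : ℕ} (hy : y ∈ V2set F) :
    ∃ C ∈ F2set F, yC F C = y := by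
  rw [V2set, Finset.mem_sdiff, Finset.mem_sup] at hy
  obtain ⟨⟨C, hC, hyC⟩, hyU⟩ := hy
  refine ⟨C, hC, ?_⟩
  obtain ⟨hx, hy', hCe⟩ := hdat_spec hC
  rw [hCe] at hyC
  simp only [Finset.image_insert, Finset.image_singleton, Finset.mem_insert,
    Finset.mem_singleton] at hyC
  rcases hyC with rfl | rfl
  · exact absurd hx hyU
  · rfl

lemma vars_eq {F : Finset Clause} (hhard : HardFormula F) :
    vars F = unitVars F ∪ V2set F := by
  ext v
  simp only [Finset.mem_union]
  constructor
  · intro hv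
    rw [vars, Finset.mem_sup] at hv
    obtain ⟨C, hCF, hvC⟩ := hv
    rcases hhard C hCF with ⟨z, rfl⟩ | ⟨a, ha, b, hb, c, rfl⟩
    · left
      simp only [Finset.image_singleton, Finset.mem_singleton] at hvC
      subst hvC
      rw [unitVars, Finset.mem_sup]
      exact ⟨{(v, true)}, Finset.mem_filter.mpr ⟨hCF, by simp⟩, by simp⟩
    · have hC2 : ({(a, false), (b, c)} : Clause) ∈ F2set F :=
        Finset.mem_filter.mpr ⟨hCF, a, ha, b, hb, c, rfl⟩
      simp only [Finset.image_insert, Finset.image_singleton, Finset.mem_insert,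
        Finset.mem_singleton] at hvC
      rcases hvC with rfl | rfl
      · exact Or.inl ha
      · exact Or.inr (by
          rw [V2set, Finset.mem_sdiff]
          exact ⟨Finset.mem_sup.mpr ⟨_, hC2, by simp⟩, hb⟩)
  · rintro (hv | hv)
    · rw [vars, Finset.mem_sup]
      exact ⟨{(v, true)}, unit_mem hhard hv, by simp⟩
    · rw [V2set, Finset.mem_sdiff, Finset.mem_sup] at hv
      obtain ⟨⟨C, hC, hvC⟩, -⟩ := hv
      rw [vars, Finset.mem_sup]
      exact ⟨C, (Finset.mem_filter.mp hC).1, hvC⟩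

lemma U_V2_disj {F : Finset Clause} : Disjoint (unitVars F) (V2set F) := by
  rw [Finset.disjoint_left]
  intro v hv hv2
  rw [V2set, Finset.mem_sdiff] at hv2
  exact hv2.2 hv

lemma vars_card {F : Finset Clause} (hhard : HardFormula F) :
    (vars F).card = (unitVars F).card + (V2set F).card := by
  rw [vars_eq hhard, Finset.card_union_of_disjoint U_V2_disj]

lemma satC_pair {F : Finset Clause} {C : Clause} (hC : C ∈ F2set F) (τ : ℕ → Bool) :
    SatC τ C ↔ (τ (xC F C) = false ∨ τ (yC F C) = bC F C) := by
  obtain ⟨-, -, hCe⟩ := hdat_spec hC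
  set x := xC F C with hxd
  set y := yC F C with hyd
  set b := bC F C with hbd
  rw [hCe]
  constructor
  · rintro ⟨l, hl, hτl⟩
    simp only [Finset.mem_insert, Finset.mem_singleton] at hl
    rcases hl with rfl | rfl
    · exact Or.inl hτl
    · exact Or.inr hτl
  · rintro (h | h)
    · exact ⟨(x, false), by simp, h⟩
    · exact ⟨(y, b), by simp, h⟩

lemma satC_unit (x : ℕ) (τ : ℕ → Bool) :
    SatC τ ({(x, true)} : Clause) ↔ τ x = true := by
  constructor
  · rintro ⟨l, hl, hτl⟩
    simp only [Finset.mem_singleton] at hl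
    subst hl; exact hτl
  · intro h; exact ⟨(x, true), by simp, h⟩

-- PART C: bound 1 definitions and decomposition
noncomputable def extA (F : Finset Clause) (α : {v // v ∈ V2set F} → Bool) : ℕ → Bool :=
  fun v => if h : v ∈ V2set F then α ⟨v, h⟩ else false

noncomputable def F2x (F : Finset Clause) (x : ℕ) : Finset Clause :=
  (F2set F).filter (fun C => xC F C = x)

noncomputable def aW (w : Clause → ℕ) (x : ℕ) : ℕ := w {(x, true)}
noncomputable def bW (F : Finset Clause) (w : Clause → ℕ) (x : ℕ) : ℕ := ∑ C ∈ F2x F x, w C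
noncomputable def RW (F : Finset Clause) (w : Clause → ℕ) (x : ℕ)
    (α : {v // v ∈ V2set F} → Bool) : ℕ :=
  ∑ C ∈ F2x F x, if extA F α (yC F C) = bC F C then w C else 0

noncomputable def tau1 (F : Finset Clause) (w : Clause → ℕ)
    (α : {v // v ∈ V2set F} → Bool) : ℕ → Bool :=
  fun v => if h : v ∈ V2set F then α ⟨v, h⟩ else
    decide (bW F w v ≤ aW w v + RW F w v α)

lemma decompX (F : Finset Clause) (w : Clause → ℕ) (hhard : HardFormula F) (τ : ℕ → Bool) :
    satWt w τ F = ∑ x ∈ unitVars F,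
      ((if τ x = true then aW w x else 0) +
        ∑ C ∈ F2x F x, if SatC τ C then w C else 0) := by
  have hg : (∑ C ∈ F.filter (fun C => SatC τ C), w C) = ∑ C ∈ F, if SatC τ C then w C else 0 :=
    Finset.sum_filter _ _
  rw [satWt, hg]
  have hsplit : ∑ C ∈ F, (if SatC τ C then w C else 0)
      = ∑ C ∈ F.filter (fun C => C.card = 1), (if SatC τ C then w C else 0)
        + ∑ C ∈ F2set F, (if SatC τ C then w C else 0) := by
    conv_lhs => rw [F_union hhard]
    exact Finset.sum_union F_disj
  have hinj : ∀ x ∈ unitVars F, ∀ x' ∈ unitVars F,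
      ({(x, true)} : Clause) = {(x', true)} → x = x' := by
    intro x _ x' _ h
    exact congrArg Prod.fst (Finset.singleton_inj.mp h)
  have h1 : ∑ C ∈ F.filter (fun C => C.card = 1), (if SatC τ C then w C else 0)
      = ∑ x ∈ unitVars F, (if τ x = true then aW w x else 0) := by
    rw [F1_eq hhard, Finset.sum_image hinj]
    refine Finset.sum_congr rfl fun x _ => ?_
    simp only [satC_unit, aW]
  have h2 : ∑ C ∈ F2set F, (if SatC τ C then w C else 0)
      = ∑ x ∈ unitVars F, ∑ C ∈ F2x F x, (if SatC τ C then w C else 0) :=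
    (Finset.sum_fiberwise_of_maps_to (fun C hC => xC_mem_U hC) _).symm
  rw [hsplit, h1, h2, ← Finset.sum_add_distrib]

lemma satWt_tau1 (F : Finset Clause) (w : Clause → ℕ) (hhard : HardFormula F)
    (α : {v // v ∈ V2set F} → Bool) :
    satWt w (tau1 F w α) F
      = ∑ x ∈ unitVars F, max (bW F w x) (aW w x + RW F w x α) := by
  rw [decompX F w hhard]
  refine Finset.sum_congr rfl fun x hx => ?_
  have hxV2 : x ∉ V2set F := Finset.disjoint_left.mp U_V2_disj hx
  have hτx : tau1 F w α x = decide (bW F w x ≤ aW w x + RW F w x α) := dif_neg hxV2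
  have hsat : ∀ C ∈ F2x F x, (SatC (tau1 F w α) C
      ↔ (tau1 F w α x = false ∨ extA F α (yC F C) = bC F C)) := by
    intro C hC
    have hC2 : C ∈ F2set F := (Finset.mem_filter.mp hC).1
    have hxC : xC F C = x := (Finset.mem_filter.mp hC).2
    have hyV : yC F C ∈ V2set F := yC_mem_V2 hC2
    rw [satC_pair hC2, hxC]
    have : tau1 F w α (yC F C) = extA F α (yC F C) := by
      rw [tau1, extA]
      simp only [dif_pos hyV]
    rw [this]
  by_cases h : bW F w x ≤ aW w x + RW F w x α
  · have hτ : tau1 F w α x = true := by rw [hτx]; exact decide_eq_true h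
    rw [max_eq_right h, if_pos hτ]
    congr 1
    rw [RW]
    refine Finset.sum_congr rfl fun C hC => ?_
    by_cases hE : extA F α (yC F C) = bC F C
    · rw [if_pos ((hsat C hC).mpr (Or.inr hE)), if_pos hE]
    · rw [if_neg, if_neg hE]
      rw [hsat C hC, hτ]
      simp [hE]
  · have hτ : tau1 F w α x = false := by rw [hτx]; exact decide_eq_false h
    rw [max_eq_left (le_of_lt (lt_of_not_ge h)), if_neg (by rw [hτ]; simp)]
    have : ∀ C ∈ F2x F x, (if SatC (tau1 F w α) C then w C else 0) = w C := by
      intro C hC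
      rw [if_pos ((hsat C hC).mpr (Or.inl hτ))]
    rw [Finset.sum_congr rfl this, zero_add, bW]

lemma sumR (F : Finset Clause) (w : Clause → ℕ) (x : ℕ) :
    (∑ α : {v // v ∈ V2set F} → Bool, (RW F w x α : ℝ)) * 2
      = (2 : ℝ) ^ (V2set F).card * (bW F w x : ℝ) := by
  rcases Finset.eq_empty_or_nonempty (F2x F x) with hFx | ⟨C0, hC0⟩
  · simp [RW, bW, hFx]
  · have hn2 : 1 ≤ (V2set F).card := by
      have hC02 : C0 ∈ F2set F := (Finset.mem_filter.mp hC0).1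
      exact Finset.card_pos.mpr ⟨yC F C0, yC_mem_V2 hC02⟩
    have hcast : ∀ α, (RW F w x α : ℝ)
        = ∑ C ∈ F2x F x, if extA F α (yC F C) = bC F C then (w C : ℝ) else 0 := by
      intro α
      rw [RW, Nat.cast_sum]
      refine Finset.sum_congr rfl fun C _ => ?_
      rw [apply_ite (Nat.cast : ℕ → ℝ), Nat.cast_zero]
    have hb : (bW F w x : ℝ) = ∑ C ∈ F2x F x, (w C : ℝ) := by
      rw [bW, Nat.cast_sum]
    calc (∑ α : {v // v ∈ V2set F} → Bool, (RW F w x α : ℝ)) * 2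
        = (∑ C ∈ F2x F x, ∑ α : {v // v ∈ V2set F} → Bool,
            if extA F α (yC F C) = bC F C then (w C : ℝ) else 0) * 2 := by
          rw [Finset.sum_congr rfl fun α (_ : α ∈ Finset.univ) => hcast α, Finset.sum_comm]
      _ = (∑ C ∈ F2x F x, (2:ℝ) ^ ((V2set F).card - 1) * (w C : ℝ)) * 2 := by
          congr 1
          refine Finset.sum_congr rfl fun C hC => ?_
          have hC2 : C ∈ F2set F := (Finset.mem_filter.mp hC).1
          have hyV : yC F C ∈ V2set F := yC_mem_V2 hC2
          have heval : ∀ α : {v // v ∈ V2set F} → Bool,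
              extA F α (yC F C) = α ⟨yC F C, hyV⟩ := fun α => dif_pos hyV
          rw [Finset.sum_congr rfl fun α (_ : α ∈ Finset.univ) => by rw [heval α]]
          rw [sum_ite_coord (⟨yC F C, hyV⟩ : {v // v ∈ V2set F})
            (fun v : Bool => v = bC F C) ((w C : ℝ))]
          rw [Fintype.card_bool, Fintype.card_coe]
          push_cast
          congr 1
          rcases bC F C <;> simp
      _ = (2 : ℝ) ^ (V2set F).card * (bW F w x : ℝ) := by
          rw [← Finset.mul_sum, ← hb, ← pow_pred_mul hn2]
          ring

-- PART D: spread and per-x bound, bound1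
lemma RW_cast (F : Finset Clause) (w : Clause → ℕ) (x : ℕ) (α : {v // v ∈ V2set F} → Bool) :
    (RW F w x α : ℝ)
      = ∑ C ∈ F2x F x, if extA F α (yC F C) = bC F C then (w C : ℝ) else 0 := by
  rw [RW, Nat.cast_sum]
  refine Finset.sum_congr rfl fun C _ => ?_
  rw [apply_ite (Nat.cast : ℕ → ℝ), Nat.cast_zero]

lemma spread1 (F : Finset Clause) (w : Clause → ℕ) (h3 : Sat3 F) (hhard : HardFormula F)
    (x : ℕ) {C0 : Clause} (hC0 : C0 ∈ F2x F x) (t : ℝ) :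
    (w C0 : ℝ) * 2 ^ ((V2set F).card - 1)
      ≤ ∑ α : {v // v ∈ V2set F} → Bool, |(RW F w x α : ℝ) - t| := by
  have hC02 : C0 ∈ F2set F := (Finset.mem_filter.mp hC0).1
  have hxC0 : xC F C0 = x := (Finset.mem_filter.mp hC0).2
  have hyV : yC F C0 ∈ V2set F := yC_mem_V2 hC02
  set i0 : {v // v ∈ V2set F} := ⟨yC F C0, hyV⟩ with hi0
  rw [sum_split i0 (fun α => |(RW F w x α : ℝ) - t|)]
  set T : ({j : {v // v ∈ V2set F} // j ≠ i0} → Bool) → ℝ := fun g =>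
    ∑ C ∈ (F2x F x).erase C0,
      (if extA F (expandFn i0 false g) (yC F C) = bC F C then (w C : ℝ) else 0) with hTdef
  have key : ∀ g v, (RW F w x (expandFn i0 v g) : ℝ)
      = (if v = bC F C0 then (w C0 : ℝ) else 0) + T g := by
    intro g v
    rw [RW_cast, ← Finset.add_sum_erase _ _ hC0]
    congr 1
    · have : extA F (expandFn i0 v g) (yC F C0) = v := by
        rw [extA]
        simp only [dif_pos hyV]
        exact expandFn_same i0 v g
      rw [this]
    · refine Finset.sum_congr rfl fun C hC => ?_
      have hCne : C ≠ C0 := Finset.ne_of_mem_erase hC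
      have hCmem : C ∈ F2x F x := Finset.mem_of_mem_erase hC
      have hC2 : C ∈ F2set F := (Finset.mem_filter.mp hCmem).1
      have hxCC : xC F C = x := (Finset.mem_filter.mp hCmem).2
      have hyV' : yC F C ∈ V2set F := yC_mem_V2 hC2
      have hyne : yC F C ≠ yC F C0 := fun h =>
        hCne (F2_inj h3 hhard hC2 hC02 (hxCC.trans hxC0.symm) h)
      have hne : (⟨yC F C, hyV'⟩ : {v // v ∈ V2set F}) ≠ i0 := by
        intro h
        exact hyne (congrArg Subtype.val h)
      have e1 : extA F (expandFn i0 v g) (yC F C) = g ⟨⟨yC F C, hyV'⟩, hne⟩ := by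
        rw [extA]; simp only [dif_pos hyV']; exact expandFn_ne i0 v g hne
      have e2 : extA F (expandFn i0 false g) (yC F C) = g ⟨⟨yC F C, hyV'⟩, hne⟩ := by
        rw [extA]; simp only [dif_pos hyV']; exact expandFn_ne i0 false g hne
      rw [e1, e2]
  have hinner : ∀ g : {j : {v // v ∈ V2set F} // j ≠ i0} → Bool,
      (w C0 : ℝ) ≤ ∑ v : Bool, |(RW F w x (expandFn i0 v g) : ℝ) - t| := by
    intro g
    rw [Fintype.sum_bool, key g true, key g false]
    rcases hbc : bC F C0 with _ | _ <;> simp only [hbc, if_pos, if_neg, Bool.true_eq_false,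
      Bool.false_eq_true, if_true, if_false, zero_add]
    · have h1 := le_abs_self ((w C0 : ℝ) + T g - t)
      have h2 := neg_abs_le (T g - t)
      linarith
    · have h1 := le_abs_self ((w C0 : ℝ) + T g - t)
      have h2 := neg_abs_le (T g - t)
      linarith
  calc (w C0 : ℝ) * 2 ^ ((V2set F).card - 1)
      = ∑ _g : {j : {v // v ∈ V2set F} // j ≠ i0} → Bool, (w C0 : ℝ) := by
        rw [Finset.sum_const, Finset.card_univ, Fintype.card_fun, Fintype.card_bool,
          card_ne_subtype, Fintype.card_coe, nsmul_eq_mul]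
        push_cast
        ring
    _ ≤ _ := Finset.sum_le_sum fun g _ => hinner g

lemma perx (F : Finset Clause) (w : Clause → ℕ) (h3 : Sat3 F) (hhard : HardFormula F)
    (hw : ∀ C ∈ F, 0 < w C) {x : ℕ} (hx : x ∈ unitVars F) :
    (2:ℝ) ^ (V2set F).card * ((2/3) * ((aW w x : ℝ) + (bW F w x : ℝ)) + 1/6)
      ≤ ∑ α : {v // v ∈ V2set F} → Bool,
          ((max (bW F w x) (aW w x + RW F w x α) : ℕ) : ℝ) := by
  have hcard : (Finset.univ : Finset ({v // v ∈ V2set F} → Bool)).card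
      = 2 ^ (V2set F).card := by
    rw [Finset.card_univ, Fintype.card_fun, Fintype.card_bool, Fintype.card_coe]
  have hconst : ∀ c : ℝ, (∑ _α : {v // v ∈ V2set F} → Bool, c)
      = (2:ℝ) ^ (V2set F).card * c := by
    intro c
    rw [Finset.sum_const, hcard, nsmul_eq_mul]
    push_cast
    ring
  have ha1 : 1 ≤ aW w x := hw _ (unit_mem hhard hx)
  have ha1R : (1:ℝ) ≤ (aW w x : ℝ) := by exact_mod_cast ha1
  set N : ℝ := (2:ℝ) ^ (V2set F).card with hNdef
  have hN : (0:ℝ) < N := by positivity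
  have hsumR := sumR F w x
  have hsummax : ∀ (f : ({v // v ∈ V2set F} → Bool) → ℕ),
      (∀ α, f α ≤ max (bW F w x) (aW w x + RW F w x α)) →
      (∑ α : {v // v ∈ V2set F} → Bool, (f α : ℝ))
        ≤ ∑ α : {v // v ∈ V2set F} → Bool,
            ((max (bW F w x) (aW w x + RW F w x α) : ℕ) : ℝ) :=
    fun f hf => Finset.sum_le_sum fun α _ => by exact_mod_cast hf α
  rcases (by omega : bW F w x + 1 ≤ 2 * aW w x ∨ 2 * aW w x + 1 ≤ bW F w x
      ∨ bW F w x = 2 * aW w x) with h | h | h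
  · have hR : (bW F w x : ℝ) + 1 ≤ 2 * (aW w x : ℝ) := by exact_mod_cast h
    have h1 : (∑ α : {v // v ∈ V2set F} → Bool, ((aW w x + RW F w x α : ℕ) : ℝ))
        ≤ ∑ α : {v // v ∈ V2set F} → Bool,
            ((max (bW F w x) (aW w x + RW F w x α) : ℕ) : ℝ) :=
      hsummax _ fun α => le_max_right _ _
    have h2 : (∑ α : {v // v ∈ V2set F} → Bool, ((aW w x + RW F w x α : ℕ) : ℝ))
        = N * (aW w x : ℝ) + ∑ α : {v // v ∈ V2set F} → Bool, (RW F w x α : ℝ) := by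
      push_cast
      rw [Finset.sum_add_distrib, hconst]
    have hkey : (0:ℝ) ≤ N * (2 * (aW w x : ℝ) - (bW F w x : ℝ) - 1) :=
      mul_nonneg hN.le (by linarith)
    linarith
  · have hR : 2 * (aW w x : ℝ) + 1 ≤ (bW F w x : ℝ) := by exact_mod_cast h
    have h1 : (∑ _α : {v // v ∈ V2set F} → Bool, ((bW F w x : ℕ) : ℝ))
        ≤ ∑ α : {v // v ∈ V2set F} → Bool,
            ((max (bW F w x) (aW w x + RW F w x α) : ℕ) : ℝ) :=
      hsummax _ fun α => le_max_left _ _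
    rw [hconst] at h1
    have hkey : (0:ℝ) ≤ N * (2 * (bW F w x : ℝ) - 4 * (aW w x : ℝ) - 1) :=
      mul_nonneg hN.le (by linarith)
    linarith
  · have hbR : (bW F w x : ℝ) = 2 * (aW w x : ℝ) := by exact_mod_cast h
    have hbpos : 0 < bW F w x := by omega
    have hne : (F2x F x).Nonempty := by
      by_contra hc
      rw [Finset.not_nonempty_iff_eq_empty] at hc
      simp [bW, hc] at hbpos
    obtain ⟨C0, hC0⟩ := hne
    have hC02 : C0 ∈ F2set F := (Finset.mem_filter.mp hC0).1
    have hn2 : 1 ≤ (V2set F).card :=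
      Finset.card_pos.mpr ⟨yC F C0, yC_mem_V2 hC02⟩
    have hc01 : (1:ℝ) ≤ (w C0 : ℝ) := by
      have := hw C0 (Finset.mem_filter.mp hC02).1
      exact_mod_cast this
    have hsp := spread1 F w h3 hhard x hC0 ((aW w x : ℝ))
    have hP2 : (2:ℝ) ^ ((V2set F).card - 1) * 2 = N := pow_pred_mul hn2
    have hPpos : (0:ℝ) < (2:ℝ) ^ ((V2set F).card - 1) := by positivity
    have hsp' : (2:ℝ) ^ ((V2set F).card - 1)
        ≤ ∑ α : {v // v ∈ V2set F} → Bool, |(RW F w x α : ℝ) - (aW w x : ℝ)| := by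
      calc (2:ℝ) ^ ((V2set F).card - 1)
          = 1 * (2:ℝ) ^ ((V2set F).card - 1) := (one_mul _).symm
        _ ≤ (w C0 : ℝ) * 2 ^ ((V2set F).card - 1) :=
            mul_le_mul_of_nonneg_right hc01 hPpos.le
        _ ≤ _ := hsp
    have hid : ∀ α : {v // v ∈ V2set F} → Bool,
        2 * ((max (bW F w x) (aW w x + RW F w x α) : ℕ) : ℝ)
          = (bW F w x : ℝ) + ((aW w x : ℝ) + (RW F w x α : ℝ))
            + |(RW F w x α : ℝ) - (aW w x : ℝ)| := by
      intro α
      rw [Nat.cast_max, two_mul_max]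
      push_cast
      have habs : |(bW F w x : ℝ) - ((aW w x : ℝ) + (RW F w x α : ℝ))|
          = |(RW F w x α : ℝ) - (aW w x : ℝ)| := by
        rw [hbR, abs_sub_comm]
        congr 1
        ring
      rw [habs]
    have hsum2 : 2 * (∑ α : {v // v ∈ V2set F} → Bool,
        ((max (bW F w x) (aW w x + RW F w x α) : ℕ) : ℝ))
        = N * ((bW F w x : ℝ) + (aW w x : ℝ))
          + (∑ α : {v // v ∈ V2set F} → Bool, (RW F w x α : ℝ))
          + ∑ α : {v // v ∈ V2set F} → Bool, |(RW F w x α : ℝ) - (aW w x : ℝ)| := by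
      rw [Finset.mul_sum]
      rw [Finset.sum_congr rfl fun α (_ : α ∈ Finset.univ) => hid α]
      rw [Finset.sum_add_distrib, Finset.sum_add_distrib, Finset.sum_add_distrib, hconst,
        hconst]
      ring
    have hS2 : (∑ α : {v // v ∈ V2set F} → Bool, (RW F w x α : ℝ)) * 2
        = N * (bW F w x : ℝ) := by rw [hNdef]; exact hsumR
    have hNb : N * (bW F w x : ℝ) = 2 * (N * (aW w x : ℝ)) := by rw [hbR]; ring
    linarith

-- PART E: bound 1 conclusion
lemma wt_split (F : Finset Clause) (w : Clause → ℕ) (hhard : HardFormula F) :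
    wt w F = ∑ x ∈ unitVars F, (aW w x + bW F w x) := by
  have hsplit : wt w F = ∑ C ∈ F.filter (fun C => C.card = 1), w C + ∑ C ∈ F2set F, w C := by
    rw [wt]
    conv_lhs => rw [F_union hhard]
    exact Finset.sum_union F_disj
  have hinj : ∀ x ∈ unitVars F, ∀ x' ∈ unitVars F,
      ({(x, true)} : Clause) = {(x', true)} → x = x' := by
    intro x _ x' _ h
    exact congrArg Prod.fst (Finset.singleton_inj.mp h)
  have h1 : ∑ C ∈ F.filter (fun C => C.card = 1), w C = ∑ x ∈ unitVars F, aW w x := by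
    rw [F1_eq hhard, Finset.sum_image hinj]
    rfl
  have h2 : ∑ C ∈ F2set F, w C = ∑ x ∈ unitVars F, bW F w x :=
    (Finset.sum_fiberwise_of_maps_to (fun C hC => xC_mem_U hC) _).symm
  rw [hsplit, h1, h2, ← Finset.sum_add_distrib]

theorem bound1 (F : Finset Clause) (w : Clause → ℕ)
    (hw : ∀ C ∈ F, 0 < w C) (h3 : Sat3 F) (hhard : HardFormula F) :
    ∃ τ : ℕ → Bool,
      (2:ℝ)/3 * (wt w F : ℝ) + 1/6 * ((unitVars F).card : ℝ) ≤ (satWt w τ F : ℝ) := by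
  classical
  have hNE : Nonempty ({v // v ∈ V2set F} → Bool) := ⟨fun _ => false⟩
  set N : ℝ := (2:ℝ) ^ (V2set F).card with hNdef
  have hcard : (Finset.univ : Finset ({v // v ∈ V2set F} → Bool)).card
      = 2 ^ (V2set F).card := by
    rw [Finset.card_univ, Fintype.card_fun, Fintype.card_bool, Fintype.card_coe]
  set c : ℝ := (2:ℝ)/3 * (wt w F : ℝ) + 1/6 * ((unitVars F).card : ℝ) with hcdef
  have hmain : (∑ _α : {v // v ∈ V2set F} → Bool, c)
      ≤ ∑ α : {v // v ∈ V2set F} → Bool, (satWt w (tau1 F w α) F : ℝ) := by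
    have hL : (∑ _α : {v // v ∈ V2set F} → Bool, c) = N * c := by
      rw [Finset.sum_const, hcard, nsmul_eq_mul, hNdef]
      push_cast
      ring
    have hR : ∑ α : {v // v ∈ V2set F} → Bool, (satWt w (tau1 F w α) F : ℝ)
        = ∑ x ∈ unitVars F, ∑ α : {v // v ∈ V2set F} → Bool,
            ((max (bW F w x) (aW w x + RW F w x α) : ℕ) : ℝ) := by
      rw [Finset.sum_congr rfl fun α (_ : α ∈ Finset.univ) => by
        rw [satWt_tau1 F w hhard α, Nat.cast_sum]]
      exact Finset.sum_comm
    have hperx : ∑ x ∈ unitVars F, N * ((2:ℝ)/3 * ((aW w x : ℝ) + (bW F w x : ℝ)) + 1/6)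
        ≤ ∑ x ∈ unitVars F, ∑ α : {v // v ∈ V2set F} → Bool,
            ((max (bW F w x) (aW w x + RW F w x α) : ℕ) : ℝ) :=
      Finset.sum_le_sum fun x hxU => perx F w h3 hhard hw hxU
    have hLsum : ∑ x ∈ unitVars F, N * ((2:ℝ)/3 * ((aW w x : ℝ) + (bW F w x : ℝ)) + 1/6)
        = N * c := by
      rw [hcdef, wt_split F w hhard]
      rw [Finset.sum_congr rfl fun x (_ : x ∈ unitVars F) =>
        (by ring : N * ((2:ℝ)/3 * ((aW w x : ℝ) + (bW F w x : ℝ)) + 1/6)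
          = N * (2:ℝ)/3 * ((aW w x : ℝ) + (bW F w x : ℝ)) + N * (1/6))]
      rw [Finset.sum_add_distrib, ← Finset.mul_sum, Finset.sum_const, nsmul_eq_mul]
      push_cast
      ring
    rw [hL, hR, ← hLsum]
    exact hperx
  obtain ⟨α, -, hα⟩ := Finset.exists_le_of_sum_le Finset.univ_nonempty hmain
  exact ⟨tau1 F w α, hα⟩

-- PART F: bound 2 definitions and decomposition
noncomputable def extB (F : Finset Clause) (β : {v // v ∈ unitVars F} → Fin 3) : ℕ → Bool :=
  fun v => if h : v ∈ unitVars F then decide (β ⟨v, h⟩ ≠ 0) else false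

noncomputable def F2y (F : Finset Clause) (y : ℕ) : Finset Clause :=
  (F2set F).filter (fun C => yC F C = y)

noncomputable def PY (F : Finset Clause) (y : ℕ) : Finset Clause :=
  (F2y F y).filter (fun C => bC F C = true)

noncomputable def NY (F : Finset Clause) (y : ℕ) : Finset Clause :=
  (F2y F y).filter (fun C => ¬ bC F C = true)

noncomputable def totP (F : Finset Clause) (w : Clause → ℕ) (y : ℕ) : ℕ := ∑ C ∈ PY F y, w C
noncomputable def totN (F : Finset Clause) (w : Clause → ℕ) (y : ℕ) : ℕ := ∑ C ∈ NY F y, w C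

noncomputable def actP (F : Finset Clause) (w : Clause → ℕ) (y : ℕ)
    (β : {v // v ∈ unitVars F} → Fin 3) : ℕ :=
  ∑ C ∈ PY F y, if extB F β (xC F C) = true then w C else 0
noncomputable def actN (F : Finset Clause) (w : Clause → ℕ) (y : ℕ)
    (β : {v // v ∈ unitVars F} → Fin 3) : ℕ :=
  ∑ C ∈ NY F y, if extB F β (xC F C) = true then w C else 0
noncomputable def inactP (F : Finset Clause) (w : Clause → ℕ) (y : ℕ)
    (β : {v // v ∈ unitVars F} → Fin 3) : ℕ :=
  ∑ C ∈ PY F y, if extB F β (xC F C) = false then w C else 0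
noncomputable def inactN (F : Finset Clause) (w : Clause → ℕ) (y : ℕ)
    (β : {v // v ∈ unitVars F} → Fin 3) : ℕ :=
  ∑ C ∈ NY F y, if extB F β (xC F C) = false then w C else 0

noncomputable def tau2 (F : Finset Clause) (w : Clause → ℕ)
    (β : {v // v ∈ unitVars F} → Fin 3) : ℕ → Bool :=
  fun v => if v ∈ unitVars F then extB F β v else
    decide (actN F w v β ≤ actP F w v β)

lemma comp_act_P (F : Finset Clause) (w : Clause → ℕ) (y : ℕ)
    (β : {v // v ∈ unitVars F} → Fin 3) :
    actP F w y β + inactP F w y β = totP F w y := by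
  rw [actP, inactP, totP, ← Finset.sum_add_distrib]
  refine Finset.sum_congr rfl fun C _ => ?_
  rcases h : extB F β (xC F C) with _ | _ <;> simp [h]

lemma comp_act_N (F : Finset Clause) (w : Clause → ℕ) (y : ℕ)
    (β : {v // v ∈ unitVars F} → Fin 3) :
    actN F w y β + inactN F w y β = totN F w y := by
  rw [actN, inactN, totN, ← Finset.sum_add_distrib]
  refine Finset.sum_congr rfl fun C _ => ?_
  rcases h : extB F β (xC F C) with _ | _ <;> simp [h]

lemma decompY (F : Finset Clause) (w : Clause → ℕ) (hhard : HardFormula F) (τ : ℕ → Bool) :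
    satWt w τ F = (∑ x ∈ unitVars F, if τ x = true then aW w x else 0)
      + ∑ y ∈ V2set F, ∑ C ∈ F2y F y, (if SatC τ C then w C else 0) := by
  have hg : (∑ C ∈ F.filter (fun C => SatC τ C), w C) = ∑ C ∈ F, if SatC τ C then w C else 0 :=
    Finset.sum_filter _ _
  rw [satWt, hg]
  have hsplit : ∑ C ∈ F, (if SatC τ C then w C else 0)
      = ∑ C ∈ F.filter (fun C => C.card = 1), (if SatC τ C then w C else 0)
        + ∑ C ∈ F2set F, (if SatC τ C then w C else 0) := by
    conv_lhs => rw [F_union hhard]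
    exact Finset.sum_union F_disj
  have hinj : ∀ x ∈ unitVars F, ∀ x' ∈ unitVars F,
      ({(x, true)} : Clause) = {(x', true)} → x = x' := by
    intro x _ x' _ h
    exact congrArg Prod.fst (Finset.singleton_inj.mp h)
  have h1 : ∑ C ∈ F.filter (fun C => C.card = 1), (if SatC τ C then w C else 0)
      = ∑ x ∈ unitVars F, (if τ x = true then aW w x else 0) := by
    rw [F1_eq hhard, Finset.sum_image hinj]
    refine Finset.sum_congr rfl fun x _ => ?_
    simp only [satC_unit, aW]
  have h2 : ∑ C ∈ F2set F, (if SatC τ C then w C else 0)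
      = ∑ y ∈ V2set F, ∑ C ∈ F2y F y, (if SatC τ C then w C else 0) :=
    (Finset.sum_fiberwise_of_maps_to (fun C hC => yC_mem_V2 hC) _).symm
  rw [hsplit, h1, h2]

lemma satWt_tau2 (F : Finset Clause) (w : Clause → ℕ) (hhard : HardFormula F)
    (β : {v // v ∈ unitVars F} → Fin 3) :
    satWt w (tau2 F w β) F
      = (∑ x ∈ unitVars F, if extB F β x = true then aW w x else 0)
        + ∑ y ∈ V2set F,
            max (totN F w y + inactP F w y β) (totP F w y + inactN F w y β) := by
  rw [decompY F w hhard]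
  congr 1
  · refine Finset.sum_congr rfl fun x hx => ?_
    have : tau2 F w β x = extB F β x := if_pos hx
    rw [this]
  · refine Finset.sum_congr rfl fun y hy => ?_
    have hyU : y ∉ unitVars F := by
      rw [V2set, Finset.mem_sdiff] at hy
      exact hy.2
    have hτy : tau2 F w β y = decide (actN F w y β ≤ actP F w y β) := if_neg hyU
    have hPN : F2y F y = PY F y ∪ NY F y :=
      (Finset.filter_union_filter_not_eq _ _).symm
    have hdisj : Disjoint (PY F y) (NY F y) := Finset.disjoint_filter_filter_not _ _ _
    have hsat : ∀ C ∈ F2y F y, (SatC (tau2 F w β) C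
        ↔ (extB F β (xC F C) = false ∨ tau2 F w β y = bC F C)) := by
      intro C hC
      have hC2 : C ∈ F2set F := (Finset.mem_filter.mp hC).1
      have hyC : yC F C = y := (Finset.mem_filter.mp hC).2
      have hxU : xC F C ∈ unitVars F := xC_mem_U hC2
      rw [satC_pair hC2, hyC]
      have : tau2 F w β (xC F C) = extB F β (xC F C) := if_pos hxU
      rw [this]
    rw [hPN, Finset.sum_union hdisj]
    by_cases hc : actN F w y β ≤ actP F w y β
    · have hτ : tau2 F w β y = true := by rw [hτy]; exact decide_eq_true hc
      have hmax : max (totN F w y + inactP F w y β) (totP F w y + inactN F w y β)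
          = totP F w y + inactN F w y β := by
        have h1 := comp_act_P F w y β
        have h2 := comp_act_N F w y β
        exact max_eq_right (by omega)
      rw [hmax]
      congr 1
      · rw [totP]
        refine Finset.sum_congr rfl fun C hC => ?_
        have hb : bC F C = true := (Finset.mem_filter.mp hC).2
        have hC1 : C ∈ F2y F y := (Finset.mem_filter.mp hC).1
        rw [if_pos ((hsat C hC1).mpr (Or.inr (by rw [hτ, hb])))]
      · rw [inactN]
        refine Finset.sum_congr rfl fun C hC => ?_
        have hb : bC F C = false := by
          have := (Finset.mem_filter.mp hC).2
          exact Bool.not_eq_true _ ▸ (by simpa using this)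
        have hC1 : C ∈ F2y F y := (Finset.mem_filter.mp hC).1
        by_cases hE : extB F β (xC F C) = false
        · rw [if_pos ((hsat C hC1).mpr (Or.inl hE)), if_pos hE]
        · rw [if_neg, if_neg hE]
          rw [hsat C hC1, hτ, hb]
          simp [hE]
    · have hτ : tau2 F w β y = false := by rw [hτy]; exact decide_eq_false hc
      have hmax : max (totN F w y + inactP F w y β) (totP F w y + inactN F w y β)
          = totN F w y + inactP F w y β := by
        have h1 := comp_act_P F w y β
        have h2 := comp_act_N F w y β
        have : actP F w y β < actN F w y β := lt_of_not_ge hc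
        exact max_eq_left (by omega)
      rw [hmax, add_comm (totN F w y) (inactP F w y β)]
      congr 1
      · rw [inactP]
        refine Finset.sum_congr rfl fun C hC => ?_
        have hb : bC F C = true := (Finset.mem_filter.mp hC).2
        have hC1 : C ∈ F2y F y := (Finset.mem_filter.mp hC).1
        by_cases hE : extB F β (xC F C) = false
        · rw [if_pos ((hsat C hC1).mpr (Or.inl hE)), if_pos hE]
        · rw [if_neg, if_neg hE]
          rw [hsat C hC1, hτ, hb]
          simp [hE]
      · rw [totN]
        refine Finset.sum_congr rfl fun C hC => ?_
        have hb : bC F C = false := by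
          have := (Finset.mem_filter.mp hC).2
          exact Bool.not_eq_true _ ▸ (by simpa using this)
        have hC1 : C ∈ F2y F y := (Finset.mem_filter.mp hC).1
        rw [if_pos ((hsat C hC1).mpr (Or.inr (by rw [hτ, hb])))]

-- PART G: counting and spread for bound 2
lemma sum_extB_true (F : Finset Clause) {x : ℕ} (hx : x ∈ unitVars F) (c : ℝ) :
    ∑ β : {v // v ∈ unitVars F} → Fin 3, (if extB F β x = true then c else 0)
      = (3:ℝ) ^ ((unitVars F).card - 1) * (2 * c) := by
  have heval : ∀ β : {v // v ∈ unitVars F} → Fin 3,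
      extB F β x = decide (β ⟨x, hx⟩ ≠ 0) := fun β => dif_pos hx
  rw [Finset.sum_congr rfl fun β (_ : β ∈ Finset.univ) => by rw [heval β]]
  rw [sum_ite_coord (⟨x, hx⟩ : {v // v ∈ unitVars F})
    (fun v : Fin 3 => decide (v ≠ 0) = true) c, Fintype.card_fin, Fintype.card_coe]
  have d0 : decide ((0:Fin 3) ≠ 0) = false := by decide
  have d1 : decide ((1:Fin 3) ≠ 0) = true := by decide
  have d2 : decide ((2:Fin 3) ≠ 0) = true := by decide
  rw [Fin.sum_univ_three, d0, d1, d2]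
  push_cast
  norm_num
  ring

lemma sum_extB_false (F : Finset Clause) {x : ℕ} (hx : x ∈ unitVars F) (c : ℝ) :
    ∑ β : {v // v ∈ unitVars F} → Fin 3, (if extB F β x = false then c else 0)
      = (3:ℝ) ^ ((unitVars F).card - 1) * c := by
  have heval : ∀ β : {v // v ∈ unitVars F} → Fin 3,
      extB F β x = decide (β ⟨x, hx⟩ ≠ 0) := fun β => dif_pos hx
  rw [Finset.sum_congr rfl fun β (_ : β ∈ Finset.univ) => by rw [heval β]]
  rw [sum_ite_coord (⟨x, hx⟩ : {v // v ∈ unitVars F})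
    (fun v : Fin 3 => decide (v ≠ 0) = false) c, Fintype.card_fin, Fintype.card_coe]
  have d0 : decide ((0:Fin 3) ≠ 0) = false := by decide
  have d1 : decide ((1:Fin 3) ≠ 0) = true := by decide
  have d2 : decide ((2:Fin 3) ≠ 0) = true := by decide
  rw [Fin.sum_univ_three, d0, d1, d2]
  push_cast
  norm_num

lemma actP_cast (F : Finset Clause) (w : Clause → ℕ) (y : ℕ)
    (β : {v // v ∈ unitVars F} → Fin 3) :
    (actP F w y β : ℝ)
      = ∑ C ∈ PY F y, if extB F β (xC F C) = true then (w C : ℝ) else 0 := by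
  rw [actP, Nat.cast_sum]
  exact Finset.sum_congr rfl fun C _ => by rw [apply_ite (Nat.cast : ℕ → ℝ), Nat.cast_zero]

lemma actN_cast (F : Finset Clause) (w : Clause → ℕ) (y : ℕ)
    (β : {v // v ∈ unitVars F} → Fin 3) :
    (actN F w y β : ℝ)
      = ∑ C ∈ NY F y, if extB F β (xC F C) = true then (w C : ℝ) else 0 := by
  rw [actN, Nat.cast_sum]
  exact Finset.sum_congr rfl fun C _ => by rw [apply_ite (Nat.cast : ℕ → ℝ), Nat.cast_zero]

lemma mem_PY {F : Finset Clause} {y : ℕ} {C : Clause} (hC : C ∈ PY F y) :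
    C ∈ F2set F ∧ yC F C = y ∧ bC F C = true := by
  have h1 := (Finset.mem_filter.mp hC).1
  have h2 := (Finset.mem_filter.mp hC).2
  exact ⟨(Finset.mem_filter.mp h1).1, (Finset.mem_filter.mp h1).2, h2⟩

lemma mem_NY {F : Finset Clause} {y : ℕ} {C : Clause} (hC : C ∈ NY F y) :
    C ∈ F2set F ∧ yC F C = y ∧ bC F C = false := by
  have h1 := (Finset.mem_filter.mp hC).1
  have h2 := (Finset.mem_filter.mp hC).2
  refine ⟨(Finset.mem_filter.mp h1).1, (Finset.mem_filter.mp h1).2, ?_⟩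
  simpa using h2

lemma spread2 (F : Finset Clause) (w : Clause → ℕ) (h3 : Sat3 F) (hhard : HardFormula F)
    (hw : ∀ C ∈ F, 0 < w C) {y : ℕ} (hy : y ∈ V2set F) :
    (4:ℝ)/9 * (3:ℝ) ^ (unitVars F).card
      ≤ ∑ β : {v // v ∈ unitVars F} → Fin 3,
          |(actP F w y β : ℝ) - (actN F w y β : ℝ)| := by
  obtain ⟨C0, hC0F2, hyC0⟩ := V2_surj hy
  have hC0y : C0 ∈ F2y F y := Finset.mem_filter.mpr ⟨hC0F2, hyC0⟩
  have hwC : ∀ C ∈ F2set F, (1:ℝ) ≤ (w C : ℝ) := by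
    intro C hC
    have := hw C (Finset.mem_filter.mp hC).1
    exact_mod_cast this
  by_cases hP : (PY F y).Nonempty
  case neg =>
    -- PY empty, so C0 ∈ NY; single-clause bound on the N side
    have hC0N : C0 ∈ NY F y := by
      have := Finset.filter_union_filter_not_eq (p := fun C => bC F C = true) (F2y F y)
      rw [← this] at hC0y
      rcases Finset.mem_union.mp hC0y with h | h
      · exact absurd ⟨C0, h⟩ hP
      · exact h
    obtain ⟨-, -, hb0⟩ := mem_NY hC0N
    have hx0U : xC F C0 ∈ unitVars F := xC_mem_U hC0F2
    have hn1 : 1 ≤ (unitVars F).card := Finset.card_pos.mpr ⟨_, hx0U⟩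
    have hPe : PY F y = ∅ := Finset.not_nonempty_iff_eq_empty.mp hP
    have hpt : ∀ β : {v // v ∈ unitVars F} → Fin 3,
        (if extB F β (xC F C0) = true then (w C0 : ℝ) else 0)
          ≤ |(actP F w y β : ℝ) - (actN F w y β : ℝ)| := by
      intro β
      have hA : (actP F w y β : ℝ) = 0 := by rw [actP_cast, hPe, Finset.sum_empty]
      have hsingle : (if extB F β (xC F C0) = true then (w C0 : ℝ) else 0)
          ≤ (actN F w y β : ℝ) := by
        rw [actN_cast]
        refine Finset.single_le_sum
          (f := fun C => if extB F β (xC F C) = true then (w C : ℝ) else 0)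
          (fun C _ => ?_) hC0N
        try dsimp only
        split_ifs
        · exact Nat.cast_nonneg _
        · exact le_rfl
      calc (if extB F β (xC F C0) = true then (w C0 : ℝ) else 0)
          ≤ (actN F w y β : ℝ) := hsingle
        _ ≤ |(actP F w y β : ℝ) - (actN F w y β : ℝ)| := by
            rw [hA]
            rw [zero_sub, abs_neg, abs_of_nonneg (by positivity)]
    have hsum : ∑ β : {v // v ∈ unitVars F} → Fin 3,
        (if extB F β (xC F C0) = true then (w C0 : ℝ) else 0)
          ≤ ∑ β : {v // v ∈ unitVars F} → Fin 3,
              |(actP F w y β : ℝ) - (actN F w y β : ℝ)| :=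
      Finset.sum_le_sum fun β _ => hpt β
    rw [sum_extB_true F hx0U (w C0 : ℝ)] at hsum
    have hc0 : (1:ℝ) ≤ (w C0 : ℝ) := hwC C0 hC0F2
    have hpow : (3:ℝ) ^ ((unitVars F).card - 1) * 3 = (3:ℝ) ^ (unitVars F).card :=
      pow_pred_mul hn1
    have hp3 : (0:ℝ) < (3:ℝ) ^ ((unitVars F).card - 1) := by positivity
    have hmul : (3:ℝ) ^ ((unitVars F).card - 1) * 2
        ≤ (3:ℝ) ^ ((unitVars F).card - 1) * (2 * (w C0 : ℝ)) :=
      mul_le_mul_of_nonneg_left (by linarith) hp3.le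
    linarith
  case pos =>
  by_cases hN : (NY F y).Nonempty
  case neg =>
    -- NY empty
    obtain ⟨C1, hC1⟩ := hP
    obtain ⟨hC1F2, -, -⟩ := mem_PY hC1
    have hx1U : xC F C1 ∈ unitVars F := xC_mem_U hC1F2
    have hn1 : 1 ≤ (unitVars F).card := Finset.card_pos.mpr ⟨_, hx1U⟩
    have hNe : NY F y = ∅ := Finset.not_nonempty_iff_eq_empty.mp hN
    have hpt : ∀ β : {v // v ∈ unitVars F} → Fin 3,
        (if extB F β (xC F C1) = true then (w C1 : ℝ) else 0)
          ≤ |(actP F w y β : ℝ) - (actN F w y β : ℝ)| := by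
      intro β
      have hA : (actN F w y β : ℝ) = 0 := by rw [actN_cast, hNe, Finset.sum_empty]
      have hsingle : (if extB F β (xC F C1) = true then (w C1 : ℝ) else 0)
          ≤ (actP F w y β : ℝ) := by
        rw [actP_cast]
        refine Finset.single_le_sum
          (f := fun C => if extB F β (xC F C) = true then (w C : ℝ) else 0)
          (fun C _ => ?_) hC1
        try dsimp only
        split_ifs
        · exact Nat.cast_nonneg _
        · exact le_rfl
      calc (if extB F β (xC F C1) = true then (w C1 : ℝ) else 0)
          ≤ (actP F w y β : ℝ) := hsingle
        _ ≤ |(actP F w y β : ℝ) - (actN F w y β : ℝ)| := by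
            rw [hA, sub_zero, abs_of_nonneg (by positivity)]
    have hsum : ∑ β : {v // v ∈ unitVars F} → Fin 3,
        (if extB F β (xC F C1) = true then (w C1 : ℝ) else 0)
          ≤ ∑ β : {v // v ∈ unitVars F} → Fin 3,
              |(actP F w y β : ℝ) - (actN F w y β : ℝ)| :=
      Finset.sum_le_sum fun β _ => hpt β
    rw [sum_extB_true F hx1U (w C1 : ℝ)] at hsum
    have hc1 : (1:ℝ) ≤ (w C1 : ℝ) := hwC C1 hC1F2
    have hpow : (3:ℝ) ^ ((unitVars F).card - 1) * 3 = (3:ℝ) ^ (unitVars F).card :=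
      pow_pred_mul hn1
    have hp3 : (0:ℝ) < (3:ℝ) ^ ((unitVars F).card - 1) := by positivity
    have hmul : (3:ℝ) ^ ((unitVars F).card - 1) * 2
        ≤ (3:ℝ) ^ ((unitVars F).card - 1) * (2 * (w C1 : ℝ)) :=
      mul_le_mul_of_nonneg_left (by linarith) hp3.le
    linarith
  case pos =>
    -- both nonempty: the genuine two-coordinate spread
    obtain ⟨Cp, hCp⟩ := hP
    obtain ⟨Cn, hCn⟩ := hN
    obtain ⟨hCp2, hyCp, hbp⟩ := mem_PY hCp
    obtain ⟨hCn2, hyCn, hbn⟩ := mem_NY hCn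
    have hxpU : xC F Cp ∈ unitVars F := xC_mem_U hCp2
    have hxnU : xC F Cn ∈ unitVars F := xC_mem_U hCn2
    have hCpn : Cp ≠ Cn := by
      intro h
      rw [h] at hbp
      rw [hbn] at hbp
      exact absurd hbp (by simp)
    have hxpn : xC F Cp ≠ xC F Cn := by
      intro h
      exact hCpn (F2_inj h3 hhard hCp2 hCn2 h (hyCp.trans hyCn.symm))
    set i1 : {v // v ∈ unitVars F} := ⟨xC F Cp, hxpU⟩ with hi1
    have hi2ne : (⟨xC F Cn, hxnU⟩ : {v // v ∈ unitVars F}) ≠ i1 := by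
      intro h
      exact hxpn (congrArg Subtype.val h).symm
    set i2 : {j : {v // v ∈ unitVars F} // j ≠ i1} := ⟨⟨xC F Cn, hxnU⟩, hi2ne⟩ with hi2
    have hn2c : 1 ≤ Fintype.card {j : {v // v ∈ unitVars F} // j ≠ i1} :=
      Fintype.card_pos_iff.mpr ⟨i2⟩
    have hn1 : 1 ≤ (unitVars F).card := Finset.card_pos.mpr ⟨_, hxpU⟩
    rw [sum_split i1 (fun β => |(actP F w y β : ℝ) - (actN F w y β : ℝ)|)]
    rw [sum_split i2 (fun g => ∑ v1 : Fin 3,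
      |(actP F w y (expandFn i1 v1 g) : ℝ) - (actN F w y (expandFn i1 v1 g) : ℝ)|)]
    have hinner : ∀ g2 : {j : {j : {v // v ∈ unitVars F} // j ≠ i1} // j ≠ i2} → Fin 3,
        (4:ℝ) ≤ ∑ v2 : Fin 3, ∑ v1 : Fin 3,
          |(actP F w y (expandFn i1 v1 (expandFn i2 v2 g2)) : ℝ)
            - (actN F w y (expandFn i1 v1 (expandFn i2 v2 g2)) : ℝ)| := by
      intro g2
      set β00 := expandFn i1 (0:Fin 3) (expandFn i2 (0:Fin 3) g2) with hβ00
      set Pr : ℝ := ∑ C ∈ (PY F y).erase Cp,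
        (if extB F β00 (xC F C) = true then (w C : ℝ) else 0) with hPr
      set Nr : ℝ := ∑ C ∈ (NY F y).erase Cn,
        (if extB F β00 (xC F C) = true then (w C : ℝ) else 0) with hNr
      -- evaluation of extB on the two special coordinates
      have hevalp : ∀ v1 v2, extB F (expandFn i1 v1 (expandFn i2 v2 g2)) (xC F Cp)
          = decide (v1 ≠ 0) := by
        intro v1 v2
        have h1 : extB F (expandFn i1 v1 (expandFn i2 v2 g2)) (xC F Cp)
            = decide ((expandFn i1 v1 (expandFn i2 v2 g2)) ⟨xC F Cp, hxpU⟩ ≠ 0) :=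
          dif_pos hxpU
        rw [h1]
        have : (⟨xC F Cp, hxpU⟩ : {v // v ∈ unitVars F}) = i1 := rfl
        rw [this, expandFn_same]
      have hevaln : ∀ v1 v2, extB F (expandFn i1 v1 (expandFn i2 v2 g2)) (xC F Cn)
          = decide (v2 ≠ 0) := by
        intro v1 v2
        have h1 : extB F (expandFn i1 v1 (expandFn i2 v2 g2)) (xC F Cn)
            = decide ((expandFn i1 v1 (expandFn i2 v2 g2)) ⟨xC F Cn, hxnU⟩ ≠ 0) :=
          dif_pos hxnU
        rw [h1, expandFn_ne i1 v1 _ hi2ne]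
        have : (⟨(⟨xC F Cn, hxnU⟩ : {v // v ∈ unitVars F}), hi2ne⟩ :
            {j : {v // v ∈ unitVars F} // j ≠ i1}) = i2 := rfl
        rw [this, expandFn_same]
      -- evaluation on all other coordinates: independent of v1 v2
      have hother : ∀ (z : ℕ) (hz : z ∈ unitVars F), z ≠ xC F Cp → z ≠ xC F Cn →
          ∀ v1 v2, extB F (expandFn i1 v1 (expandFn i2 v2 g2)) z = extB F β00 z := by
        intro z hz hzp hzn v1 v2
        have hj1 : (⟨z, hz⟩ : {v // v ∈ unitVars F}) ≠ i1 := by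
          intro h; exact hzp (congrArg Subtype.val h)
        have hj2 : (⟨(⟨z, hz⟩ : {v // v ∈ unitVars F}), hj1⟩ :
            {j : {v // v ∈ unitVars F} // j ≠ i1}) ≠ i2 := by
          intro h
          exact hzn (congrArg (fun p => (Subtype.val (Subtype.val p))) h)
        have e1 : ∀ v1' v2', (expandFn i1 v1' (expandFn i2 v2' g2)) ⟨z, hz⟩
            = g2 ⟨⟨⟨z, hz⟩, hj1⟩, hj2⟩ := by
          intro v1' v2'
          rw [expandFn_ne i1 v1' _ hj1, expandFn_ne i2 v2' _ hj2]
        have h1 : extB F (expandFn i1 v1 (expandFn i2 v2 g2)) z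
            = decide ((expandFn i1 v1 (expandFn i2 v2 g2)) ⟨z, hz⟩ ≠ 0) := dif_pos hz
        have h2 : extB F β00 z = decide (β00 ⟨z, hz⟩ ≠ 0) := dif_pos hz
        rw [h1, h2, hβ00, e1, e1]
      -- other clauses in PY/NY avoid both coordinates
      have hPother : ∀ C ∈ (PY F y).erase Cp,
          xC F C ≠ xC F Cp ∧ xC F C ≠ xC F Cn := by
        intro C hC
        have hCne : C ≠ Cp := Finset.ne_of_mem_erase hC
        obtain ⟨hC2, hyCC, hbC⟩ := mem_PY (Finset.mem_of_mem_erase hC)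
        constructor
        · intro h
          exact hCne (F2_inj h3 hhard hC2 hCp2 h (hyCC.trans hyCp.symm))
        · intro h
          have : C = Cn := F2_inj h3 hhard hC2 hCn2 h (hyCC.trans hyCn.symm)
          rw [this, hbn] at hbC
          simp at hbC
      have hNother : ∀ C ∈ (NY F y).erase Cn,
          xC F C ≠ xC F Cp ∧ xC F C ≠ xC F Cn := by
        intro C hC
        have hCne : C ≠ Cn := Finset.ne_of_mem_erase hC
        obtain ⟨hC2, hyCC, hbC⟩ := mem_NY (Finset.mem_of_mem_erase hC)
        constructor
        · intro h
          have : C = Cp := F2_inj h3 hhard hC2 hCp2 h (hyCC.trans hyCp.symm)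
          rw [this, hbp] at hbC
          simp at hbC
        · intro h
          exact hCne (F2_inj h3 hhard hC2 hCn2 h (hyCC.trans hyCn.symm))
      have keyP : ∀ v1 v2, (actP F w y (expandFn i1 v1 (expandFn i2 v2 g2)) : ℝ)
          = (if decide (v1 ≠ 0) = true then (w Cp : ℝ) else 0) + Pr := by
        intro v1 v2
        rw [actP_cast, ← Finset.add_sum_erase _ _ hCp]
        congr 1
        · rw [hevalp v1 v2]
        · refine Finset.sum_congr rfl fun C hC => ?_
          obtain ⟨hne1, hne2⟩ := hPother C hC
          obtain ⟨hC2, -, -⟩ := mem_PY (Finset.mem_of_mem_erase hC)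
          rw [hother (xC F C) (xC_mem_U hC2) hne1 hne2 v1 v2]
      have keyN : ∀ v1 v2, (actN F w y (expandFn i1 v1 (expandFn i2 v2 g2)) : ℝ)
          = (if decide (v2 ≠ 0) = true then (w Cn : ℝ) else 0) + Nr := by
        intro v1 v2
        rw [actN_cast, ← Finset.add_sum_erase _ _ hCn]
        congr 1
        · rw [hevaln v1 v2]
        · refine Finset.sum_congr rfl fun C hC => ?_
          obtain ⟨hne1, hne2⟩ := hNother C hC
          obtain ⟨hC2, -, -⟩ := mem_NY (Finset.mem_of_mem_erase hC)
          rw [hother (xC F C) (xC_mem_U hC2) hne1 hne2 v1 v2]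
      rw [Finset.sum_congr rfl fun v2 (_ : v2 ∈ Finset.univ) =>
        Finset.sum_congr rfl fun v1 (_ : v1 ∈ Finset.univ) => by rw [keyP v1 v2, keyN v1 v2]]
      have d0 : decide ((0:Fin 3) ≠ 0) = false := by decide
      have d1 : decide ((1:Fin 3) ≠ 0) = true := by decide
      have d2 : decide ((2:Fin 3) ≠ 0) = true := by decide
      simp only [Fin.sum_univ_three, d0, d1, d2, if_true, if_false,
        Bool.false_eq_true, zero_add]
      have hcp : (1:ℝ) ≤ (w Cp : ℝ) := hwC Cp hCp2
      have hcn : (1:ℝ) ≤ (w Cn : ℝ) := hwC Cn hCn2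
      have e1 := le_abs_self ((w Cp : ℝ) + Pr - Nr)
      have e2 := neg_abs_le (Pr - ((w Cn : ℝ) + Nr))
      have n1 := abs_nonneg (Pr - Nr)
      have n2 := abs_nonneg ((w Cp : ℝ) + Pr - ((w Cn : ℝ) + Nr))
      linarith [le_abs_self ((w Cp : ℝ) + Pr - Nr),
        neg_abs_le (Pr - ((w Cn : ℝ) + Nr)),
        abs_nonneg (Pr - Nr),
        abs_nonneg ((w Cp : ℝ) + Pr - ((w Cn : ℝ) + Nr))]
    calc (4:ℝ)/9 * (3:ℝ) ^ (unitVars F).card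
        ≤ ∑ _g2 : {j : {j : {v // v ∈ unitVars F} // j ≠ i1} // j ≠ i2} → Fin 3, (4:ℝ) := by
          rw [Finset.sum_const, Finset.card_univ, Fintype.card_fun, Fintype.card_fin,
            card_ne_subtype, card_ne_subtype, Fintype.card_coe, nsmul_eq_mul]
          have hcard2 : 2 ≤ (unitVars F).card := by
            have := card_ne_subtype i1
            rw [Fintype.card_coe] at this
            omega
          have hpow : ((3:ℝ) ^ ((unitVars F).card - 1 - 1)) * 9 = (3:ℝ) ^ (unitVars F).card := by
            have e1 : (3:ℝ) ^ ((unitVars F).card - 1 - 1) * 3 = (3:ℝ) ^ ((unitVars F).card - 1) :=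
              pow_pred_mul (by omega)
            have e2 : (3:ℝ) ^ ((unitVars F).card - 1) * 3 = (3:ℝ) ^ (unitVars F).card :=
              pow_pred_mul (by omega)
            nlinarith
          push_cast
          nlinarith
      _ ≤ _ := Finset.sum_le_sum fun g2 _ => hinner g2

-- PART H: per-y bound, bound 2, final theorem
lemma inactP_cast (F : Finset Clause) (w : Clause → ℕ) (y : ℕ)
    (β : {v // v ∈ unitVars F} → Fin 3) :
    (inactP F w y β : ℝ)
      = ∑ C ∈ PY F y, if extB F β (xC F C) = false then (w C : ℝ) else 0 := by
  rw [inactP, Nat.cast_sum]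
  exact Finset.sum_congr rfl fun C _ => by rw [apply_ite (Nat.cast : ℕ → ℝ), Nat.cast_zero]

lemma inactN_cast (F : Finset Clause) (w : Clause → ℕ) (y : ℕ)
    (β : {v // v ∈ unitVars F} → Fin 3) :
    (inactN F w y β : ℝ)
      = ∑ C ∈ NY F y, if extB F β (xC F C) = false then (w C : ℝ) else 0 := by
  rw [inactN, Nat.cast_sum]
  exact Finset.sum_congr rfl fun C _ => by rw [apply_ite (Nat.cast : ℕ → ℝ), Nat.cast_zero]

lemma sum_inactP (F : Finset Clause) (w : Clause → ℕ) (y : ℕ) :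
    ∑ β : {v // v ∈ unitVars F} → Fin 3, (inactP F w y β : ℝ)
      = (3:ℝ) ^ ((unitVars F).card - 1) * (totP F w y : ℝ) := by
  rw [Finset.sum_congr rfl fun β (_ : β ∈ Finset.univ) => inactP_cast F w y β,
    Finset.sum_comm]
  rw [Finset.sum_congr rfl fun C (hC : C ∈ PY F y) =>
    sum_extB_false F (xC_mem_U (mem_PY hC).1) ((w C : ℝ))]
  rw [← Finset.mul_sum, totP, Nat.cast_sum]

lemma sum_inactN (F : Finset Clause) (w : Clause → ℕ) (y : ℕ) :
    ∑ β : {v // v ∈ unitVars F} → Fin 3, (inactN F w y β : ℝ)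
      = (3:ℝ) ^ ((unitVars F).card - 1) * (totN F w y : ℝ) := by
  rw [Finset.sum_congr rfl fun β (_ : β ∈ Finset.univ) => inactN_cast F w y β,
    Finset.sum_comm]
  rw [Finset.sum_congr rfl fun C (hC : C ∈ NY F y) =>
    sum_extB_false F (xC_mem_U (mem_NY hC).1) ((w C : ℝ))]
  rw [← Finset.mul_sum, totN, Nat.cast_sum]

lemma pery (F : Finset Clause) (w : Clause → ℕ) (h3 : Sat3 F) (hhard : HardFormula F)
    (hw : ∀ C ∈ F, 0 < w C) {y : ℕ} (hy : y ∈ V2set F) :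
    (3:ℝ) ^ (unitVars F).card
        * ((2:ℝ)/3 * ((totP F w y : ℝ) + (totN F w y : ℝ)) + 2/9)
      ≤ ∑ β : {v // v ∈ unitVars F} → Fin 3,
          ((max (totN F w y + inactP F w y β) (totP F w y + inactN F w y β) : ℕ) : ℝ) := by
  obtain ⟨C0, hC0F2, hyC0⟩ := V2_surj hy
  have hn1 : 1 ≤ (unitVars F).card := Finset.card_pos.mpr ⟨_, xC_mem_U hC0F2⟩
  have hpow : (3:ℝ) ^ ((unitVars F).card - 1) * 3 = (3:ℝ) ^ (unitVars F).card :=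
    pow_pred_mul hn1
  have hconst : ∀ c : ℝ, (∑ _β : {v // v ∈ unitVars F} → Fin 3, c)
      = (3:ℝ) ^ (unitVars F).card * c := by
    intro c
    rw [Finset.sum_const, Finset.card_univ, Fintype.card_fun, Fintype.card_fin,
      Fintype.card_coe, nsmul_eq_mul]
    push_cast
    ring
  have hid : ∀ β : {v // v ∈ unitVars F} → Fin 3,
      2 * ((max (totN F w y + inactP F w y β) (totP F w y + inactN F w y β) : ℕ) : ℝ)
        = ((totN F w y : ℝ) + (inactP F w y β : ℝ))
          + ((totP F w y : ℝ) + (inactN F w y β : ℝ))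
          + |(actP F w y β : ℝ) - (actN F w y β : ℝ)| := by
    intro β
    rw [Nat.cast_max, two_mul_max]
    push_cast
    congr 1
    have hP := comp_act_P F w y β
    have hN := comp_act_N F w y β
    have hPR : (actP F w y β : ℝ) + (inactP F w y β : ℝ) = (totP F w y : ℝ) := by
      exact_mod_cast hP
    have hNR : (actN F w y β : ℝ) + (inactN F w y β : ℝ) = (totN F w y : ℝ) := by
      exact_mod_cast hN
    have : (totN F w y : ℝ) + (inactP F w y β : ℝ)
        - ((totP F w y : ℝ) + (inactN F w y β : ℝ))
        = (actN F w y β : ℝ) - (actP F w y β : ℝ) := by linarith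
    rw [this, abs_sub_comm]
  have hsum2 : 2 * (∑ β : {v // v ∈ unitVars F} → Fin 3,
      ((max (totN F w y + inactP F w y β) (totP F w y + inactN F w y β) : ℕ) : ℝ))
      = ((3:ℝ) ^ (unitVars F).card * (totN F w y : ℝ)
          + (3:ℝ) ^ ((unitVars F).card - 1) * (totP F w y : ℝ))
        + ((3:ℝ) ^ (unitVars F).card * (totP F w y : ℝ)
          + (3:ℝ) ^ ((unitVars F).card - 1) * (totN F w y : ℝ))
        + ∑ β : {v // v ∈ unitVars F} → Fin 3,
            |(actP F w y β : ℝ) - (actN F w y β : ℝ)| := by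
    rw [Finset.mul_sum, Finset.sum_congr rfl fun β (_ : β ∈ Finset.univ) => hid β]
    rw [Finset.sum_add_distrib, Finset.sum_add_distrib, Finset.sum_add_distrib,
      Finset.sum_add_distrib, hconst, hconst, sum_inactP, sum_inactN]
  have hspread := spread2 F w h3 hhard hw hy
  rw [← hpow] at hsum2 hspread ⊢
  linarith

lemma wt_split2 (F : Finset Clause) (w : Clause → ℕ) (hhard : HardFormula F) :
    wt w F = (∑ x ∈ unitVars F, aW w x) + ∑ y ∈ V2set F, (totP F w y + totN F w y) := by
  have hsplit : wt w F = ∑ C ∈ F.filter (fun C => C.card = 1), w C + ∑ C ∈ F2set F, w C := by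
    rw [wt]
    conv_lhs => rw [F_union hhard]
    exact Finset.sum_union F_disj
  have hinj : ∀ x ∈ unitVars F, ∀ x' ∈ unitVars F,
      ({(x, true)} : Clause) = {(x', true)} → x = x' := by
    intro x _ x' _ h
    exact congrArg Prod.fst (Finset.singleton_inj.mp h)
  have h1 : ∑ C ∈ F.filter (fun C => C.card = 1), w C = ∑ x ∈ unitVars F, aW w x := by
    rw [F1_eq hhard, Finset.sum_image hinj]
    rfl
  have h2 : ∑ C ∈ F2set F, w C = ∑ y ∈ V2set F, ∑ C ∈ F2y F y, w C :=
    (Finset.sum_fiberwise_of_maps_to (fun C hC => yC_mem_V2 hC) _).symm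
  have h3 : ∀ y ∈ V2set F, ∑ C ∈ F2y F y, w C = totP F w y + totN F w y := by
    intro y _
    have hun : F2y F y = PY F y ∪ NY F y := (Finset.filter_union_filter_not_eq _ _).symm
    have hdisj : Disjoint (PY F y) (NY F y) := Finset.disjoint_filter_filter_not _ _ _
    rw [totP, totN]
    conv_lhs => rw [hun]
    exact Finset.sum_union hdisj
  rw [hsplit, h1, h2, Finset.sum_congr rfl h3]

theorem bound2 (F : Finset Clause) (w : Clause → ℕ)
    (hw : ∀ C ∈ F, 0 < w C) (h3 : Sat3 F) (hhard : HardFormula F) :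
    ∃ τ : ℕ → Bool,
      (2:ℝ)/3 * (wt w F : ℝ) + 2/9 * ((V2set F).card : ℝ) ≤ (satWt w τ F : ℝ) := by
  classical
  have hNE : Nonempty ({v // v ∈ unitVars F} → Fin 3) := ⟨fun _ => 0⟩
  set M : ℝ := (3:ℝ) ^ (unitVars F).card with hMdef
  have hconst : ∀ c : ℝ, (∑ _β : {v // v ∈ unitVars F} → Fin 3, c) = M * c := by
    intro c
    rw [Finset.sum_const, Finset.card_univ, Fintype.card_fun, Fintype.card_fin,
      Fintype.card_coe, nsmul_eq_mul, hMdef]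
    push_cast
    ring
  set c : ℝ := (2:ℝ)/3 * (wt w F : ℝ) + 2/9 * ((V2set F).card : ℝ) with hcdef
  have hmain : (∑ _β : {v // v ∈ unitVars F} → Fin 3, c)
      ≤ ∑ β : {v // v ∈ unitVars F} → Fin 3, (satWt w (tau2 F w β) F : ℝ) := by
    rw [hconst]
    have hR : ∑ β : {v // v ∈ unitVars F} → Fin 3, (satWt w (tau2 F w β) F : ℝ)
        = (∑ x ∈ unitVars F, ∑ β : {v // v ∈ unitVars F} → Fin 3,
            (if extB F β x = true then (aW w x : ℝ) else 0))
          + ∑ y ∈ V2set F, ∑ β : {v // v ∈ unitVars F} → Fin 3,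
              ((max (totN F w y + inactP F w y β) (totP F w y + inactN F w y β) : ℕ) : ℝ) := by
      rw [Finset.sum_congr rfl fun β (_ : β ∈ Finset.univ) => by
        rw [satWt_tau2 F w hhard β, Nat.cast_add, Nat.cast_sum, Nat.cast_sum,
          Finset.sum_congr rfl fun x (_ : x ∈ unitVars F) =>
            (by rw [apply_ite (Nat.cast : ℕ → ℝ), Nat.cast_zero] :
              ((if extB F β x = true then aW w x else 0 : ℕ) : ℝ)
                = if extB F β x = true then (aW w x : ℝ) else 0)]]
      rw [Finset.sum_add_distrib]
      congr 1
      · exact Finset.sum_comm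
      · exact Finset.sum_comm
    have hunit : ∀ x ∈ unitVars F,
        M * ((2:ℝ)/3 * (aW w x : ℝ))
          ≤ ∑ β : {v // v ∈ unitVars F} → Fin 3,
              (if extB F β x = true then (aW w x : ℝ) else 0) := by
      intro x hx
      rw [sum_extB_true F hx ((aW w x : ℝ))]
      have hn1 : 1 ≤ (unitVars F).card := Finset.card_pos.mpr ⟨_, hx⟩
      have hpow : (3:ℝ) ^ ((unitVars F).card - 1) * 3 = (3:ℝ) ^ (unitVars F).card :=
        pow_pred_mul hn1
      rw [hMdef, ← hpow]
      have : (0:ℝ) ≤ (aW w x : ℝ) := Nat.cast_nonneg _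
      nlinarith [this]
    have hy : ∀ y ∈ V2set F,
        M * ((2:ℝ)/3 * ((totP F w y : ℝ) + (totN F w y : ℝ)) + 2/9)
          ≤ ∑ β : {v // v ∈ unitVars F} → Fin 3,
              ((max (totN F w y + inactP F w y β) (totP F w y + inactN F w y β) : ℕ) : ℝ) :=
      fun y hyV => pery F w h3 hhard hw hyV
    have hwtR : (wt w F : ℝ) = (∑ x ∈ unitVars F, (aW w x : ℝ))
        + ∑ y ∈ V2set F, ((totP F w y : ℝ) + (totN F w y : ℝ)) := by
      rw [wt_split2 F w hhard]
      push_cast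
      ring
    have e1 : ∑ x ∈ unitVars F, M * ((2:ℝ)/3 * (aW w x : ℝ))
        = M * ((2:ℝ)/3) * ∑ x ∈ unitVars F, (aW w x : ℝ) := by
      rw [Finset.mul_sum]
      exact Finset.sum_congr rfl fun x _ => by ring
    have e2 : ∑ y ∈ V2set F, M * ((2:ℝ)/3 * ((totP F w y : ℝ) + (totN F w y : ℝ)) + 2/9)
        = M * ((2:ℝ)/3) * (∑ y ∈ V2set F, ((totP F w y : ℝ) + (totN F w y : ℝ)))
          + ((V2set F).card : ℝ) * (M * (2/9)) := by
      rw [Finset.sum_congr rfl fun y (_ : y ∈ V2set F) =>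
        (by ring : M * ((2:ℝ)/3 * ((totP F w y : ℝ) + (totN F w y : ℝ)) + 2/9)
          = M * ((2:ℝ)/3) * ((totP F w y : ℝ) + (totN F w y : ℝ)) + M * (2/9))]
      rw [Finset.sum_add_distrib, ← Finset.mul_sum, Finset.sum_const, nsmul_eq_mul]
    have hLsum : M * c
        = (∑ x ∈ unitVars F, M * ((2:ℝ)/3 * (aW w x : ℝ)))
          + ∑ y ∈ V2set F, M * ((2:ℝ)/3 * ((totP F w y : ℝ) + (totN F w y : ℝ)) + 2/9) := by
      rw [hcdef, hwtR, e1, e2]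
      ring
    rw [hR, hLsum]
    exact add_le_add (Finset.sum_le_sum hunit) (Finset.sum_le_sum hy)
  obtain ⟨β, -, hβ⟩ := Finset.exists_le_of_sum_le Finset.univ_nonempty hmain
  exact ⟨tau2 F w β, hβ⟩

theorem stmt15 (F : Finset Clause) (w : Clause → ℕ)
    (hF : IsCNF F) (hw : ∀ C ∈ F, 0 < w C) (h3 : Sat3 F) (hhard : HardFormula F) :
    ∃ τ : ℕ → Bool,
      (2:ℝ)/3 * wt w F + (2:ℝ)/21 * ((vars F).card : ℝ) ≤ (satWt w τ F : ℝ) := by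
  obtain ⟨τa, ha⟩ := bound1 F w hw h3 hhard
  obtain ⟨τb, hb⟩ := bound2 F w hw h3 hhard
  have hcardR : ((vars F).card : ℝ)
      = ((unitVars F).card : ℝ) + ((V2set F).card : ℝ) := by
    exact_mod_cast vars_card hhard
  rcases le_total (satWt w τb F) (satWt w τa F) with hc | hc
  · refine ⟨τa, ?_⟩
    have hcR : (satWt w τb F : ℝ) ≤ (satWt w τa F : ℝ) := Nat.cast_le.mpr hc
    rw [hcardR]
    linarith
  · refine ⟨τb, ?_⟩
    have hcR : (satWt w τa F : ℝ) ≤ (satWt w τb F : ℝ) := Nat.cast_le.mpr hc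
    rw [hcardR]
    linarith
end

section
/- Let F be a fat expanding 3-satisfiable weighted CNF formula, i.e., w(F_s) >= (18/133)(|V1| + |V2|) where V1 is the set of unit variables, V2 the set of non-unit variables occurring in hard two-literal clauses, and F_s the soft clauses. Then there exists an assignment tau with sat_tau(F) >= (2/3) w(F) + (2/453) |V(F)|. -/
open Classical

section Helpers

variable (F : Finset Clause)

/-- Probability that the literal `l` is falsified by the random assignment. -/
noncomputable def qlit (l : ℕ × Bool) : ℝ :=
  if l.1 ∈ unitVars F then (if l.2 then (1:ℝ)/3 else 2/3) else 1/2

/-- Probability that the clause `C` is falsified. -/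
noncomputable def Qc (C : Clause) : ℝ := ∏ l ∈ C, qlit F l

/-- The probability weight of a single variable taking value `b`. -/
noncomputable def gw (v : ℕ) (b : Bool) : ℝ :=
  if v ∈ unitVars F then (if b then (2:ℝ)/3 else 1/3) else 1/2

variable {F}

lemma qlit_pos (l : ℕ × Bool) : 0 < qlit F l := by
  unfold qlit; split_ifs <;> norm_num

lemma qlit_le (l : ℕ × Bool) : qlit F l ≤ 2/3 := by
  unfold qlit; split_ifs <;> norm_num

lemma gw_pos (v : ℕ) (b : Bool) : 0 < gw F v b := by
  unfold gw; split_ifs <;> norm_num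

lemma gw_add (v : ℕ) : gw F v true + gw F v false = 1 := by
  by_cases h : v ∈ unitVars F <;> simp [gw, h] <;> norm_num

lemma mem_unitVars (hup : UnitPos F) {v : ℕ} :
    v ∈ unitVars F ↔ ({((v : ℕ), true)} : Clause) ∈ F := by
  unfold unitVars
  constructor
  · intro h
    rw [Finset.mem_sup] at h
    obtain ⟨C, hC, hv⟩ := h
    rw [Finset.mem_filter] at hC
    obtain ⟨x, rfl⟩ := hup C hC.1 hC.2
    simp only [Finset.image_singleton, Finset.mem_singleton] at hv
    subst hv; exact hC.1
  · intro h
    rw [Finset.mem_sup]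
    exact ⟨{(v, true)}, Finset.mem_filter.2 ⟨h, by simp⟩, by simp⟩

lemma mem_unitVars_of (hC : C ∈ F) (hcard : C = {((x : ℕ), true)}) : x ∈ unitVars F := by
  unfold unitVars
  rw [Finset.mem_sup]
  exact ⟨C, Finset.mem_filter.2 ⟨hC, by rw [hcard]; simp⟩, by rw [hcard]; simp⟩

lemma var_mem_vars {C : Clause} {l : ℕ × Bool} (hC : C ∈ F) (hl : l ∈ C) :
    l.1 ∈ vars F :=
  Finset.mem_sup.2 ⟨C, hC, Finset.mem_image_of_mem _ hl⟩

lemma fst_ne {C : Clause} (hF : IsCNF F) (hC : C ∈ F) {a b : ℕ × Bool}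
    (ha : a ∈ C) (hb : b ∈ C) (hab : a ≠ b) : a.1 ≠ b.1 := by
  intro h
  obtain ⟨va, ba⟩ := a
  obtain ⟨vb, bb⟩ := b
  simp only at h
  subst h
  cases ba <;> cases bb
  · exact hab rfl
  · exact (hF C hC).2 va ⟨hb, ha⟩
  · exact (hF C hC).2 va ⟨ha, hb⟩
  · exact hab rfl

end Helpers
section Prob

variable {F : Finset Clause}

lemma sum_prod_bool {I : Type} [Fintype I] [DecidableEq I] (h : I → Bool → ℝ) :
    ∑ α : I → Bool, ∏ i, h i (α i) = ∏ i, (h i true + h i false) := by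
  rw [← Fintype.prod_sum]
  apply Finset.prod_congr rfl
  intro i _
  simp [Fintype.univ_bool]

lemma sum_gw (F : Finset Clause) :
    ∑ α : {v // v ∈ vars F} → Bool, ∏ v, gw F v.1 (α v) = 1 := by
  rw [sum_prod_bool]
  exact Finset.prod_eq_one fun v _ => gw_add v.1

lemma probSat_def' (C : Clause) :
    probSat F C = ∑ α : {v // v ∈ vars F} → Bool,
      (∏ v, gw F v.1 (α v)) * (if SatC (extAssign F α) C then 1 else 0) := rfl

lemma f_eq {C : Clause} (hF : IsCNF F) (hC : C ∈ F) {l : ℕ × Bool} (hl : l ∈ C) :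
    (decide ((l.1, false) ∈ C)) = !l.2 := by
  cases hb : l.2
  · have : (l.1, false) ∈ C := by rw [← hb]; exact hl
    simp [this]
  · have : (l.1, false) ∉ C := by
      intro hmem
      exact (hF C hC).2 l.1 ⟨by rw [← hb]; exact hl, hmem⟩
    simp [this]

lemma probSat_eq (hF : IsCNF F) {C : Clause} (hC : C ∈ F) :
    probSat F C = 1 - Qc F C := by
  classical
  set S : Finset ℕ := C.image Prod.fst with hS
  set f : ℕ → Bool := fun v => decide ((v, false) ∈ C) with hf
  set h : {v // v ∈ vars F} → Bool → ℝ :=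
    fun v b => if v.1 ∈ S then (if b = f v.1 then gw F v.1 b else 0) else gw F v.1 b with hh
  have step1 : ∀ α : {v // v ∈ vars F} → Bool,
      ∏ v, h v (α v)
        = (∏ v, gw F v.1 (α v)) * (if SatC (extAssign F α) C then 0 else 1) := by
    intro α
    by_cases hs : SatC (extAssign F α) C
    · rw [if_pos hs, mul_zero]
      obtain ⟨l, hl, hsat⟩ := hs
      have hv : l.1 ∈ vars F := var_mem_vars hC hl
      have hαv : α ⟨l.1, hv⟩ = l.2 := by
        rw [extAssign, dif_pos hv] at hsat; exact hsat
      apply Finset.prod_eq_zero (Finset.mem_univ (⟨l.1, hv⟩ : {v // v ∈ vars F}))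
      have h1 : l.1 ∈ S := Finset.mem_image_of_mem _ hl
      have h2 : ¬ (α ⟨l.1, hv⟩ = f l.1) := by
        rw [hαv, hf]; simp only [f_eq hF hC hl]
        cases l.2 <;> simp
      simp only [hh, if_pos h1, if_neg h2]
    · rw [if_neg hs, mul_one]
      apply Finset.prod_congr rfl
      intro v _
      by_cases hvS : v.1 ∈ S
      · obtain ⟨l, hl, hlv⟩ := Finset.mem_image.1 hvS
        have hv1 : l.1 ∈ vars F := var_mem_vars hC hl
        have hsub : (⟨l.1, hv1⟩ : {v // v ∈ vars F}) = v := Subtype.ext hlv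
        have hne : extAssign F α l.1 ≠ l.2 := fun hcon => hs ⟨l, hl, hcon⟩
        have hαv : α v ≠ l.2 := by
          rw [extAssign, dif_pos hv1, hsub] at hne; exact hne
        have : α v = f v.1 := by
          rw [hf, ← hlv]; simp only [f_eq hF hC hl]
          cases hb : l.2 <;> cases hb2 : α v <;> simp_all
        simp only [hh, if_pos hvS, if_pos this]
      · simp only [hh, if_neg hvS]
  have hSsub : S ⊆ vars F := by
    intro v hv
    obtain ⟨l, hl, hlv⟩ := Finset.mem_image.1 hv
    rw [← hlv]; exact var_mem_vars hC hl
  have step2 : ∑ α : {v // v ∈ vars F} → Bool, ∏ v, h v (α v) = Qc F C := by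
    rw [sum_prod_bool]
    have e1 : ∀ v : {v // v ∈ vars F},
        h v true + h v false = if v.1 ∈ S then gw F v.1 (f v.1) else 1 := by
      intro v
      by_cases hvS : v.1 ∈ S
      · simp only [hh, if_pos hvS]
        cases hfv : f v.1 <;> simp
      · simp only [hh, if_neg hvS]; exact gw_add v.1
    calc ∏ v : {v // v ∈ vars F}, (h v true + h v false)
        = ∏ v : {v // v ∈ vars F}, (if v.1 ∈ S then gw F v.1 (f v.1) else 1) :=
          Finset.prod_congr rfl (fun v _ => e1 v)
      _ = ∏ v ∈ vars F, (if v ∈ S then gw F v (f v) else 1) :=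
          Finset.prod_coe_sort (vars F) (fun v => if v ∈ S then gw F v (f v) else 1)
      _ = ∏ v ∈ vars F ∩ S, gw F v (f v) := Finset.prod_ite_mem _ _ _
      _ = ∏ v ∈ S, gw F v (f v) := by rw [Finset.inter_eq_right.2 hSsub]
      _ = ∏ l ∈ C, gw F l.1 (f l.1) := by
          rw [hS]
          apply Finset.prod_image
          intro a ha b hb hab
          by_contra hne
          exact fst_ne hF hC ha hb hne hab
      _ = Qc F C := by
          apply Finset.prod_congr rfl
          intro l hl
          rw [hf]
          simp only [f_eq hF hC hl]
          unfold gw qlit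
          cases l.2 <;> simp
  have step3 : ∀ α : {v // v ∈ vars F} → Bool,
      (∏ v, gw F v.1 (α v)) * (if SatC (extAssign F α) C then 1 else 0)
        = (∏ v, gw F v.1 (α v)) - ∏ v, h v (α v) := by
    intro α
    rw [step1 α]
    by_cases hs : SatC (extAssign F α) C <;> simp [hs]
  rw [probSat_def']
  rw [Finset.sum_congr rfl (fun α _ => step3 α), Finset.sum_sub_distrib, sum_gw, step2]

end Prob
section Bounds

variable {F : Finset Clause}

lemma Qc_hard (hF : IsCNF F) {C : Clause} (hC : C ∈ F) (hh : IsHard F C) :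
    Qc F C ≤ 1/3 := by
  rcases hh with ⟨x, rfl⟩ | ⟨x, hx, y, hy, b, rfl⟩
  · have hxU : x ∈ unitVars F := mem_unitVars_of hC rfl
    unfold Qc
    rw [Finset.prod_singleton]
    unfold qlit
    simp [hxU]
  · have hxy : x ≠ y := fun he => hy (he ▸ hx)
    have hne : ((x, false) : ℕ × Bool) ≠ (y, b) := by simp [hxy]
    unfold Qc
    rw [Finset.prod_insert (by simp [hne]), Finset.prod_singleton]
    unfold qlit
    simp only [if_pos hx, if_neg hy]
    norm_num

lemma Qc_soft (hF : IsCNF F) (h3 : Sat3 F) (hup : UnitPos F) {C : Clause}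
    (hC : C ∈ F) (hs : ¬ IsHard F C) : Qc F C ≤ 8/27 := by
  have hne : C.Nonempty := (hF C hC).1
  rcases hc3 : C.card with _ | _ | _ | n
  · exact absurd (Finset.card_eq_zero.1 hc3) (Finset.nonempty_iff_ne_empty.1 hne)
  · obtain ⟨x, hx⟩ := hup C hC hc3
    exact absurd (Or.inl ⟨x, hx⟩) hs
  · -- card = 2
    obtain ⟨a, b, hab, hCab⟩ := Finset.card_eq_two.1 hc3
    have ha : a ∈ C := by rw [hCab]; simp
    have hb : b ∈ C := by rw [hCab]; simp
    have hQ : Qc F C = qlit F a * qlit F b := by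
      unfold Qc
      rw [hCab, Finset.prod_insert (by simp [hab]), Finset.prod_singleton]
    have hvab : a.1 ≠ b.1 := fst_ne hF hC ha hb hab
    -- "bad" literal: negative occurrence of a unit variable (falsified w.p. 2/3)
    have key : ∀ l ∈ C, ¬ (l.1 ∈ unitVars F ∧ l.2 = false) → qlit F l ≤ 1/2 := by
      intro l _ hbad
      unfold qlit
      by_cases h1 : l.1 ∈ unitVars F
      · have h2 : l.2 = true := by
          cases h2 : l.2
          · exact absurd ⟨h1, h2⟩ hbad
          · rfl
        rw [if_pos h1, h2]; norm_num
      · rw [if_neg h1]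
    by_cases hba : a.1 ∈ unitVars F ∧ a.2 = false
    · by_cases hbb : b.1 ∈ unitVars F ∧ b.2 = false
      · -- both negative unit: contradiction with 3-satisfiability
        exfalso
        have hCa : ({(a.1, true)} : Clause) ∈ F := (mem_unitVars hup).1 hba.1
        have hCb : ({(b.1, true)} : Clause) ∈ F := (mem_unitVars hup).1 hbb.1
        obtain ⟨τ, hτC, hτa, hτb⟩ := h3 C hC _ hCa _ hCb
        obtain ⟨l1, hl1, he1⟩ := hτa
        simp only [Finset.mem_singleton] at hl1
        subst hl1
        obtain ⟨l2, hl2, he2⟩ := hτb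
        simp only [Finset.mem_singleton] at hl2
        subst hl2
        obtain ⟨l, hl, he⟩ := hτC
        rw [hCab] at hl
        simp only [Finset.mem_insert, Finset.mem_singleton] at hl
        rcases hl with rfl | rfl
        · rw [hba.2] at he; rw [he1] at he; simp at he
        · rw [hbb.2] at he; rw [he2] at he; simp at he
      · -- a bad, b not bad
        have hqa : qlit F a = 2/3 := by unfold qlit; rw [if_pos hba.1, hba.2]; norm_num
        by_cases hbU : b.1 ∈ unitVars F
        · have hb2 : b.2 = true := by
            cases h2 : b.2
            · exact absurd ⟨hbU, h2⟩ hbb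
            · rfl
          have hqb : qlit F b = 1/3 := by unfold qlit; rw [if_pos hbU, hb2]; norm_num
          rw [hQ, hqa, hqb]; norm_num
        · -- b's variable is not a unit variable: C is hard, contradiction
          exfalso
          apply hs
          right
          refine ⟨a.1, hba.1, b.1, hbU, b.2, ?_⟩
          rw [hCab]
          congr 1
          exact Prod.ext rfl hba.2
    · have hqa : qlit F a ≤ 1/2 := key a ha hba
      by_cases hbb : b.1 ∈ unitVars F ∧ b.2 = false
      · by_cases haU : a.1 ∈ unitVars F
        · have ha2 : a.2 = true := by
            cases h2 : a.2
            · exact absurd ⟨haU, h2⟩ hba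
            · rfl
          have hqa' : qlit F a = 1/3 := by unfold qlit; rw [if_pos haU, ha2]; norm_num
          have hqb : qlit F b = 2/3 := by unfold qlit; rw [if_pos hbb.1, hbb.2]; norm_num
          rw [hQ, hqa', hqb]; norm_num
        · exfalso
          apply hs
          right
          refine ⟨b.1, hbb.1, a.1, haU, a.2, ?_⟩
          rw [hCab]
          rw [Finset.pair_comm]
          congr 1
          exact Prod.ext rfl hbb.2
      · have hqb : qlit F b ≤ 1/2 := key b hb hbb
        rw [hQ]
        have h1 : (0:ℝ) ≤ qlit F a := le_of_lt (qlit_pos a)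
        have h2 : (0:ℝ) ≤ qlit F b := le_of_lt (qlit_pos b)
        nlinarith
  · -- card ≥ 3
    have h1 : Qc F C ≤ (2/3 : ℝ) ^ C.card := by
      unfold Qc
      calc ∏ l ∈ C, qlit F l ≤ ∏ l ∈ C, (2/3 : ℝ) :=
            Finset.prod_le_prod (fun l _ => le_of_lt (qlit_pos l)) (fun l _ => qlit_le l)
        _ = (2/3 : ℝ) ^ C.card := Finset.prod_const _
    have h2 : ((2:ℝ)/3) ^ C.card ≤ (2/3 : ℝ) ^ 3 := by
      apply pow_le_pow_of_le_one (by norm_num) (by norm_num)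
      omega
    calc Qc F C ≤ ((2:ℝ)/3) ^ C.card := h1
      _ ≤ (2/3 : ℝ) ^ 3 := h2
      _ = 8/27 := by norm_num

end Bounds
lemma exists_good (F : Finset Clause) (w : Clause → ℕ) :
    ∃ α : {v // v ∈ vars F} → Bool,
      ∑ C ∈ F, (w C : ℝ) * probSat F C ≤ (satWt w (extAssign F α) F : ℝ) := by
  classical
  set P : ({v // v ∈ vars F} → Bool) → ℝ := fun α => ∏ v, gw F v.1 (α v) with hP
  have hPpos : ∀ α, 0 < P α := fun α => Finset.prod_pos (fun v _ => gw_pos v.1 (α v))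
  have hP1 : ∑ α, P α = 1 := by rw [hP]; exact sum_gw F
  have hsat : ∀ τ, (satWt w τ F : ℝ) = ∑ C ∈ F, (if SatC τ C then (w C : ℝ) else 0) := by
    intro τ; unfold satWt; push_cast; rw [Finset.sum_filter]
  have key : ∑ α, P α * (satWt w (extAssign F α) F : ℝ)
      = ∑ C ∈ F, (w C : ℝ) * probSat F C := by
    calc ∑ α, P α * (satWt w (extAssign F α) F : ℝ)
        = ∑ α, ∑ C ∈ F, P α * (if SatC (extAssign F α) C then (w C:ℝ) else 0) := by
          refine Finset.sum_congr rfl fun α _ => ?_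
          rw [hsat, Finset.mul_sum]
      _ = ∑ C ∈ F, ∑ α, P α * (if SatC (extAssign F α) C then (w C:ℝ) else 0) :=
          Finset.sum_comm
      _ = ∑ C ∈ F, (w C:ℝ) * probSat F C := by
          refine Finset.sum_congr rfl fun C _ => ?_
          rw [probSat_def', Finset.mul_sum]
          refine Finset.sum_congr rfl fun α _ => ?_
          by_cases hs : SatC (extAssign F α) C <;> simp [hs, hP] <;> ring
  by_contra hcon
  push_neg at hcon
  have hlt : ∑ α, P α * (satWt w (extAssign F α) F : ℝ)
      < ∑ α, P α * (∑ C ∈ F, (w C:ℝ) * probSat F C) := by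
    apply Finset.sum_lt_sum_of_nonempty Finset.univ_nonempty
    intro α _
    exact mul_lt_mul_of_pos_left (hcon α) (hPpos α)
  rw [key, ← Finset.sum_mul, hP1, one_mul] at hlt
  exact lt_irrefl _ hlt
theorem stmt16 (F : Finset Clause) (w : Clause → ℕ)
    (hF : IsCNF F) (hw : ∀ C ∈ F, 0 < w C) (h3 : Sat3 F) (hup : UnitPos F)
    (hexp : Expanding F w)
    (hfat : (18:ℝ)/133 * (((unitVars F).card : ℝ) + ((V2set F).card : ℝ))
              ≤ (wt w (softF F) : ℝ)) :
    ∃ τ : ℕ → Bool,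
      (2:ℝ)/3 * wt w F + (2:ℝ)/453 * ((vars F).card : ℝ) ≤ (satWt w τ F : ℝ) := by
  classical
  obtain ⟨α, hα⟩ := exists_good F w
  refine ⟨extAssign F α, ?_⟩
  set Hh : Finset Clause := F.filter (fun C => IsHard F C) with hHh
  have hsplitF : wt w F = wt w Hh + wt w (softF F) := by
    unfold wt softF
    rw [hHh, Finset.sum_filter_add_sum_filter_not]
  have hwtcast : ∀ G : Finset Clause, (wt w G : ℝ) = ∑ C ∈ G, (w C : ℝ) := by
    intro G; unfold wt; push_cast; rfl
  have hE : (2:ℝ)/3 * (wt w Hh : ℝ) + 19/27 * (wt w (softF F) : ℝ)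
      ≤ ∑ C ∈ F, (w C : ℝ) * probSat F C := by
    have hsum : ∑ C ∈ F, (w C : ℝ) * probSat F C
        = ∑ C ∈ Hh, (w C : ℝ) * probSat F C
          + ∑ C ∈ softF F, (w C : ℝ) * probSat F C := by
      rw [hHh]; unfold softF; rw [Finset.sum_filter_add_sum_filter_not]
    have h1 : ∑ C ∈ Hh, (2:ℝ)/3 * (w C:ℝ) ≤ ∑ C ∈ Hh, (w C : ℝ) * probSat F C := by
      refine Finset.sum_le_sum fun C hCm => ?_
      rw [hHh, Finset.mem_filter] at hCm
      rw [probSat_eq hF hCm.1]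
      have hq := Qc_hard hF hCm.1 hCm.2
      have hw0 : (0:ℝ) ≤ (w C:ℝ) := Nat.cast_nonneg _
      nlinarith
    have h2 : ∑ C ∈ softF F, (19:ℝ)/27 * (w C:ℝ)
        ≤ ∑ C ∈ softF F, (w C : ℝ) * probSat F C := by
      refine Finset.sum_le_sum fun C hCm => ?_
      rw [softF, Finset.mem_filter] at hCm
      rw [probSat_eq hF hCm.1]
      have hq := Qc_soft hF h3 hup hCm.1 hCm.2
      have hw0 : (0:ℝ) ≤ (w C:ℝ) := Nat.cast_nonneg _
      nlinarith
    rw [hsum, hwtcast, hwtcast, Finset.mul_sum, Finset.mul_sum]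
    exact add_le_add h1 h2
  -- counting part
  set V3 : Finset ℕ := vars F \ (unitVars F ∪ V2set F) with hV3
  have hexp3 : V3.card ≤ wt w (FU F V3) := hexp V3 Finset.sdiff_subset
  have hFUsub : FU F V3 ⊆ softF F := by
    intro C hCm
    rw [FU, Finset.mem_filter] at hCm
    obtain ⟨hCF, l, hl, hlV3⟩ := hCm
    rw [hV3, Finset.mem_sdiff, Finset.mem_union] at hlV3
    push_neg at hlV3
    rw [softF, Finset.mem_filter]
    refine ⟨hCF, ?_⟩
    intro hh
    rcases hh with ⟨x, hx⟩ | ⟨x, hxU, y, hyU, b, hx⟩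
    · rw [hx, Finset.mem_singleton] at hl
      have : l.1 ∈ unitVars F := by
        rw [hl]; exact mem_unitVars_of hCF hx
      exact hlV3.2.1 this
    · rw [hx, Finset.mem_insert, Finset.mem_singleton] at hl
      rcases hl with rfl | rfl
      · exact hlV3.2.1 hxU
      · apply hlV3.2.2
        rw [V2set, Finset.mem_sdiff]
        refine ⟨?_, hyU⟩
        rw [Finset.mem_sup]
        refine ⟨C, ?_, ?_⟩
        · rw [F2set, Finset.mem_filter]
          exact ⟨hCF, x, hxU, y, hyU, b, hx⟩
        · rw [hx]
          exact Finset.mem_image_of_mem _ (by simp)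
  have hwt3 : wt w (FU F V3) ≤ wt w (softF F) := by
    unfold wt
    exact Finset.sum_le_sum_of_subset hFUsub
  have hcard : (vars F).card ≤ (unitVars F).card + (V2set F).card + V3.card := by
    calc (vars F).card ≤ ((unitVars F ∪ V2set F) ∪ V3).card := by
          apply Finset.card_le_card
          intro v hv
          rw [Finset.mem_union]
          by_cases h : v ∈ unitVars F ∪ V2set F
          · exact Or.inl h
          · exact Or.inr (Finset.mem_sdiff.2 ⟨hv, h⟩)
      _ ≤ (unitVars F ∪ V2set F).card + V3.card := Finset.card_union_le _ _
      _ ≤ (unitVars F).card + (V2set F).card + V3.card :=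
          add_le_add_left (Finset.card_union_le _ _) _
  have c1 : (V3.card : ℝ) ≤ (wt w (softF F) : ℝ) := by
    exact_mod_cast le_trans hexp3 hwt3
  have c2 : ((vars F).card : ℝ)
      ≤ ((unitVars F).card : ℝ) + ((V2set F).card : ℝ) + (V3.card : ℝ) := by
    exact_mod_cast hcard
  have hwF : (wt w F : ℝ) = (wt w Hh : ℝ) + (wt w (softF F) : ℝ) := by
    exact_mod_cast hsplitF
  linarith [hα, hE, c1, c2, hfat, hwF]
end

section
/- Let F be an expanding 3-satisfiable weighted CNF formula that is not fat, i.e., w(F_s) < (18/133)(|V1| + |V2|). Then there exists an assignment tau with sat_tau(F) >= (2/3) w(F) + (2/453) |V(F)|. -/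
open Classical

noncomputable def Ex (s : Finset ℕ) (p : ℕ → ℝ) (f : Finset ℕ → ℝ) : ℝ :=
  ∑ A ∈ s.powerset, ((∏ v ∈ A, p v) * ∏ v ∈ s \ A, (1 - p v)) * f A

lemma Ex_empty (p : ℕ → ℝ) (f : Finset ℕ → ℝ) : Ex ∅ p f = f ∅ := by
  simp [Ex]

lemma Ex_insert {x : ℕ} {s : Finset ℕ} (hx : x ∉ s) (p : ℕ → ℝ) (f : Finset ℕ → ℝ) :
    Ex (insert x s) p f
      = p x * Ex s p (fun A => f (insert x A)) + (1 - p x) * Ex s p f := by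
  have hdisj : Disjoint s.powerset (s.powerset.image (insert x)) := by
    rw [Finset.disjoint_left]
    rintro A hA hA2
    rcases Finset.mem_image.1 hA2 with ⟨B, _, rfl⟩
    exact hx (Finset.mem_powerset.1 hA (Finset.mem_insert_self x B))
  have hinj : ∀ A ∈ s.powerset, ∀ B ∈ s.powerset, insert x A = insert x B → A = B := by
    intro A hA B hB h
    have hxA : x ∉ A := fun h' => hx (Finset.mem_powerset.1 hA h')
    have hxB : x ∉ B := fun h' => hx (Finset.mem_powerset.1 hB h')
    rw [← Finset.erase_insert hxA, ← Finset.erase_insert hxB, h]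
  unfold Ex
  rw [Finset.powerset_insert, Finset.sum_union hdisj, Finset.sum_image hinj]
  rw [Finset.mul_sum, Finset.mul_sum]
  rw [add_comm]
  congr 1
  · -- image part: insert x A
    apply Finset.sum_congr rfl
    intro A hA
    have hAs : A ⊆ s := Finset.mem_powerset.1 hA
    have hxA : x ∉ A := fun h' => hx (hAs h')
    have h1 : insert x s \ insert x A = s \ A := by
      ext v; simp only [Finset.mem_sdiff, Finset.mem_insert]
      constructor
      · rintro ⟨h2 | h2, h3⟩
        · exact absurd (Or.inl h2) h3
        · refine ⟨h2, fun hv => h3 (Or.inr hv)⟩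
      · rintro ⟨h2, h3⟩
        refine ⟨Or.inr h2, ?_⟩
        rintro (rfl | hv)
        · exact hx h2
        · exact h3 hv
    rw [h1, Finset.prod_insert hxA]
    ring
  · -- untouched part
    apply Finset.sum_congr rfl
    intro A hA
    have hAs : A ⊆ s := Finset.mem_powerset.1 hA
    have hxA : x ∉ A := fun h' => hx (hAs h')
    have h1 : insert x s \ A = insert x (s \ A) := Finset.insert_sdiff_of_notMem _ hxA
    have hxsA : x ∉ s \ A := fun h' => hx (Finset.mem_sdiff.1 h').1
    rw [h1, Finset.prod_insert hxsA]
    ring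

lemma Ex_congr {s : Finset ℕ} {p : ℕ → ℝ} {f g : Finset ℕ → ℝ}
    (h : ∀ A ∈ s.powerset, f A = g A) : Ex s p f = Ex s p g :=
  Finset.sum_congr rfl fun A hA => by rw [h A hA]

lemma Ex_const (s : Finset ℕ) (p : ℕ → ℝ) (c : ℝ) : Ex s p (fun _ => c) = c := by
  induction s using Finset.induction_on with
  | empty => simp [Ex_empty]
  | insert _ _ hx ih => rw [Ex_insert hx]; rw [ih]; ring

lemma Ex_add (s : Finset ℕ) (p : ℕ → ℝ) (f g : Finset ℕ → ℝ) :
    Ex s p (fun A => f A + g A) = Ex s p f + Ex s p g := by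
  unfold Ex
  rw [← Finset.sum_add_distrib]
  exact Finset.sum_congr rfl fun A hA => by ring

lemma Ex_const_mul (s : Finset ℕ) (p : ℕ → ℝ) (c : ℝ) (f : Finset ℕ → ℝ) :
    Ex s p (fun A => c * f A) = c * Ex s p f := by
  unfold Ex
  rw [Finset.mul_sum]
  exact Finset.sum_congr rfl fun A hA => by ring

lemma Ex_sum {ι : Type*} (t : Finset ι) (s : Finset ℕ) (p : ℕ → ℝ) (f : ι → Finset ℕ → ℝ) :
    Ex s p (fun A => ∑ i ∈ t, f i A) = ∑ i ∈ t, Ex s p (f i) := by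
  unfold Ex
  rw [Finset.sum_comm]
  exact Finset.sum_congr rfl fun A hA => by rw [Finset.mul_sum]

lemma Ex_weight_nonneg {s : Finset ℕ} {p : ℕ → ℝ} (h0 : ∀ v, 0 ≤ p v) (h1 : ∀ v, p v ≤ 1)
    (A : Finset ℕ) : 0 ≤ (∏ v ∈ A, p v) * ∏ v ∈ s \ A, (1 - p v) :=
  mul_nonneg (Finset.prod_nonneg fun v _ => h0 v)
    (Finset.prod_nonneg fun v _ => by linarith [h1 v])

lemma Ex_mono {s : Finset ℕ} {p : ℕ → ℝ} (h0 : ∀ v, 0 ≤ p v) (h1 : ∀ v, p v ≤ 1)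
    {f g : Finset ℕ → ℝ} (h : ∀ A ∈ s.powerset, f A ≤ g A) : Ex s p f ≤ Ex s p g :=
  Finset.sum_le_sum fun A hA =>
    mul_le_mul_of_nonneg_left (h A hA) (Ex_weight_nonneg h0 h1 A)

lemma Ex_nonneg {s : Finset ℕ} {p : ℕ → ℝ} (h0 : ∀ v, 0 ≤ p v) (h1 : ∀ v, p v ≤ 1)
    {f : Finset ℕ → ℝ} (h : ∀ A ∈ s.powerset, 0 ≤ f A) : 0 ≤ Ex s p f := by
  have := Ex_mono h0 h1 (f := fun _ => 0) (g := f) (fun A hA => h A hA)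
  rwa [Ex_const] at this

lemma exists_Ex_le {s : Finset ℕ} {p : ℕ → ℝ} (h0 : ∀ v, 0 ≤ p v) (h1 : ∀ v, p v ≤ 1)
    (f : Finset ℕ → ℝ) : ∃ A ∈ s.powerset, Ex s p f ≤ f A := by
  by_contra hcon
  push_neg at hcon
  have hmass : ∑ A ∈ s.powerset, ((∏ v ∈ A, p v) * ∏ v ∈ s \ A, (1 - p v)) = 1 := by
    have := Ex_const s p 1
    unfold Ex at this
    simpa using this
  obtain ⟨A0, hA0, hA0ne⟩ : ∃ A ∈ s.powerset, ((∏ v ∈ A, p v) * ∏ v ∈ s \ A, (1 - p v)) ≠ 0 := by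
    apply Finset.exists_ne_zero_of_sum_ne_zero
    rw [hmass]; norm_num
  have hA0pos : 0 < (∏ v ∈ A0, p v) * ∏ v ∈ s \ A0, (1 - p v) :=
    lt_of_le_of_ne (Ex_weight_nonneg h0 h1 A0) (Ne.symm hA0ne)
  have hlt : Ex s p f < Ex s p f := by
    have h2 : Ex s p f < ∑ A ∈ s.powerset,
        ((∏ v ∈ A, p v) * ∏ v ∈ s \ A, (1 - p v)) * Ex s p f := by
      unfold Ex
      apply Finset.sum_lt_sum
      · intro A hA
        exact mul_le_mul_of_nonneg_left (le_of_lt (hcon A hA)) (Ex_weight_nonneg h0 h1 A)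
      · exact ⟨A0, hA0, mul_lt_mul_of_pos_left (hcon A0 hA0) hA0pos⟩
    calc Ex s p f < ∑ A ∈ s.powerset,
        ((∏ v ∈ A, p v) * ∏ v ∈ s \ A, (1 - p v)) * Ex s p f := h2
    _ = (∑ A ∈ s.powerset, ((∏ v ∈ A, p v) * ∏ v ∈ s \ A, (1 - p v))) * Ex s p f := by
        rw [Finset.sum_mul]
    _ = Ex s p f := by rw [hmass, one_mul]
  exact lt_irrefl _ hlt

lemma Ex_erase {x : ℕ} {s : Finset ℕ} (hx : x ∈ s) (p : ℕ → ℝ) (f : Finset ℕ → ℝ) :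
    Ex s p f = p x * Ex (s.erase x) p (fun A => f (insert x A)) + (1 - p x) * Ex (s.erase x) p f := by
  conv_lhs => rw [← Finset.insert_erase hx]
  exact Ex_insert (Finset.notMem_erase _ _) p f

lemma Ex_ite {x : ℕ} {s : Finset ℕ} (hx : x ∈ s) (p : ℕ → ℝ) (c c' : ℝ) :
    Ex s p (fun A => if x ∈ A then c else c') = p x * c + (1 - p x) * c' := by
  rw [Ex_erase hx]
  congr 1
  · have : Ex (s.erase x) p (fun A => if x ∈ insert x A then c else c')
        = Ex (s.erase x) p (fun _ => c) := Ex_congr fun A hA => by simp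
    rw [this, Ex_const]
  · have : Ex (s.erase x) p (fun A => if x ∈ A then c else c')
        = Ex (s.erase x) p (fun _ => c') := by
      apply Ex_congr
      intro A hA
      have : x ∉ A := fun h => (Finset.notMem_erase x s) (Finset.mem_powerset.1 hA h)
      simp [this]
    rw [this, Ex_const]

/-! ### Anticoncentration lemmas -/

noncomputable def Tsum (t : Finset ℕ) (v : ℕ → ℤ) (U : Finset ℕ) : ℤ :=
  ∑ x ∈ t, if x ∈ U then v x else 0

lemma Tsum_insert {t : Finset ℕ} {x0 : ℕ} (hx0 : x0 ∈ t) {U : Finset ℕ} (hU : x0 ∉ U)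
    (v : ℕ → ℤ) : Tsum t v (insert x0 U) = v x0 + Tsum (t.erase x0) v U := by
  unfold Tsum
  rw [← Finset.add_sum_erase t _ hx0]
  congr 1
  · simp
  · apply Finset.sum_congr rfl
    intro x hx
    have hxx0 : x ≠ x0 := Finset.ne_of_mem_erase hx
    simp [Finset.mem_insert, hxx0]

lemma Tsum_not_mem {t : Finset ℕ} {x0 : ℕ} {U : Finset ℕ} (hU : x0 ∉ U)
    (v : ℕ → ℤ) : Tsum t v U = Tsum (t.erase x0) v U := by
  unfold Tsum
  by_cases hx0 : x0 ∈ t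
  · rw [eq_comm]
    apply Finset.sum_erase
    simp [hU]
  · rw [Finset.erase_eq_of_notMem hx0]

lemma pointmass_le (amb t : Finset ℕ) (hts : t ⊆ amb) (ht : t.Nonempty)
    (v : ℕ → ℤ) (hv : ∀ x ∈ t, v x ≠ 0) (z : ℤ) :
    Ex amb (fun _ => 2/3) (fun U => if Tsum t v U = z then (1:ℝ) else 0) ≤ 2/3 := by
  obtain ⟨x1, hx1⟩ := ht
  have hx1amb : x1 ∈ amb := hts hx1
  set p : ℕ → ℝ := fun _ => 2/3 with hp
  have h0 : ∀ y, (0:ℝ) ≤ p y := fun y => by norm_num [hp]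
  have h1 : ∀ y, p y ≤ 1 := fun y => by norm_num [hp]
  rw [Ex_erase hx1amb]
  set t' := t.erase x1 with ht'
  have e1 : Ex (amb.erase x1) p (fun A => if Tsum t v (insert x1 A) = z then (1:ℝ) else 0)
      = Ex (amb.erase x1) p (fun A => if v x1 + Tsum t' v A = z then (1:ℝ) else 0) := by
    apply Ex_congr
    intro A hA
    have hx1A : x1 ∉ A := fun h => (Finset.notMem_erase x1 amb) (Finset.mem_powerset.1 hA h)
    rw [Tsum_insert hx1 hx1A]
  have e2 : Ex (amb.erase x1) p (fun A => if Tsum t v A = z then (1:ℝ) else 0)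
      = Ex (amb.erase x1) p (fun A => if Tsum t' v A = z then (1:ℝ) else 0) := by
    apply Ex_congr
    intro A hA
    have hx1A : x1 ∉ A := fun h => (Finset.notMem_erase x1 amb) (Finset.mem_powerset.1 hA h)
    rw [Tsum_not_mem hx1A]
  rw [e1, e2]
  have key : Ex (amb.erase x1) p (fun A =>
      p x1 * (if v x1 + Tsum t' v A = z then (1:ℝ) else 0)
      + (1 - p x1) * (if Tsum t' v A = z then (1:ℝ) else 0)) ≤ 2/3 := by
    have hb : ∀ A ∈ (amb.erase x1).powerset,
        p x1 * (if v x1 + Tsum t' v A = z then (1:ℝ) else 0)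
        + (1 - p x1) * (if Tsum t' v A = z then (1:ℝ) else 0) ≤ (2:ℝ)/3 := by
      intro A _
      have hpx : p x1 = 2/3 := rfl
      by_cases hc1 : v x1 + Tsum t' v A = z
      · have hc2 : ¬ (Tsum t' v A = z) := fun hc2 => hv x1 hx1 (by omega)
        rw [if_pos hc1, if_neg hc2, hpx]; norm_num
      · by_cases hc2 : Tsum t' v A = z
        · rw [if_neg hc1, if_pos hc2, hpx]; norm_num
        · rw [if_neg hc1, if_neg hc2, hpx]; norm_num
    calc Ex (amb.erase x1) p _ ≤ Ex (amb.erase x1) p (fun _ => (2:ℝ)/3) :=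
          Ex_mono h0 h1 hb
    _ = 2/3 := Ex_const _ _ _
  calc p x1 * Ex (amb.erase x1) p (fun A => if v x1 + Tsum t' v A = z then (1:ℝ) else 0)
        + (1 - p x1) * Ex (amb.erase x1) p (fun A => if Tsum t' v A = z then (1:ℝ) else 0)
      = Ex (amb.erase x1) p (fun A =>
        p x1 * (if v x1 + Tsum t' v A = z then (1:ℝ) else 0)
        + (1 - p x1) * (if Tsum t' v A = z then (1:ℝ) else 0)) := by
        rw [Ex_add, Ex_const_mul, Ex_const_mul]
  _ ≤ 2/3 := key

lemma abs_Tsum_ge (amb t : Finset ℕ) (hts : t ⊆ amb) (ht : t.Nonempty)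
    (v : ℕ → ℤ) (hv : ∀ x ∈ t, v x ≠ 0) :
    (4:ℝ)/9 ≤ Ex amb (fun _ => 2/3) (fun U => |((Tsum t v U : ℤ) : ℝ)|) := by
  obtain ⟨x0, hx0⟩ := ht
  have hx0amb : x0 ∈ amb := hts hx0
  set p : ℕ → ℝ := fun _ => 2/3 with hp
  have h0 : ∀ y, (0:ℝ) ≤ p y := fun y => by norm_num [hp]
  have h1 : ∀ y, p y ≤ 1 := fun y => by norm_num [hp]
  set t' := t.erase x0 with ht'
  set amb' := amb.erase x0 with hamb'
  have habs : ∀ (z : ℤ), z ≠ 0 → (1:ℝ) ≤ |((z:ℤ):ℝ)| := by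
    intro z hz
    have := Int.one_le_abs hz
    calc (1:ℝ) = ((1:ℤ):ℝ) := by norm_num
    _ ≤ ((|z|:ℤ):ℝ) := by exact_mod_cast this
    _ = |((z:ℤ):ℝ)| := Int.cast_abs
  rw [Ex_erase hx0amb]
  have e1 : Ex amb' p (fun A => |((Tsum t v (insert x0 A) : ℤ) : ℝ)|)
      = Ex amb' p (fun A => |((v x0 + Tsum t' v A : ℤ) : ℝ)|) := by
    apply Ex_congr
    intro A hA
    have hx0A : x0 ∉ A := fun h => (Finset.notMem_erase x0 amb) (Finset.mem_powerset.1 hA h)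
    rw [Tsum_insert hx0 hx0A]
  have e2 : Ex amb' p (fun A => |((Tsum t v A : ℤ) : ℝ)|)
      = Ex amb' p (fun A => |((Tsum t' v A : ℤ) : ℝ)|) := by
    apply Ex_congr
    intro A hA
    have hx0A : x0 ∉ A := fun h => (Finset.notMem_erase x0 amb) (Finset.mem_powerset.1 hA h)
    rw [Tsum_not_mem hx0A]
  rw [e1, e2]
  by_cases hte : t' = ∅
  · -- t' empty : Tsum t' v A = 0
    have hz : ∀ A, Tsum t' v A = 0 := by intro A; simp [Tsum, hte]
    have e3 : Ex amb' p (fun A => |((v x0 + Tsum t' v A : ℤ) : ℝ)|)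
        = Ex amb' p (fun _ => |((v x0 : ℤ) : ℝ)|) := by
      apply Ex_congr
      intro A _
      rw [hz A]
      norm_num
    have e4 : Ex amb' p (fun A => |((Tsum t' v A : ℤ) : ℝ)|) = Ex amb' p (fun _ => (0:ℝ)) :=
      Ex_congr fun A _ => by rw [hz A]; simp
    rw [e3, e4, Ex_const, Ex_const]
    have h2 := habs (v x0) (hv x0 hx0)
    have hpx : p x0 = 2/3 := rfl
    rw [hpx]
    nlinarith
  · -- t' nonempty
    have htne : t'.Nonempty := Finset.nonempty_of_ne_empty hte
    have ht's : t' ⊆ amb' := Finset.erase_subset_erase _ hts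
    have hv' : ∀ x ∈ t', v x ≠ 0 := fun x hx => hv x (Finset.mem_of_mem_erase hx)
    set P0 := Ex amb' p (fun A => if Tsum t' v A = 0 then (1:ℝ) else 0) with hP0
    set Pv := Ex amb' p (fun A => if Tsum t' v A = -(v x0) then (1:ℝ) else 0) with hPv
    have hP0nn : 0 ≤ P0 := Ex_nonneg h0 h1 (fun A _ => by positivity)
    have hPvnn : 0 ≤ Pv := Ex_nonneg h0 h1 (fun A _ => by positivity)
    have hPvle : Pv ≤ 2/3 := pointmass_le amb' t' ht's htne v hv' _
    have hsumle : P0 + Pv ≤ 1 := by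
      have : Ex amb' p (fun A => (if Tsum t' v A = 0 then (1:ℝ) else 0)
          + (if Tsum t' v A = -(v x0) then (1:ℝ) else 0)) ≤ Ex amb' p (fun _ => (1:ℝ)) := by
        apply Ex_mono h0 h1
        intro A _
        by_cases hc1 : Tsum t' v A = 0
        · have hc2 : ¬ (Tsum t' v A = -(v x0)) := by
            rw [hc1]; intro hc; exact hv x0 hx0 (by omega)
          rw [if_pos hc1, if_neg hc2]; norm_num
        · by_cases hc2 : Tsum t' v A = -(v x0)
          · rw [if_neg hc1, if_pos hc2]; norm_num
          · rw [if_neg hc1, if_neg hc2]; norm_num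
      rwa [Ex_add, Ex_const, ← hP0, ← hPv] at this
    have hpoint : ∀ A ∈ amb'.powerset,
        (1:ℝ) - (1/3) * (if Tsum t' v A = 0 then (1:ℝ) else 0)
            - (2/3) * (if Tsum t' v A = -(v x0) then (1:ℝ) else 0)
        ≤ p x0 * |((v x0 + Tsum t' v A : ℤ) : ℝ)| + (1 - p x0) * |((Tsum t' v A : ℤ) : ℝ)| := by
      intro A _
      have hpx : p x0 = 2/3 := rfl
      rw [hpx]
      by_cases hc1 : Tsum t' v A = 0
      · have h2 : (1:ℝ) ≤ |((v x0 + Tsum t' v A : ℤ) : ℝ)| := habs _ (by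
          rw [hc1, add_zero]; exact hv x0 hx0)
        have hc2 : ¬ (Tsum t' v A = -(v x0)) := by
          rw [hc1]; intro hc; exact hv x0 hx0 (by omega)
        rw [if_pos hc1, if_neg hc2]
        have h3 : (0:ℝ) ≤ |((Tsum t' v A : ℤ) : ℝ)| := abs_nonneg _
        nlinarith
      · by_cases hc2 : Tsum t' v A = -(v x0)
        · have h2 : (1:ℝ) ≤ |((Tsum t' v A : ℤ) : ℝ)| := habs _ hc1
          have h3 : (0:ℝ) ≤ |((v x0 + Tsum t' v A : ℤ) : ℝ)| := abs_nonneg _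
          rw [if_neg hc1, if_pos hc2]
          nlinarith
        · have h2 : (1:ℝ) ≤ |((Tsum t' v A : ℤ) : ℝ)| := habs _ hc1
          have h3 : (1:ℝ) ≤ |((v x0 + Tsum t' v A : ℤ) : ℝ)| := habs _ (by omega)
          rw [if_neg hc1, if_neg hc2]
          nlinarith
    have hmain : (1:ℝ) - (1/3) * P0 - (2/3) * Pv
        ≤ p x0 * Ex amb' p (fun A => |((v x0 + Tsum t' v A : ℤ) : ℝ)|)
          + (1 - p x0) * Ex amb' p (fun A => |((Tsum t' v A : ℤ) : ℝ)|) := by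
      have hrhs : p x0 * Ex amb' p (fun A => |((v x0 + Tsum t' v A : ℤ) : ℝ)|)
          + (1 - p x0) * Ex amb' p (fun A => |((Tsum t' v A : ℤ) : ℝ)|)
          = Ex amb' p (fun A => p x0 * |((v x0 + Tsum t' v A : ℤ) : ℝ)|
              + (1 - p x0) * |((Tsum t' v A : ℤ) : ℝ)|) := by
        rw [Ex_add, Ex_const_mul, Ex_const_mul]
      have hlhs : (1:ℝ) - (1/3) * P0 - (2/3) * Pv
          = Ex amb' p (fun A => 1 - (1/3) * (if Tsum t' v A = 0 then (1:ℝ) else 0)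
              - (2/3) * (if Tsum t' v A = -(v x0) then (1:ℝ) else 0)) := by
        have : ∀ A : Finset ℕ, (1:ℝ) - (1/3) * (if Tsum t' v A = 0 then (1:ℝ) else 0)
              - (2/3) * (if Tsum t' v A = -(v x0) then (1:ℝ) else 0)
            = 1 + ((-(1/3)) * (if Tsum t' v A = 0 then (1:ℝ) else 0)
              + (-(2/3)) * (if Tsum t' v A = -(v x0) then (1:ℝ) else 0)) := fun A => by ring
        rw [Ex_congr (fun A _ => this A)]
        rw [Ex_add, Ex_add, Ex_const, Ex_const_mul, Ex_const_mul, ← hP0, ← hPv]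
        ring
      rw [hrhs, hlhs]
      exact Ex_mono h0 h1 hpoint
    have : (4:ℝ)/9 ≤ 1 - (1/3) * P0 - (2/3) * Pv := by linarith
    linarith

/-! ### Structure of hard clauses -/

namespace Stmt17

noncomputable def xOf (F : Finset Clause) (C : Clause) : ℕ :=
  (C.filter (fun l => l.1 ∈ unitVars F)).sup Prod.fst

noncomputable def yOf (F : Finset Clause) (C : Clause) : ℕ :=
  (C.filter (fun l => l.1 ∉ unitVars F)).sup Prod.fst

noncomputable def bOf (F : Finset Clause) (C : Clause) : Bool :=
  (C.filter (fun l => l.1 ∉ unitVars F)).sup Prod.snd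

/-- canonical fiber sets -/
noncomputable def Fx (F : Finset Clause) (x : ℕ) : Finset Clause :=
  (F2set F).filter (fun C => xOf F C = x)

noncomputable def Fxy (F : Finset Clause) (x y : ℕ) : Finset Clause :=
  (Fx F x).filter (fun C => yOf F C = y)

noncomputable def gg (F : Finset Clause) (w : Clause → ℕ) (b : Bool) (x y : ℕ) : ℕ :=
  wt w ((Fxy F x y).filter (fun C => bOf F C = b))

noncomputable def dd (F : Finset Clause) (w : Clause → ℕ) (x : ℕ) : ℕ :=
  ∑ y ∈ V2set F, (gg F w true x y + gg F w false x y)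

noncomputable def aw (F : Finset Clause) (w : Clause → ℕ) (x : ℕ) : ℕ := w {(x, true)}

lemma F2_spec (F : Finset Clause) {C : Clause} (hC : C ∈ F2set F) :
    C ∈ F ∧ xOf F C ∈ unitVars F ∧ yOf F C ∉ unitVars F ∧
      C = {(xOf F C, false), (yOf F C, bOf F C)} ∧ xOf F C ≠ yOf F C := by
  rw [F2set, Finset.mem_filter] at hC
  obtain ⟨hCF, x, hx, y, hy, b, rfl⟩ := hC
  have hxy : x ≠ y := fun h => hy (h ▸ hx)
  have h1 : ({(x, false), (y, b)} : Clause).filter (fun l => l.1 ∈ unitVars F)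
      = {(x, false)} := by
    rw [Finset.filter_insert, Finset.filter_singleton]
    simp [hx, hy]
  have h2 : ({(x, false), (y, b)} : Clause).filter (fun l => l.1 ∉ unitVars F)
      = {(y, b)} := by
    rw [Finset.filter_insert, Finset.filter_singleton]
    simp [hx, hy]
  have hxOf : xOf F ({(x, false), (y, b)} : Clause) = x := by
    rw [xOf, h1, Finset.sup_singleton]
  have hyOf : yOf F ({(x, false), (y, b)} : Clause) = y := by
    rw [yOf, h2, Finset.sup_singleton]
  have hbOf : bOf F ({(x, false), (y, b)} : Clause) = b := by
    rw [bOf, h2, Finset.sup_singleton]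
  rw [hxOf, hyOf, hbOf]
  exact ⟨hCF, hx, hy, rfl, hxy⟩

lemma mem_unitVars (F : Finset Clause) (hup : UnitPos F) {x : ℕ} :
    x ∈ unitVars F ↔ ({(x, true)} : Clause) ∈ F := by
  constructor
  · intro hx
    rw [unitVars, Finset.mem_sup] at hx
    obtain ⟨C, hC, hxC⟩ := hx
    rw [Finset.mem_filter] at hC
    obtain ⟨x', rfl⟩ := hup C hC.1 hC.2
    rw [Finset.mem_image] at hxC
    obtain ⟨l, hl, rfl⟩ := hxC
    rw [Finset.mem_singleton] at hl
    rw [hl]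
    exact hC.1
  · intro h
    rw [unitVars, Finset.mem_sup]
    exact ⟨{(x, true)}, Finset.mem_filter.2 ⟨h, Finset.card_singleton _⟩,
      Finset.mem_image.2 ⟨(x, true), Finset.mem_singleton_self _, rfl⟩⟩

lemma yOf_mem_V2 (F : Finset Clause) {C : Clause} (hC : C ∈ F2set F) :
    yOf F C ∈ V2set F := by
  obtain ⟨hCF, hxV, hyV, hCeq, hxy⟩ := F2_spec F hC
  rw [V2set, Finset.mem_sdiff]
  have hmem : (yOf F C, bOf F C) ∈ ({(xOf F C, false), (yOf F C, bOf F C)} : Clause) :=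
    Finset.mem_insert_of_mem (Finset.mem_singleton_self _)
  rw [← hCeq] at hmem
  exact ⟨Finset.mem_sup.2 ⟨C, hC, Finset.mem_image.2 ⟨(yOf F C, bOf F C), hmem, rfl⟩⟩, hyV⟩

lemma V2_not_unit (F : Finset Clause) {y : ℕ} (hy : y ∈ V2set F) : y ∉ unitVars F :=
  (Finset.mem_sdiff.1 hy).2

lemma wt_Fxy_split (F : Finset Clause) (w : Clause → ℕ) (x y : ℕ) :
    wt w (Fxy F x y) = gg F w true x y + gg F w false x y := by
  unfold gg wt
  rw [← Finset.sum_filter_add_sum_filter_not (Fxy F x y) (fun C => bOf F C = true)]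
  congr 1
  apply Finset.sum_congr _ (fun _ _ => rfl)
  apply Finset.filter_congr
  intro C _
  simp [Bool.not_eq_true]

lemma wt_Fx (F : Finset Clause) (w : Clause → ℕ) (x : ℕ) :
    wt w (Fx F x) = dd F w x := by
  unfold wt dd Fx
  rw [← Finset.sum_fiberwise_of_maps_to (g := yOf F) (t := V2set F)
    (fun C hC => yOf_mem_V2 F (Finset.mem_filter.1 hC).1) w]
  apply Finset.sum_congr rfl
  intro y _
  rw [← wt_Fxy_split]
  rfl

lemma wt_F2 (F : Finset Clause) (w : Clause → ℕ) :
    wt w (F2set F) = ∑ x ∈ unitVars F, dd F w x := by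
  unfold wt
  rw [← Finset.sum_fiberwise_of_maps_to (g := xOf F) (t := unitVars F)
    (fun C hC => (F2_spec F hC).2.1) w]
  exact Finset.sum_congr rfl fun x _ => by rw [← wt_Fx]; rfl

lemma gg_or (F : Finset Clause) (w : Clause → ℕ) (h3 : Sat3 F) (hup : UnitPos F) (x y : ℕ) :
    gg F w true x y = 0 ∨ gg F w false x y = 0 := by
  by_contra hcon
  push_neg at hcon
  obtain ⟨h1, h2⟩ := hcon
  obtain ⟨C, hC, -⟩ := Finset.exists_ne_zero_of_sum_ne_zero h1
  obtain ⟨C', hC', -⟩ := Finset.exists_ne_zero_of_sum_ne_zero h2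
  rw [Finset.mem_filter] at hC hC'
  obtain ⟨hCxy, hCb⟩ := hC
  obtain ⟨hC'xy, hC'b⟩ := hC'
  rw [Fxy, Finset.mem_filter] at hCxy hC'xy
  obtain ⟨hCx, hCy⟩ := hCxy
  obtain ⟨hC'x, hC'y⟩ := hC'xy
  rw [Fx, Finset.mem_filter] at hCx hC'x
  obtain ⟨hC2, hCxeq⟩ := hCx
  obtain ⟨hC'2, hC'xeq⟩ := hC'x
  obtain ⟨hCF, hxV, -, hCeq, -⟩ := F2_spec F hC2
  obtain ⟨hC'F, -, -, hC'eq, -⟩ := F2_spec F hC'2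
  have hxunit : ({(x, true)} : Clause) ∈ F := by
    rw [← mem_unitVars F hup, ← hCxeq]
    exact hxV
  obtain ⟨τ, hu, hs1, hs2⟩ := h3 _ hxunit _ hCF _ hC'F
  obtain ⟨l, hl, hlτ⟩ := hu
  rw [Finset.mem_singleton] at hl
  subst hl
  -- τ x = true
  obtain ⟨m, hm, hmτ⟩ := hs1
  rw [hCeq] at hm
  rw [Finset.mem_insert, Finset.mem_singleton] at hm
  rcases hm with rfl | rfl
  · rw [hCxeq] at hmτ
    rw [hmτ] at hlτ
    exact Bool.false_ne_true hlτ
  · -- τ (yOf C) = bOf C = true, yOf C = y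
    obtain ⟨m', hm', hm'τ⟩ := hs2
    rw [hC'eq] at hm'
    rw [Finset.mem_insert, Finset.mem_singleton] at hm'
    rcases hm' with rfl | rfl
    · rw [hC'xeq] at hm'τ
      rw [hm'τ] at hlτ
      exact Bool.false_ne_true hlτ
    · rw [hCb, hCy] at hmτ
      rw [hC'b, hC'y] at hm'τ
      rw [hmτ] at hm'τ
      exact Bool.false_ne_true hm'τ.symm

lemma exists_x_for_y (F : Finset Clause) (w : Clause → ℕ) (hw : ∀ C ∈ F, 0 < w C)
    {y : ℕ} (hy : y ∈ V2set F) :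
    ∃ x ∈ unitVars F, gg F w true x y + gg F w false x y ≠ 0 := by
  rw [V2set, Finset.mem_sdiff] at hy
  obtain ⟨hsup, hynot⟩ := hy
  rw [Finset.mem_sup] at hsup
  obtain ⟨C, hC, hyC⟩ := hsup
  rw [Finset.mem_image] at hyC
  obtain ⟨l, hl, hly⟩ := hyC
  obtain ⟨hCF, hxV, hyV, hCeq, hxy⟩ := F2_spec F hC
  rw [hCeq, Finset.mem_insert, Finset.mem_singleton] at hl
  have hyOfC : yOf F C = y := by
    rcases hl with rfl | rfl
    · exact absurd (hly ▸ hxV) hynot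
    · exact hly
  refine ⟨xOf F C, hxV, ?_⟩
  have hmem : C ∈ (Fxy F (xOf F C) y).filter (fun C' => bOf F C' = bOf F C) := by
    rw [Finset.mem_filter, Fxy, Finset.mem_filter, Fx, Finset.mem_filter]
    exact ⟨⟨⟨hC, rfl⟩, hyOfC⟩, rfl⟩
  have hpos : 0 < gg F w (bOf F C) (xOf F C) y :=
    lt_of_lt_of_le (hw C hCF) (Finset.single_le_sum (fun i _ => Nat.zero_le _) hmem)
  cases hb : bOf F C
  · rw [hb] at hpos
    omega
  · rw [hb] at hpos
    omega

end Stmt17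

namespace Stmt17

lemma G2_fiber (F : Finset Clause) (w : Clause → ℕ) (τ : ℕ → Bool) (x : ℕ) :
    wt w (((F2set F).filter
        (fun C => τ (xOf F C) = false ∨ τ (yOf F C) = bOf F C)).filter
        (fun C => xOf F C = x))
      = if τ x then ∑ y ∈ V2set F, (if τ y then gg F w true x y else gg F w false x y)
        else dd F w x := by
  rw [Finset.filter_comm]
  cases hτx : τ x
  · -- τ x = false : all clauses of the fiber count
    rw [if_neg (by simp)]
    have heq : (((F2set F).filter (fun C => xOf F C = x)).filter
        (fun C => τ (xOf F C) = false ∨ τ (yOf F C) = bOf F C))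
        = (F2set F).filter (fun C => xOf F C = x) := by
      apply Finset.filter_true_of_mem
      intro C hC
      rw [Finset.mem_filter] at hC
      left
      rw [hC.2, hτx]
    rw [heq, ← wt_Fx F w x]
    rfl
  · -- τ x = true
    rw [if_pos rfl]
    have heq : (((F2set F).filter (fun C => xOf F C = x)).filter
        (fun C => τ (xOf F C) = false ∨ τ (yOf F C) = bOf F C))
        = ((F2set F).filter (fun C => xOf F C = x)).filter
            (fun C => τ (yOf F C) = bOf F C) := by
      apply Finset.filter_congr
      intro C hC
      rw [Finset.mem_filter] at hC
      rw [hC.2, hτx]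
      simp
    rw [heq]
    have hfib : ∑ C ∈ ((F2set F).filter (fun C => xOf F C = x)).filter
          (fun C => τ (yOf F C) = bOf F C), w C
        = ∑ y ∈ V2set F, ∑ C ∈ (((F2set F).filter (fun C => xOf F C = x)).filter
          (fun C => τ (yOf F C) = bOf F C)).filter (fun C => yOf F C = y), w C := by
      rw [Finset.sum_fiberwise_of_maps_to (g := yOf F) (t := V2set F)
        (fun C hC => yOf_mem_V2 F (Finset.mem_filter.1 (Finset.mem_filter.1 hC).1).1) w]
    show wt w _ = _
    rw [wt, hfib]
    apply Finset.sum_congr rfl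
    intro y _
    rw [Finset.filter_comm]
    -- now : sum over (Fxy-like).filter (τ (yOf C) = bOf C)
    cases hτy : τ y
    · rw [if_neg (by simp)]
      have heq2 : ((((F2set F).filter (fun C => xOf F C = x)).filter
            (fun C => yOf F C = y)).filter (fun C => τ (yOf F C) = bOf F C))
          = (((F2set F).filter (fun C => xOf F C = x)).filter
            (fun C => yOf F C = y)).filter (fun C => bOf F C = false) := by
        apply Finset.filter_congr
        intro C hC
        rw [Finset.mem_filter] at hC
        rw [hC.2, hτy, eq_comm]
      rw [heq2]
      rfl
    · rw [if_pos rfl]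
      have heq2 : ((((F2set F).filter (fun C => xOf F C = x)).filter
            (fun C => yOf F C = y)).filter (fun C => τ (yOf F C) = bOf F C))
          = (((F2set F).filter (fun C => xOf F C = x)).filter
            (fun C => yOf F C = y)).filter (fun C => bOf F C = true) := by
        apply Finset.filter_congr
        intro C hC
        rw [Finset.mem_filter] at hC
        rw [hC.2, hτy, eq_comm]
      rw [heq2]
      rfl

lemma master (F : Finset Clause) (w : Clause → ℕ) (hup : UnitPos F) (τ : ℕ → Bool) :
    ∑ x ∈ unitVars F, (if τ x then
        aw F w x + ∑ y ∈ V2set F, (if τ y then gg F w true x y else gg F w false x y)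
      else dd F w x)
      ≤ satWt w τ F := by
  classical
  set G1 : Finset Clause :=
    ((unitVars F).filter (fun x => τ x = true)).image (fun x => ({(x, true)} : Clause)) with hG1
  set G2 : Finset Clause :=
    (F2set F).filter (fun C => τ (xOf F C) = false ∨ τ (yOf F C) = bOf F C) with hG2
  have hG1F : G1 ⊆ F.filter (fun C => SatC τ C) := by
    intro C hC
    rw [hG1, Finset.mem_image] at hC
    obtain ⟨x, hx, rfl⟩ := hC
    rw [Finset.mem_filter] at hx ⊢
    exact ⟨(mem_unitVars F hup).1 hx.1, ⟨(x, true), Finset.mem_singleton_self _, hx.2⟩⟩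
  have hG2F : G2 ⊆ F.filter (fun C => SatC τ C) := by
    intro C hC
    rw [hG2, Finset.mem_filter] at hC
    obtain ⟨hC2, hsat⟩ := hC
    obtain ⟨hCF, hxV, hyV, hCeq, hxy⟩ := F2_spec F hC2
    rw [Finset.mem_filter]
    refine ⟨hCF, ?_⟩
    rcases hsat with h | h
    · refine ⟨(xOf F C, false), ?_, h⟩
      have : (xOf F C, false) ∈ ({(xOf F C, false), (yOf F C, bOf F C)} : Clause) :=
        Finset.mem_insert_self _ _
      rwa [← hCeq] at this
    · refine ⟨(yOf F C, bOf F C), ?_, h⟩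
      have : (yOf F C, bOf F C) ∈ ({(xOf F C, false), (yOf F C, bOf F C)} : Clause) :=
        Finset.mem_insert_of_mem (Finset.mem_singleton_self _)
      rwa [← hCeq] at this
  have hdisj : Disjoint G1 G2 := by
    rw [Finset.disjoint_left]
    rintro C hC1 hC2
    rw [hG1, Finset.mem_image] at hC1
    obtain ⟨x, hx, rfl⟩ := hC1
    rw [hG2, Finset.mem_filter] at hC2
    obtain ⟨-, -, -, hCeq, -⟩ := F2_spec F hC2.1
    have hm : (xOf F ({(x, true)} : Clause), false)
        ∈ ({(xOf F ({(x, true)} : Clause), false),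
            (yOf F ({(x, true)} : Clause), bOf F ({(x, true)} : Clause))} : Clause) :=
      Finset.mem_insert_self _ _
    rw [← hCeq, Finset.mem_singleton] at hm
    exact Bool.false_ne_true (congrArg Prod.snd hm)
  have hle : wt w (G1 ∪ G2) ≤ satWt w τ F :=
    Finset.sum_le_sum_of_subset (Finset.union_subset hG1F hG2F)
  rw [wt, Finset.sum_union hdisj] at hle
  have hwG1 : ∑ C ∈ G1, w C = ∑ x ∈ unitVars F, (if τ x then aw F w x else 0) := by
    rw [hG1, Finset.sum_image ?hinj]
    case hinj =>
      intro a _ b _ h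
      have h2 := Finset.singleton_injective h
      exact congrArg Prod.fst h2
    rw [Finset.sum_filter]
    apply Finset.sum_congr rfl
    intro x _
    rfl
  have hwG2 : ∑ C ∈ G2, w C = ∑ x ∈ unitVars F,
      (if τ x then ∑ y ∈ V2set F, (if τ y then gg F w true x y else gg F w false x y)
        else dd F w x) := by
    rw [hG2, ← Finset.sum_fiberwise_of_maps_to (g := xOf F) (t := unitVars F)
      (fun C hC => (F2_spec F (Finset.mem_filter.1 hC).1).2.1) w]
    apply Finset.sum_congr rfl
    intro x _
    exact G2_fiber F w τ x
  rw [hwG1, hwG2] at hle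
  rw [← Finset.sum_add_distrib] at hle
  refine le_trans (le_of_eq ?_) hle
  apply Finset.sum_congr rfl
  intro x _
  cases hτx : τ x <;> simp

end Stmt17

namespace Stmt17

noncomputable def Sg (F : Finset Clause) (w : Clause → ℕ) (x : ℕ) (A : Finset ℕ) : ℕ :=
  ∑ y ∈ V2set F, (if y ∈ A then gg F w true x y else gg F w false x y)

noncomputable def tauI (F : Finset Clause) (w : Clause → ℕ) (A : Finset ℕ) : ℕ → Bool :=
  fun v => if v ∈ unitVars F then decide (dd F w v ≤ aw F w v + Sg F w v A)
    else decide (v ∈ A)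

lemma tauI_pointwise (F : Finset Clause) (w : Clause → ℕ) (hup : UnitPos F) (A : Finset ℕ) :
    ∑ x ∈ unitVars F, max (aw F w x + Sg F w x A) (dd F w x)
      ≤ satWt w (tauI F w A) F := by
  refine le_trans (le_of_eq (Finset.sum_congr rfl ?_)) (master F w hup (tauI F w A))
  intro x hx
  have hxv : tauI F w A x = decide (dd F w x ≤ aw F w x + Sg F w x A) := if_pos hx
  have hsum : ∑ y ∈ V2set F,
      (if tauI F w A y then gg F w true x y else gg F w false x y) = Sg F w x A := by
    apply Finset.sum_congr rfl
    intro y hymem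
    have hyv : tauI F w A y = decide (y ∈ A) := if_neg (V2_not_unit F hymem)
    rw [hyv]
    simp only [decide_eq_true_eq]
  rcases le_or_gt (dd F w x) (aw F w x + Sg F w x A) with hd | hd
  · have hτ : tauI F w A x = true := by rw [hxv]; exact decide_eq_true hd
    rw [if_pos hτ, hsum, max_eq_left hd]
  · have hτ : tauI F w A x = false := by
      rw [hxv]
      exact decide_eq_false (not_le.2 hd)
    rw [if_neg (by rw [hτ]; exact Bool.false_ne_true), max_eq_right (le_of_lt hd)]

lemma arith_i {a d ww r : ℝ} (ha : 1 ≤ a) (hw : 1 ≤ ww) (hwd : ww ≤ d) (hr : r = (d - ww)/2) :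
    2/3*(a+d) + 1/6 ≤ 1/2 * max (a+ww+r) d + 1/2 * max (a+r) d := by
  rcases max_cases (a+ww+r) d with ⟨h1, h1'⟩ | ⟨h1, h1'⟩ <;>
    rcases max_cases (a+r) d with ⟨h2, h2'⟩ | ⟨h2, h2'⟩ <;> rw [h1, h2] <;> linarith

lemma Exp_x (F : Finset Clause) (w : Clause → ℕ) (h3 : Sat3 F) (hup : UnitPos F)
    {x : ℕ} (hax : 1 ≤ aw F w x) :
    (2:ℝ)/3 * ((aw F w x : ℝ) + (dd F w x : ℝ)) + 1/6
      ≤ Ex (V2set F) (fun _ => (1:ℝ)/2)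
          (fun A => max ((aw F w x : ℝ) + (Sg F w x A : ℝ)) ((dd F w x : ℝ))) := by
  set p : ℕ → ℝ := fun _ => (1:ℝ)/2 with hp
  have h0 : ∀ v, (0:ℝ) ≤ p v := fun v => by norm_num [hp]
  have h1 : ∀ v, p v ≤ 1 := fun v => by norm_num [hp]
  have haxR : (1:ℝ) ≤ (aw F w x : ℝ) := by exact_mod_cast hax
  by_cases hd0 : dd F w x = 0
  · have hSg : ∀ A, Sg F w x A = 0 := by
      intro A
      apply Finset.sum_eq_zero
      intro y hy
      have : gg F w true x y + gg F w false x y = 0 :=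
        (Finset.sum_eq_zero_iff.1 hd0) y hy
      rcases Nat.eq_zero_of_add_eq_zero this with ⟨he1, he2⟩
      · rw [he2, he1]  -- careful: order
        simp
    have hcongr : Ex (V2set F) p
        (fun A => max ((aw F w x : ℝ) + (Sg F w x A : ℝ)) ((dd F w x : ℝ)))
        = Ex (V2set F) p (fun _ => (aw F w x : ℝ)) := by
      apply Ex_congr
      intro A _
      rw [hSg A, hd0]
      simp only [Nat.cast_zero, add_zero]
      exact max_eq_left (Nat.cast_nonneg _)
    rw [hcongr, Ex_const, hd0]
    simp only [Nat.cast_zero, add_zero]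
    linarith
  · -- there is a y* with positive group weight
    obtain ⟨ys, hys, hgys⟩ := Finset.exists_ne_zero_of_sum_ne_zero hd0
    set gT := gg F w true x ys with hgT
    set gF := gg F w false x ys with hgF
    have hgstar : 1 ≤ gT + gF := Nat.one_le_iff_ne_zero.2 hgys
    have hgled : gT + gF ≤ dd F w x :=
      Finset.single_le_sum (f := fun y => gg F w true x y + gg F w false x y)
        (fun i _ => Nat.zero_le _) hys
    set Rg : Finset ℕ → ℕ :=
      fun A => ∑ y ∈ (V2set F).erase ys, (if y ∈ A then gg F w true x y else gg F w false x y)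
      with hRg
    have hSgins : ∀ A ∈ ((V2set F).erase ys).powerset, Sg F w x (insert ys A) = gT + Rg A := by
      intro A hA
      have hysA : ys ∉ A := fun h =>
        (Finset.notMem_erase ys (V2set F)) (Finset.mem_powerset.1 hA h)
      rw [Sg, ← Finset.add_sum_erase _ _ hys]
      congr 1
      · rw [if_pos (Finset.mem_insert_self _ _)]
      · apply Finset.sum_congr rfl
        intro y hy
        have hyys : y ≠ ys := Finset.ne_of_mem_erase hy
        congr 1
        simp [Finset.mem_insert, hyys]
    have hSgA : ∀ A ∈ ((V2set F).erase ys).powerset, Sg F w x A = gF + Rg A := by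
      intro A hA
      have hysA : ys ∉ A := fun h =>
        (Finset.notMem_erase ys (V2set F)) (Finset.mem_powerset.1 hA h)
      rw [Sg, ← Finset.add_sum_erase _ _ hys]
      congr 1
      rw [if_neg hysA]
    rw [Ex_erase hys]
    have e1 : Ex ((V2set F).erase ys) p
        (fun A => max ((aw F w x : ℝ) + (Sg F w x (insert ys A) : ℝ)) ((dd F w x : ℝ)))
        = Ex ((V2set F).erase ys) p
          (fun A => max (((aw F w x : ℝ) + (gT : ℝ)) + (Rg A : ℝ)) ((dd F w x : ℝ))) := by
      apply Ex_congr
      intro A hA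
      rw [hSgins A hA]
      push_cast
      ring_nf
    have e2 : Ex ((V2set F).erase ys) p
        (fun A => max ((aw F w x : ℝ) + (Sg F w x A : ℝ)) ((dd F w x : ℝ)))
        = Ex ((V2set F).erase ys) p
          (fun A => max (((aw F w x : ℝ) + (gF : ℝ)) + (Rg A : ℝ)) ((dd F w x : ℝ))) := by
      apply Ex_congr
      intro A hA
      rw [hSgA A hA]
      push_cast
      ring_nf
    rw [e1, e2]
    -- expected value of Rg
    have hERg : Ex ((V2set F).erase ys) p (fun A => (Rg A : ℝ))
        = ((dd F w x : ℝ) - ((gT : ℝ) + (gF : ℝ))) / 2 := by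
      have hcast : ∀ A, ((Rg A : ℕ) : ℝ)
          = ∑ y ∈ (V2set F).erase ys,
              (if y ∈ A then ((gg F w true x y : ℕ) : ℝ) else ((gg F w false x y : ℕ) : ℝ)) := by
        intro A
        rw [hRg]
        push_cast [apply_ite (fun n : ℕ => (n : ℝ))]
        rfl
      rw [Ex_congr (fun A _ => hcast A), Ex_sum]
      have hterm : ∀ y ∈ (V2set F).erase ys,
          Ex ((V2set F).erase ys) p
            (fun A => if y ∈ A then ((gg F w true x y : ℕ) : ℝ) else ((gg F w false x y : ℕ) : ℝ))
          = ((gg F w true x y : ℝ) + (gg F w false x y : ℝ))/2 := by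
        intro y hy
        rw [Ex_ite hy]
        have : p y = 1/2 := rfl
        rw [this]
        ring
      rw [Finset.sum_congr rfl hterm]
      have hsplit : (gT : ℝ) + (gF : ℝ) + ∑ y ∈ (V2set F).erase ys,
          ((gg F w true x y : ℝ) + (gg F w false x y : ℝ)) = (dd F w x : ℝ) := by
        rw [hgT, hgF]
        have := Finset.add_sum_erase (V2set F)
          (fun y => gg F w true x y + gg F w false x y) hys
        have hc : ((∑ y ∈ V2set F, (gg F w true x y + gg F w false x y) : ℕ) : ℝ)
            = (dd F w x : ℝ) := by rw [dd]
        rw [← hc, ← this]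
        push_cast
        ring
      rw [← Finset.sum_div]
      rw [show ∑ y ∈ (V2set F).erase ys, ((gg F w true x y : ℝ) + (gg F w false x y : ℝ))
        = (dd F w x : ℝ) - ((gT:ℝ) + (gF:ℝ)) by linarith [hsplit]]
    -- E max ≥ max (c + ERg) d, twice
    have hmaxbound : ∀ c : ℝ, max (c + (((dd F w x : ℝ) - ((gT:ℝ) + (gF:ℝ)))/2)) ((dd F w x : ℝ))
        ≤ Ex ((V2set F).erase ys) p (fun A => max (c + (Rg A : ℝ)) ((dd F w x : ℝ))) := by
      intro c
      apply max_le
      · have : Ex ((V2set F).erase ys) p (fun A => c + (Rg A : ℝ))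
            ≤ Ex ((V2set F).erase ys) p (fun A => max (c + (Rg A : ℝ)) ((dd F w x : ℝ))) :=
          Ex_mono h0 h1 (fun A _ => le_max_left _ _)
        rwa [show (fun A => c + (Rg A : ℝ)) = (fun A => c + (Rg A:ℝ)) from rfl,
          Ex_add _ _ (fun _ => c) (fun A => (Rg A : ℝ)), Ex_const, hERg] at this
      · have : Ex ((V2set F).erase ys) p (fun _ => (dd F w x : ℝ))
            ≤ Ex ((V2set F).erase ys) p (fun A => max (c + (Rg A : ℝ)) ((dd F w x : ℝ))) :=
          Ex_mono h0 h1 (fun A _ => le_max_right _ _)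
        rwa [Ex_const] at this
    have hppt : p ys = 1/2 := rfl
    rw [hppt]
    have hb1 := hmaxbound ((aw F w x : ℝ) + (gT : ℝ))
    have hb2 := hmaxbound ((aw F w x : ℝ) + (gF : ℝ))
    -- one of gT, gF is zero; arithmetic
    have harith : 2/3*((aw F w x : ℝ) + (dd F w x : ℝ)) + 1/6
        ≤ 1/2 * max (((aw F w x : ℝ) + (gT:ℝ)) + (((dd F w x : ℝ) - ((gT:ℝ) + (gF:ℝ)))/2)) ((dd F w x : ℝ))
          + 1/2 * max (((aw F w x : ℝ) + (gF:ℝ)) + (((dd F w x : ℝ) - ((gT:ℝ) + (gF:ℝ)))/2)) ((dd F w x : ℝ)) := by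
      have hgsR : (1:ℝ) ≤ (gT:ℝ) + (gF:ℝ) := by exact_mod_cast hgstar
      have hgdR : (gT:ℝ) + (gF:ℝ) ≤ (dd F w x : ℝ) := by exact_mod_cast hgled
      rcases gg_or F w h3 hup x ys with hzero | hzero
      · -- gT = 0
        have hz : (gT:ℝ) = 0 := by rw [hgT, hzero]; norm_num
        rw [hz]
        have := arith_i (a := (aw F w x : ℝ)) (d := (dd F w x : ℝ)) (ww := (gF:ℝ))
          (r := ((dd F w x : ℝ) - (0 + (gF:ℝ)))/2) haxR (by linarith) (by linarith) (by ring)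
        rw [add_comm (1/2 * max ((aw F w x : ℝ) + (gF:ℝ) + _) _)] at this
        convert this using 3 <;> ring_nf
      · -- gF = 0
        have hz : (gF:ℝ) = 0 := by rw [hgF, hzero]; norm_num
        rw [hz]
        have := arith_i (a := (aw F w x : ℝ)) (d := (dd F w x : ℝ)) (ww := (gT:ℝ))
          (r := ((dd F w x : ℝ) - ((gT:ℝ) + 0))/2) haxR (by linarith) (by linarith) (by ring)
        convert this using 3 <;> ring_nf
    calc 2/3*((aw F w x : ℝ) + (dd F w x : ℝ)) + 1/6 ≤ _ := harith
    _ ≤ 1/2 * Ex ((V2set F).erase ys) p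
          (fun A => max (((aw F w x : ℝ) + (gT : ℝ)) + (Rg A : ℝ)) ((dd F w x : ℝ)))
        + (1 - 1/2) * Ex ((V2set F).erase ys) p
          (fun A => max (((aw F w x : ℝ) + (gF : ℝ)) + (Rg A : ℝ)) ((dd F w x : ℝ))) := by
      have h12 : (1:ℝ) - 1/2 = 1/2 := by norm_num
      rw [h12]
      have hnn : (0:ℝ) ≤ 1/2 := by norm_num
      exact add_le_add (mul_le_mul_of_nonneg_left hb1 hnn) (mul_le_mul_of_nonneg_left hb2 hnn)

end Stmt17

namespace Stmt17

lemma wt_hard (F : Finset Clause) (w : Clause → ℕ) (hup : UnitPos F) :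
    wt w (F.filter (IsHard F)) = (∑ x ∈ unitVars F, aw F w x) + wt w (F2set F) := by
  classical
  have h0 : F.filter (IsHard F)
      = F.filter (fun C => (∃ x, C = ({(x, true)} : Clause)))
        ∪ F.filter (fun C => ∃ x ∈ unitVars F, ∃ y ∉ unitVars F, ∃ b : Bool,
            C = ({(x, false), (y, b)} : Clause)) := by
    rw [← Finset.filter_or]
    apply Finset.filter_congr
    intro C _
    rfl
  have hH1 : F.filter (fun C => (∃ x, C = ({(x, true)} : Clause)))
      = (unitVars F).image (fun x => ({(x, true)} : Clause)) := by
    ext C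
    simp only [Finset.mem_filter, Finset.mem_image]
    constructor
    · rintro ⟨hCF, x, rfl⟩
      exact ⟨x, (mem_unitVars F hup).2 hCF, rfl⟩
    · rintro ⟨x, hx, rfl⟩
      exact ⟨(mem_unitVars F hup).1 hx, x, rfl⟩
  have hF2 : F.filter (fun C => ∃ x ∈ unitVars F, ∃ y ∉ unitVars F, ∃ b : Bool,
      C = ({(x, false), (y, b)} : Clause)) = F2set F := rfl
  have hdisj : Disjoint ((unitVars F).image (fun x => ({(x, true)} : Clause))) (F2set F) := by
    rw [Finset.disjoint_left]
    rintro C hC1 hC2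
    rw [Finset.mem_image] at hC1
    obtain ⟨x, hx, rfl⟩ := hC1
    obtain ⟨-, -, -, hCeq, -⟩ := F2_spec F hC2
    have hm : (xOf F ({(x, true)} : Clause), false)
        ∈ ({(xOf F ({(x, true)} : Clause), false),
            (yOf F ({(x, true)} : Clause), bOf F ({(x, true)} : Clause))} : Clause) :=
      Finset.mem_insert_self _ _
    rw [← hCeq, Finset.mem_singleton] at hm
    exact Bool.false_ne_true (congrArg Prod.snd hm)
  rw [h0, hH1, hF2, wt, Finset.sum_union hdisj,
    Finset.sum_image (fun a _ b _ h => congrArg Prod.fst (Finset.singleton_injective h))]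
  rfl

lemma aw_ge_one (F : Finset Clause) (w : Clause → ℕ) (hw : ∀ C ∈ F, 0 < w C)
    (hup : UnitPos F) {x : ℕ} (hx : x ∈ unitVars F) : 1 ≤ aw F w x :=
  hw _ ((mem_unitVars F hup).1 hx)

lemma strat_i (F : Finset Clause) (w : Clause → ℕ) (hw : ∀ C ∈ F, 0 < w C)
    (h3 : Sat3 F) (hup : UnitPos F) :
    ∃ τ : ℕ → Bool,
      (2:ℝ)/3 * (wt w (F.filter (IsHard F)) : ℝ) + ((unitVars F).card : ℝ)/6
        ≤ (satWt w τ F : ℝ) := by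
  classical
  set p : ℕ → ℝ := fun _ => (1:ℝ)/2 with hp
  have h0 : ∀ v, (0:ℝ) ≤ p v := fun v => by norm_num [hp]
  have h1 : ∀ v, p v ≤ 1 := fun v => by norm_num [hp]
  set f : Finset ℕ → ℝ := fun A => ∑ x ∈ unitVars F,
    max ((aw F w x : ℝ) + (Sg F w x A : ℝ)) ((dd F w x : ℝ)) with hf
  have hEx : (2:ℝ)/3 * (wt w (F.filter (IsHard F)) : ℝ) + ((unitVars F).card : ℝ)/6
      ≤ Ex (V2set F) p f := by
    rw [hf, Ex_sum]
    have hterm : ∀ x ∈ unitVars F,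
        (2:ℝ)/3 * ((aw F w x : ℝ) + (dd F w x : ℝ)) + 1/6
          ≤ Ex (V2set F) p
            (fun A => max ((aw F w x : ℝ) + (Sg F w x A : ℝ)) ((dd F w x : ℝ))) :=
      fun x hx => Exp_x F w h3 hup (aw_ge_one F w hw hup hx)
    have hle := Finset.sum_le_sum hterm
    refine le_trans (le_of_eq ?_) hle
    have hsum : ∑ i ∈ unitVars F, ((2:ℝ)/3 * ((aw F w i : ℝ) + (dd F w i : ℝ)) + 1/6)
        = 2/3 * (∑ i ∈ unitVars F, ((aw F w i : ℝ) + (dd F w i : ℝ)))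
          + ((unitVars F).card : ℝ)/6 := by
      rw [Finset.sum_add_distrib, Finset.sum_const, ← Finset.mul_sum]
      push_cast
      ring
    rw [hsum]
    have hwt : (wt w (F.filter (IsHard F)) : ℝ)
        = ∑ i ∈ unitVars F, ((aw F w i : ℝ) + (dd F w i : ℝ)) := by
      rw [wt_hard F w hup, wt_F2 F w, Finset.sum_add_distrib]
      push_cast
      ring
    rw [hwt]
  obtain ⟨A, -, hAle⟩ := exists_Ex_le h0 h1 f
  refine ⟨tauI F w A, ?_⟩
  have hcast : f A = ((∑ x ∈ unitVars F, max (aw F w x + Sg F w x A) (dd F w x) : ℕ) : ℝ) := by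
    rw [hf]
    push_cast [Nat.cast_max]
    rfl
  have hfinal : f A ≤ (satWt w (tauI F w A) F : ℝ) := by
    rw [hcast]
    exact_mod_cast tauI_pointwise F w hup A
  linarith

end Stmt17

namespace Stmt17

noncomputable def uP (F : Finset Clause) (w : Clause → ℕ) (y : ℕ) (U : Finset ℕ) : ℕ :=
  ∑ x ∈ unitVars F, (if x ∈ U then gg F w true x y else 0)

noncomputable def uN (F : Finset Clause) (w : Clause → ℕ) (y : ℕ) (U : Finset ℕ) : ℕ :=
  ∑ x ∈ unitVars F, (if x ∈ U then gg F w false x y else 0)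

noncomputable def tauU (F : Finset Clause) (w : Clause → ℕ) (U : Finset ℕ) : ℕ → Bool :=
  fun v => if v ∈ unitVars F then decide (v ∈ U) else decide (uN F w v U ≤ uP F w v U)

lemma tauU_pointwise (F : Finset Clause) (w : Clause → ℕ) (hup : UnitPos F) (U : Finset ℕ) :
    (∑ x ∈ unitVars F, (if x ∈ U then aw F w x else 0))
      + (∑ x ∈ unitVars F, (if x ∈ U then 0 else dd F w x))
      + (∑ y ∈ V2set F, max (uP F w y U) (uN F w y U))
    ≤ satWt w (tauU F w U) F := by
  refine le_trans (le_of_eq ?_) (master F w hup (tauU F w U))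
  have hτx : ∀ x ∈ unitVars F, tauU F w U x = decide (x ∈ U) := fun x hx => if_pos hx
  have hτy : ∀ y ∈ V2set F, tauU F w U y = decide (uN F w y U ≤ uP F w y U) :=
    fun y hy => if_neg (V2_not_unit F hy)
  set My : ℕ → ℕ := fun x => ∑ y ∈ V2set F,
    (if tauU F w U y then gg F w true x y else gg F w false x y) with hMy
  have hstep1 : ∑ x ∈ unitVars F, (if tauU F w U x then aw F w x + My x else dd F w x)
      = ∑ x ∈ unitVars F, (if x ∈ U then aw F w x + My x else dd F w x) := by
    apply Finset.sum_congr rfl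
    intro x hx
    rw [hτx x hx]
    by_cases hU : x ∈ U
    · rw [if_pos (decide_eq_true hU), if_pos hU]
    · rw [if_neg (by rw [decide_eq_false hU]; exact Bool.false_ne_true), if_neg hU]
  have hstep2 : ∑ x ∈ unitVars F, (if x ∈ U then aw F w x + My x else dd F w x)
      = (∑ x ∈ unitVars F, (if x ∈ U then aw F w x else 0))
        + (∑ x ∈ unitVars F, (if x ∈ U then 0 else dd F w x))
        + (∑ x ∈ unitVars F, (if x ∈ U then My x else 0)) := by
    rw [← Finset.sum_add_distrib, ← Finset.sum_add_distrib]
    apply Finset.sum_congr rfl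
    intro x _
    by_cases hU : x ∈ U <;> simp [hU]
  have hstep3 : ∑ x ∈ unitVars F, (if x ∈ U then My x else 0)
      = ∑ y ∈ V2set F, max (uP F w y U) (uN F w y U) := by
    have h1 : ∀ x, (if x ∈ U then My x else 0)
        = ∑ y ∈ V2set F, (if x ∈ U then
            (if tauU F w U y then gg F w true x y else gg F w false x y) else 0) := by
      intro x
      by_cases hU : x ∈ U <;> simp [hU, hMy]
    rw [Finset.sum_congr rfl (fun x _ => h1 x), Finset.sum_comm]
    apply Finset.sum_congr rfl
    intro y hy
    rw [hτy y hy]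
    rcases le_or_gt (uN F w y U) (uP F w y U) with hle | hlt
    · rw [max_eq_left hle]
      have hbr : ∀ x, (if (decide (uN F w y U ≤ uP F w y U) : Bool)
          then gg F w true x y else gg F w false x y) = gg F w true x y :=
        fun x => if_pos (decide_eq_true hle)
      have hterm : ∀ x, (if x ∈ U then (if (decide (uN F w y U ≤ uP F w y U) : Bool)
          then gg F w true x y else gg F w false x y) else 0)
          = (if x ∈ U then gg F w true x y else 0) := fun x => by rw [hbr x]
      rw [Finset.sum_congr rfl (fun x _ => hterm x)]
      rfl
    · rw [max_eq_right (le_of_lt hlt)]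
      have hbr : ∀ x, (if (decide (uN F w y U ≤ uP F w y U) : Bool)
          then gg F w true x y else gg F w false x y) = gg F w false x y :=
        fun x => if_neg (by rw [decide_eq_false (not_le.2 hlt)]; exact Bool.false_ne_true)
      have hterm : ∀ x, (if x ∈ U then (if (decide (uN F w y U ≤ uP F w y U) : Bool)
          then gg F w true x y else gg F w false x y) else 0)
          = (if x ∈ U then gg F w false x y else 0) := fun x => by rw [hbr x]
      rw [Finset.sum_congr rfl (fun x _ => hterm x)]
      rfl
  rw [← hstep3, ← hstep2, ← hstep1]

lemma max_eq_half (a b : ℝ) : max a b = (a + b + |a - b|)/2 := by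
  rcases le_total a b with h | h
  · rw [max_eq_right h, abs_of_nonpos (by linarith)]
    ring
  · rw [max_eq_left h, abs_of_nonneg (by linarith)]
    ring

lemma Exp_y (F : Finset Clause) (w : Clause → ℕ) (hw : ∀ C ∈ F, 0 < w C)
    (h3 : Sat3 F) (hup : UnitPos F) {y : ℕ} (hy : y ∈ V2set F) :
    (1:ℝ)/3 * (∑ x ∈ unitVars F, ((gg F w true x y : ℝ) + (gg F w false x y : ℝ))) + 2/9
      ≤ Ex (unitVars F) (fun _ => (2:ℝ)/3)
          (fun U => max ((uP F w y U : ℝ)) ((uN F w y U : ℝ))) := by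
  set p : ℕ → ℝ := fun _ => (2:ℝ)/3 with hp
  have h0 : ∀ v, (0:ℝ) ≤ p v := fun v => by norm_num [hp]
  have h1 : ∀ v, p v ≤ 1 := fun v => by norm_num [hp]
  set v : ℕ → ℤ := fun x => (gg F w true x y : ℤ) - (gg F w false x y : ℤ) with hv
  set t : Finset ℕ := (unitVars F).filter (fun x => v x ≠ 0) with ht
  have hts : t ⊆ unitVars F := Finset.filter_subset _ _
  have htv : ∀ x ∈ t, v x ≠ 0 := fun x hx => (Finset.mem_filter.1 hx).2
  have htne : t.Nonempty := by
    obtain ⟨x0, hx0, hne⟩ := exists_x_for_y F w hw hy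
    refine ⟨x0, Finset.mem_filter.2 ⟨hx0, ?_⟩⟩
    rcases gg_or F w h3 hup x0 y with hz | hz
    · rw [hv]
      simp only [hz, Nat.cast_zero, zero_sub, ne_eq, neg_eq_zero, Nat.cast_eq_zero]
      rw [hz] at hne
      omega
    · rw [hv]
      simp only [hz, Nat.cast_zero, sub_zero, ne_eq, Nat.cast_eq_zero]
      rw [hz] at hne
      omega
  -- identity: uP - uN = Tsum
  have hdiff : ∀ U : Finset ℕ, ((uP F w y U : ℝ)) - ((uN F w y U : ℝ))
      = ((Tsum t v U : ℤ) : ℝ) := by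
    intro U
    have h2 : Tsum t v U = Tsum (unitVars F) v U := by
      rw [Tsum, Tsum, ht]
      apply Finset.sum_filter_of_ne
      intro x _ hne hvz
      exact hne (by rw [hvz]; simp)
    rw [h2, Tsum]
    push_cast
    rw [uP, uN]
    push_cast
    rw [← Finset.sum_sub_distrib]
    apply Finset.sum_congr rfl
    intro x _
    by_cases hxU : x ∈ U
    · rw [if_pos hxU, if_pos hxU, if_pos hxU, hv]
      push_cast
      ring
    · rw [if_neg hxU, if_neg hxU, if_neg hxU]
      ring
  have hsum2 : ∀ U : Finset ℕ, ((uP F w y U : ℝ)) + ((uN F w y U : ℝ))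
      = ∑ x ∈ unitVars F,
          (if x ∈ U then ((gg F w true x y : ℝ) + (gg F w false x y : ℝ)) else 0) := by
    intro U
    rw [uP, uN]
    push_cast
    rw [← Finset.sum_add_distrib]
    apply Finset.sum_congr rfl
    intro x _
    by_cases hxU : x ∈ U
    · rw [if_pos hxU, if_pos hxU, if_pos hxU]
    · rw [if_neg hxU, if_neg hxU, if_neg hxU]
      ring
  have hmax : ∀ U : Finset ℕ, max ((uP F w y U : ℝ)) ((uN F w y U : ℝ))
      = (1:ℝ)/2 * ((((uP F w y U : ℝ)) + ((uN F w y U : ℝ))) + |((Tsum t v U : ℤ) : ℝ)|) := by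
    intro U
    rw [max_eq_half, ← hdiff U]
    ring
  rw [Ex_congr (fun U _ => hmax U), Ex_const_mul]
  rw [Ex_add]
  have hE1 : Ex (unitVars F) p (fun U => ((uP F w y U : ℝ)) + ((uN F w y U : ℝ)))
      = 2/3 * (∑ x ∈ unitVars F, ((gg F w true x y : ℝ) + (gg F w false x y : ℝ))) := by
    rw [Ex_congr (fun U _ => hsum2 U), Ex_sum]
    rw [Finset.mul_sum]
    apply Finset.sum_congr rfl
    intro x hx
    rw [Ex_ite hx]
    have hpx : p x = 2/3 := rfl
    rw [hpx]
    ring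
  have hE2 : (4:ℝ)/9 ≤ Ex (unitVars F) p (fun U => |((Tsum t v U : ℤ) : ℝ)|) :=
    abs_Tsum_ge (unitVars F) t hts htne v htv
  rw [hE1]
  linarith

end Stmt17

namespace Stmt17

lemma strat_ii (F : Finset Clause) (w : Clause → ℕ) (hw : ∀ C ∈ F, 0 < w C)
    (h3 : Sat3 F) (hup : UnitPos F) :
    ∃ τ : ℕ → Bool,
      (2:ℝ)/3 * (wt w (F.filter (IsHard F)) : ℝ) + (2:ℝ)/9 * ((V2set F).card : ℝ)
        ≤ (satWt w τ F : ℝ) := by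
  classical
  set p : ℕ → ℝ := fun _ => (2:ℝ)/3 with hp
  have h0 : ∀ v, (0:ℝ) ≤ p v := fun v => by norm_num [hp]
  have h1 : ∀ v, p v ≤ 1 := fun v => by norm_num [hp]
  set f : Finset ℕ → ℝ := fun U =>
    (∑ x ∈ unitVars F, (if x ∈ U then (aw F w x : ℝ) else 0))
    + (∑ x ∈ unitVars F, (if x ∈ U then (0:ℝ) else (dd F w x : ℝ)))
    + (∑ y ∈ V2set F, max ((uP F w y U : ℝ)) ((uN F w y U : ℝ))) with hf
  have hEx : (2:ℝ)/3 * (wt w (F.filter (IsHard F)) : ℝ) + (2:ℝ)/9 * ((V2set F).card : ℝ)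
      ≤ Ex (unitVars F) p f := by
    have hsplit : Ex (unitVars F) p f
        = Ex (unitVars F) p (fun U => ∑ x ∈ unitVars F, (if x ∈ U then (aw F w x : ℝ) else 0))
        + Ex (unitVars F) p (fun U => ∑ x ∈ unitVars F, (if x ∈ U then (0:ℝ) else (dd F w x : ℝ)))
        + Ex (unitVars F) p (fun U => ∑ y ∈ V2set F, max ((uP F w y U : ℝ)) ((uN F w y U : ℝ))) := by
      rw [hf, Ex_add, Ex_add]
    have hE1 : Ex (unitVars F) p (fun U => ∑ x ∈ unitVars F, (if x ∈ U then (aw F w x : ℝ) else 0))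
        = 2/3 * ∑ x ∈ unitVars F, (aw F w x : ℝ) := by
      rw [Ex_sum, Finset.mul_sum]
      apply Finset.sum_congr rfl
      intro x hx
      rw [Ex_ite hx]
      have hpx : p x = 2/3 := rfl
      rw [hpx]; ring
    have hE2 : Ex (unitVars F) p (fun U => ∑ x ∈ unitVars F, (if x ∈ U then (0:ℝ) else (dd F w x : ℝ)))
        = 1/3 * ∑ x ∈ unitVars F, (dd F w x : ℝ) := by
      rw [Ex_sum, Finset.mul_sum]
      apply Finset.sum_congr rfl
      intro x hx
      rw [Ex_ite hx]
      have hpx : p x = 2/3 := rfl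
      rw [hpx]; ring
    have hE3 : (1:ℝ)/3 * (∑ y ∈ V2set F, ∑ x ∈ unitVars F,
          ((gg F w true x y : ℝ) + (gg F w false x y : ℝ))) + 2/9 * ((V2set F).card : ℝ)
        ≤ Ex (unitVars F) p (fun U => ∑ y ∈ V2set F, max ((uP F w y U : ℝ)) ((uN F w y U : ℝ))) := by
      rw [Ex_sum]
      have hterm := fun y (hy : y ∈ V2set F) => Exp_y F w hw h3 hup hy
      have hle := Finset.sum_le_sum hterm
      refine le_trans (le_of_eq ?_) hle
      rw [Finset.sum_add_distrib, Finset.sum_const, ← Finset.mul_sum]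
      push_cast
      ring
    have hsum_dd : ∑ x ∈ unitVars F, (dd F w x : ℝ) = (wt w (F2set F) : ℝ) := by
      rw [wt_F2 F w]
      push_cast
      rfl
    have hsum_yx : ∑ y ∈ V2set F, ∑ x ∈ unitVars F,
        ((gg F w true x y : ℝ) + (gg F w false x y : ℝ)) = (wt w (F2set F) : ℝ) := by
      rw [Finset.sum_comm, ← hsum_dd]
      apply Finset.sum_congr rfl
      intro x _
      rw [dd]
      push_cast
      rfl
    rw [hsplit, hE1, hE2, hsum_dd]
    have hwt : (wt w (F.filter (IsHard F)) : ℝ)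
        = (∑ x ∈ unitVars F, (aw F w x : ℝ)) + (wt w (F2set F) : ℝ) := by
      rw [wt_hard F w hup]
      push_cast
      rfl
    rw [hwt]
    rw [hsum_yx] at hE3
    linarith
  obtain ⟨U, -, hUle⟩ := exists_Ex_le h0 h1 f
  refine ⟨tauU F w U, ?_⟩
  have hcast : f U = (((∑ x ∈ unitVars F, (if x ∈ U then aw F w x else 0))
      + (∑ x ∈ unitVars F, (if x ∈ U then 0 else dd F w x))
      + (∑ y ∈ V2set F, max (uP F w y U) (uN F w y U)) : ℕ) : ℝ) := by
    rw [hf]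
    push_cast [Nat.cast_max, apply_ite (fun n : ℕ => (n : ℝ))]
    rfl
  have hfinal : f U ≤ (satWt w (tauU F w U) F : ℝ) := by
    rw [hcast]
    exact_mod_cast tauU_pointwise F w hup U
  linarith

end Stmt17

namespace Stmt17

noncomputable def failP (p : ℕ → ℝ) (l : ℕ × Bool) : ℝ := if l.2 then 1 - p l.1 else p l.1

lemma Ex_allfail (p : ℕ → ℝ) (L : Finset (ℕ × Bool)) :
    ∀ (amb : Finset ℕ), (∀ l ∈ L, l.1 ∈ amb) →
      (∀ l ∈ L, ∀ l' ∈ L, l.1 = l'.1 → l = l') →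
      Ex amb p (fun A => ∏ l ∈ L, (if (decide (l.1 ∈ A)) = l.2 then (0:ℝ) else 1))
        = ∏ l ∈ L, failP p l := by
  induction L using Finset.induction_on with
  | empty =>
    intro amb _ _
    rw [Finset.prod_empty]
    have : Ex amb p (fun A => ∏ l ∈ (∅ : Finset (ℕ × Bool)),
        (if (decide (l.1 ∈ A)) = l.2 then (0:ℝ) else 1)) = Ex amb p (fun _ => (1:ℝ)) :=
      Ex_congr fun A _ => Finset.prod_empty
    rw [this, Ex_const]
  | @insert a s hl ih =>
    intro amb hvars hdist
    have hamem : a.1 ∈ amb := hvars a (Finset.mem_insert_self _ _)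
    have hrest_ne : ∀ l ∈ s, l.1 ≠ a.1 := by
      intro l hls heq
      exact hl (by
        have := hdist l (Finset.mem_insert_of_mem hls) a (Finset.mem_insert_self _ _) heq
        rwa [← this])
    have hvars' : ∀ l ∈ s, l.1 ∈ amb.erase a.1 := fun l hls =>
      Finset.mem_erase.2 ⟨hrest_ne l hls, hvars l (Finset.mem_insert_of_mem hls)⟩
    have hdist' : ∀ l ∈ s, ∀ l' ∈ s, l.1 = l'.1 → l = l' := fun l hls l' hls' =>
      hdist l (Finset.mem_insert_of_mem hls) l' (Finset.mem_insert_of_mem hls')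
    have ihs := ih (amb.erase a.1) hvars' hdist'
    rw [Ex_erase hamem, Finset.prod_insert hl]
    -- rewrite the two branch integrands
    have hins : Ex (amb.erase a.1) p (fun A => ∏ l ∈ insert a s,
        (if (decide (l.1 ∈ insert a.1 A)) = l.2 then (0:ℝ) else 1))
        = Ex (amb.erase a.1) p (fun A => (if true = a.2 then (0:ℝ) else 1) *
            ∏ l ∈ s, (if (decide (l.1 ∈ A)) = l.2 then (0:ℝ) else 1)) := by
      apply Ex_congr
      intro A hA
      rw [Finset.prod_insert hl]
      congr 1
      · have : decide (a.1 ∈ insert a.1 A) = true := by simp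
        rw [this]
      · apply Finset.prod_congr rfl
        intro l hls
        have hd : decide (l.1 ∈ insert a.1 A) = decide (l.1 ∈ A) := by
          apply decide_eq_decide.2
          simp [Finset.mem_insert, hrest_ne l hls]
        rw [hd]
    have hnotins : Ex (amb.erase a.1) p (fun A => ∏ l ∈ insert a s,
        (if (decide (l.1 ∈ A)) = l.2 then (0:ℝ) else 1))
        = Ex (amb.erase a.1) p (fun A => (if false = a.2 then (0:ℝ) else 1) *
            ∏ l ∈ s, (if (decide (l.1 ∈ A)) = l.2 then (0:ℝ) else 1)) := by
      apply Ex_congr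
      intro A hA
      rw [Finset.prod_insert hl]
      congr 1
      have haA : a.1 ∉ A := fun h =>
        (Finset.notMem_erase a.1 amb) (Finset.mem_powerset.1 hA h)
      have : decide (a.1 ∈ A) = false := by simp [haA]
      rw [this]
    rw [hins, hnotins, Ex_const_mul, Ex_const_mul, ihs]
    cases ha2 : a.2
    · rw [failP, ha2]
      norm_num
    · rw [failP, ha2]
      norm_num

end Stmt17

namespace Stmt17

noncomputable def pP (F : Finset Clause) : ℕ → ℝ :=
  fun v => if v ∈ unitVars F then (2:ℝ)/3 else 1/2

lemma pP_nonneg (F : Finset Clause) : ∀ v, 0 ≤ pP F v := by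
  intro v; rw [pP]; split <;> norm_num

lemma pP_le_one (F : Finset Clause) : ∀ v, pP F v ≤ 1 := by
  intro v; rw [pP]; split <;> norm_num

lemma failP_nonneg (F : Finset Clause) (l : ℕ × Bool) : 0 ≤ failP (pP F) l := by
  rcases l with ⟨v, b⟩
  rw [failP, pP]
  cases b <;> simp <;> split <;> norm_num

lemma failP_le (F : Finset Clause) (l : ℕ × Bool) : failP (pP F) l ≤ 2/3 := by
  rcases l with ⟨v, b⟩
  rw [failP, pP]
  cases b <;> simp <;> split <;> norm_num

lemma failP_nonunit (F : Finset Clause) (l : ℕ × Bool) (h : l.1 ∉ unitVars F) :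
    failP (pP F) l = 1/2 := by
  rcases l with ⟨v, b⟩
  rw [failP, pP]
  simp only at h
  cases b <;> simp [h] <;> norm_num

lemma prod_fail_subset (F : Finset Clause) {L C : Finset (ℕ × Bool)} (hLC : L ⊆ C)
    (A : Finset ℕ) :
    (∏ l ∈ C, (if (decide (l.1 ∈ A)) = l.2 then (0:ℝ) else 1))
      ≤ ∏ l ∈ L, (if (decide (l.1 ∈ A)) = l.2 then (0:ℝ) else 1) := by
  rw [← Finset.prod_sdiff hLC]
  have h1 : (∏ l ∈ C \ L, (if (decide (l.1 ∈ A)) = l.2 then (0:ℝ) else 1)) ≤ 1 :=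
    Finset.prod_le_one (fun l _ => by split <;> norm_num) (fun l _ => by split <;> norm_num)
  have h2 : (0:ℝ) ≤ ∏ l ∈ L, (if (decide (l.1 ∈ A)) = l.2 then (0:ℝ) else 1) :=
    Finset.prod_nonneg (fun l _ => by split <;> norm_num)
  exact mul_le_of_le_one_left h2 h1

lemma sat_singleton {τ : ℕ → Bool} {x : ℕ} {b : Bool}
    (h : SatC τ ({(x, b)} : Clause)) : τ x = b := by
  obtain ⟨l, hl, hlτ⟩ := h
  rw [Finset.mem_singleton] at hl
  subst hl
  exact hlτ

lemma prob_unsat_le (F : Finset Clause) (hF : IsCNF F) (h3 : Sat3 F) (hup : UnitPos F)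
    {C : Clause} (hC : C ∈ F) :
    Ex (vars F) (pP F) (fun A => ∏ l ∈ C, (if (decide (l.1 ∈ A)) = l.2 then (0:ℝ) else 1))
      ≤ (if IsHard F C then (1:ℝ)/3 else 8/27) := by
  classical
  have h0 := pP_nonneg F
  have h1 := pP_le_one F
  have hdistC : ∀ l ∈ C, ∀ l' ∈ C, l.1 = l'.1 → l = l' := by
    rintro ⟨v, b⟩ hl ⟨v', b'⟩ hl' hvar
    simp only at hvar
    subst hvar
    by_contra hne
    have hbb : b ≠ b' := fun h => hne (by rw [h])
    apply (hF C hC).2 v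
    cases b <;> cases b'
    · exact absurd rfl hbb
    · exact ⟨hl', hl⟩
    · exact ⟨hl, hl'⟩
    · exact absurd rfl hbb
  have hvarsC : ∀ l ∈ C, l.1 ∈ vars F := fun l hl =>
    Finset.mem_sup.2 ⟨C, hC, Finset.mem_image.2 ⟨l, hl, rfl⟩⟩
  have key : ∀ L ⊆ C,
      Ex (vars F) (pP F) (fun A => ∏ l ∈ C, (if (decide (l.1 ∈ A)) = l.2 then (0:ℝ) else 1))
        ≤ ∏ l ∈ L, failP (pP F) l := by
    intro L hLC
    calc Ex (vars F) (pP F) (fun A => ∏ l ∈ C, (if (decide (l.1 ∈ A)) = l.2 then (0:ℝ) else 1))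
        ≤ Ex (vars F) (pP F) (fun A => ∏ l ∈ L, (if (decide (l.1 ∈ A)) = l.2 then (0:ℝ) else 1)) :=
          Ex_mono h0 h1 (fun A _ => prod_fail_subset F hLC A)
    _ = ∏ l ∈ L, failP (pP F) l :=
          Ex_allfail (pP F) L (vars F) (fun l hl => hvarsC l (hLC hl))
            (fun l hl l' hl' => hdistC l (hLC hl) l' (hLC hl'))
  by_cases hhard : IsHard F C
  · rw [if_pos hhard]
    rcases hhard with ⟨x, hCeq⟩ | ⟨x, hx, y, hy, b, hCeq⟩
    · subst hCeq
      have hxV : x ∈ unitVars F := (mem_unitVars F hup).2 hC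
      refine le_trans (key _ (subset_refl _)) ?_
      rw [Finset.prod_singleton, failP, pP]
      norm_num [hxV]
    · subst hCeq
      refine le_trans (key _ (subset_refl _)) ?_
      have hxy : x ≠ y := fun h => hy (h ▸ hx)
      have hne : ((x, false) : ℕ × Bool) ≠ (y, b) := by simp [hxy]
      rw [Finset.prod_insert (by simp [hne]), Finset.prod_singleton]
      have hfx : failP (pP F) (x, false) = 2/3 := by
        rw [failP, pP]; simp [hx]
      have hfy : failP (pP F) (y, b) = 1/2 := failP_nonunit F (y, b) hy
      rw [hfx, hfy]
      norm_num
  · rw [if_neg hhard]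
    have hcard1 : C.card ≠ 1 := by
      intro h1c
      obtain ⟨x, hCeq⟩ := hup C hC h1c
      exact hhard (Or.inl ⟨x, hCeq⟩)
    have hcard0 : C.card ≠ 0 := by
      intro h0c
      have hne := (hF C hC).1
      rw [Finset.card_eq_zero] at h0c
      rw [h0c] at hne
      exact Finset.not_nonempty_empty hne
    by_cases hpos : ∃ l ∈ C, l.2 = true ∧ l.1 ∈ unitVars F
    · obtain ⟨l1, hl1, hl1b, hl1V⟩ := hpos
      have hc2 : 1 < C.card := by omega
      obtain ⟨l2, hl2, hl2ne⟩ := Finset.exists_mem_ne hc2 l1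
      have hL : ({l1, l2} : Finset (ℕ × Bool)) ⊆ C := by
        intro l hl
        rw [Finset.mem_insert, Finset.mem_singleton] at hl
        rcases hl with rfl | rfl
        · exact hl1
        · exact hl2
      refine le_trans (key _ hL) ?_
      rw [Finset.prod_insert (by simp [(Ne.symm hl2ne)]), Finset.prod_singleton]
      have hf1 : failP (pP F) l1 = 1/3 := by
        rcases l1 with ⟨v1, b1⟩
        simp only at hl1b hl1V
        subst hl1b
        rw [failP, pP]
        simp [hl1V]
        norm_num
      rw [hf1]
      have hf2 := failP_le F l2
      have hf2n := failP_nonneg F l2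
      nlinarith
    · push_neg at hpos
      rcases Nat.lt_or_ge C.card 3 with hcardlt | hcard3
      · -- card = 2
        have hcard2 : C.card = 2 := by omega
        obtain ⟨l1, l2, hne, hCeq⟩ := Finset.card_eq_two.1 hcard2
        subst hCeq
        have hl1C : l1 ∈ ({l1, l2} : Finset (ℕ × Bool)) := Finset.mem_insert_self _ _
        have hl2C : l2 ∈ ({l1, l2} : Finset (ℕ × Bool)) :=
          Finset.mem_insert_of_mem (Finset.mem_singleton_self _)
        by_cases h1V : l1.1 ∈ unitVars F <;> by_cases h2V : l2.1 ∈ unitVars F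
        · -- both negative unit literals : contradiction with Sat3
          exfalso
          have hb1 : l1.2 = false := by
            rcases Bool.eq_false_or_eq_true l1.2 with h | h
            · exact absurd h1V (hpos l1 hl1C h)
            · exact h
          have hb2 : l2.2 = false := by
            rcases Bool.eq_false_or_eq_true l2.2 with h | h
            · exact absurd h2V (hpos l2 hl2C h)
            · exact h
          have hu1 : ({(l1.1, true)} : Clause) ∈ F := (mem_unitVars F hup).1 h1V
          have hu2 : ({(l2.1, true)} : Clause) ∈ F := (mem_unitVars F hup).1 h2V
          obtain ⟨τ, hs1, hs2, hs3⟩ := h3 _ hu1 _ hu2 _ hC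
          have ht1 : τ l1.1 = true := sat_singleton hs1
          have ht2 : τ l2.1 = true := sat_singleton hs2
          obtain ⟨m, hm, hmτ⟩ := hs3
          rw [Finset.mem_insert, Finset.mem_singleton] at hm
          rcases hm with rfl | rfl
          · rw [hb1, ht1] at hmτ
            exact Bool.false_ne_true hmτ.symm
          · rw [hb2, ht2] at hmτ
            exact Bool.false_ne_true hmτ.symm
        · -- l1 unit (negative), l2 not : C would be hard
          exfalso
          have hb1 : l1.2 = false := by
            rcases Bool.eq_false_or_eq_true l1.2 with h | h
            · exact absurd h1V (hpos l1 hl1C h)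
            · exact h
          apply hhard
          right
          refine ⟨l1.1, h1V, l2.1, h2V, l2.2, ?_⟩
          have he1 : l1 = (l1.1, false) := by
            rcases l1 with ⟨v1, b1⟩
            simp only at hb1
            rw [hb1]
          have he2 : l2 = (l2.1, l2.2) := rfl
          rw [← he1, ← he2]
        · -- l2 unit (negative), l1 not : C hard (reversed pair)
          exfalso
          have hb2 : l2.2 = false := by
            rcases Bool.eq_false_or_eq_true l2.2 with h | h
            · exact absurd h2V (hpos l2 hl2C h)
            · exact h
          apply hhard
          right
          refine ⟨l2.1, h2V, l1.1, h1V, l1.2, ?_⟩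
          have he2 : l2 = (l2.1, false) := by
            rcases l2 with ⟨v2, b2⟩
            simp only at hb2
            rw [hb2]
          have he1 : l1 = (l1.1, l1.2) := rfl
          rw [Finset.pair_comm]
          rw [← he2, ← he1]
        · -- both non-unit : 1/4
          refine le_trans (key _ (subset_refl _)) ?_
          rw [Finset.prod_insert (by simp [hne]), Finset.prod_singleton]
          rw [failP_nonunit F l1 h1V, failP_nonunit F l2 h2V]
          norm_num
      · -- card ≥ 3
        have hCne : C.Nonempty := Finset.card_pos.1 (by omega)
        obtain ⟨l1, hl1⟩ := hCne
        have h2c : 0 < (C.erase l1).card := by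
          rw [Finset.card_erase_of_mem hl1]; omega
        obtain ⟨l2, hl2⟩ := Finset.card_pos.1 h2c
        have h3c : 0 < ((C.erase l1).erase l2).card := by
          rw [Finset.card_erase_of_mem hl2, Finset.card_erase_of_mem hl1]; omega
        obtain ⟨l3, hl3⟩ := Finset.card_pos.1 h3c
        have hl2C : l2 ∈ C := Finset.mem_of_mem_erase hl2
        have hl3e : l3 ∈ C.erase l1 := Finset.mem_of_mem_erase hl3
        have hl3C : l3 ∈ C := Finset.mem_of_mem_erase hl3e
        have h21 : l2 ≠ l1 := Finset.ne_of_mem_erase hl2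
        have h32 : l3 ≠ l2 := Finset.ne_of_mem_erase hl3
        have h31 : l3 ≠ l1 := Finset.ne_of_mem_erase hl3e
        have hL : ({l1, l2, l3} : Finset (ℕ × Bool)) ⊆ C := by
          intro l hl
          rw [Finset.mem_insert, Finset.mem_insert, Finset.mem_singleton] at hl
          rcases hl with rfl | rfl | rfl
          · exact hl1
          · exact hl2C
          · exact hl3C
        refine le_trans (key _ hL) ?_
        rw [Finset.prod_insert (by simp [Ne.symm h21, Ne.symm h31]),
          Finset.prod_insert (by simp [Ne.symm h32]), Finset.prod_singleton]
        have ha := failP_le F l1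
        have hb := failP_le F l2
        have hc := failP_le F l3
        have han := failP_nonneg F l1
        have hbn := failP_nonneg F l2
        have hcn := failP_nonneg F l3
        have h12 : failP (pP F) l1 * failP (pP F) l2 ≤ (2:ℝ)/3 * (2/3) :=
          mul_le_mul ha hb hbn (by norm_num)
        have h123 : failP (pP F) l1 * failP (pP F) l2 * failP (pP F) l3
            ≤ ((2:ℝ)/3 * (2/3)) * (2/3) :=
          mul_le_mul h12 hc hcn (by norm_num)
        rw [← mul_assoc]
        linarith

end Stmt17

namespace Stmt17

lemma satWt_cast (F : Finset Clause) (w : Clause → ℕ) (τ : ℕ → Bool) :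
    (satWt w τ F : ℝ) = ∑ C ∈ F, (if SatC τ C then (w C : ℝ) else 0) := by
  rw [satWt, Finset.sum_filter]
  push_cast [apply_ite (fun n : ℕ => (n : ℝ))]
  rfl

lemma strat_0 (F : Finset Clause) (w : Clause → ℕ) (hF : IsCNF F) (h3 : Sat3 F)
    (hup : UnitPos F) :
    ∃ τ : ℕ → Bool,
      (2:ℝ)/3 * (wt w (F.filter (IsHard F)) : ℝ) + (19:ℝ)/27 * (wt w (softF F) : ℝ)
        ≤ (satWt w τ F : ℝ) := by
  classical
  have h0 := pP_nonneg F
  have h1 := pP_le_one F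
  set f : Finset ℕ → ℝ := fun A =>
    ∑ C ∈ F, (if SatC (fun v => decide (v ∈ A)) C then (w C : ℝ) else 0) with hf
  have hEx : (2:ℝ)/3 * (wt w (F.filter (IsHard F)) : ℝ) + (19:ℝ)/27 * (wt w (softF F) : ℝ)
      ≤ Ex (vars F) (pP F) f := by
    rw [hf, Ex_sum]
    have hterm : ∀ C ∈ F,
        (w C : ℝ) * (1 - (if IsHard F C then (1:ℝ)/3 else 8/27))
          ≤ Ex (vars F) (pP F)
              (fun A => if SatC (fun v => decide (v ∈ A)) C then (w C : ℝ) else 0) := by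
      intro C hC
      have hid : ∀ A : Finset ℕ,
          (if SatC (fun v => decide (v ∈ A)) C then (w C : ℝ) else 0)
          = (w C : ℝ) * (1 - ∏ l ∈ C, (if (decide (l.1 ∈ A)) = l.2 then (0:ℝ) else 1)) := by
        intro A
        by_cases hs : SatC (fun v => decide (v ∈ A)) C
        · rw [if_pos hs]
          obtain ⟨l, hl, hlτ⟩ := hs
          rw [Finset.prod_eq_zero hl (by rw [if_pos hlτ])]
          ring
        · rw [if_neg hs, Finset.prod_eq_one ?h1]
          · ring
          case h1 =>
            intro l hl
            rw [if_neg]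
            intro hdec
            exact hs ⟨l, hl, hdec⟩
      have hEeq : Ex (vars F) (pP F)
          (fun A => if SatC (fun v => decide (v ∈ A)) C then (w C : ℝ) else 0)
          = (w C : ℝ) * (1 - Ex (vars F) (pP F)
              (fun A => ∏ l ∈ C, (if (decide (l.1 ∈ A)) = l.2 then (0:ℝ) else 1))) := by
        rw [Ex_congr (fun A _ => hid A)]
        have hlin : ∀ A : Finset ℕ,
            (w C : ℝ) * (1 - ∏ l ∈ C, (if (decide (l.1 ∈ A)) = l.2 then (0:ℝ) else 1))
            = (w C : ℝ) + (-(w C : ℝ)) *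
                (∏ l ∈ C, (if (decide (l.1 ∈ A)) = l.2 then (0:ℝ) else 1)) := by
          intro A; ring
        rw [Ex_congr (fun A _ => hlin A), Ex_add, Ex_const, Ex_const_mul]
        ring
      rw [hEeq]
      have hb := prob_unsat_le F hF h3 hup hC
      have hwnn : (0:ℝ) ≤ (w C : ℝ) := Nat.cast_nonneg _
      apply mul_le_mul_of_nonneg_left _ hwnn
      linarith
    have hsum := Finset.sum_le_sum hterm
    refine le_trans (le_of_eq ?_) hsum
    rw [← Finset.sum_filter_add_sum_filter_not F (IsHard F)
      (f := fun C => (w C : ℝ) * (1 - (if IsHard F C then (1:ℝ)/3 else 8/27)))]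
    have hh : ∑ C ∈ F.filter (IsHard F),
        (w C : ℝ) * (1 - (if IsHard F C then (1:ℝ)/3 else 8/27))
        = 2/3 * (wt w (F.filter (IsHard F)) : ℝ) := by
      rw [wt]
      push_cast
      rw [Finset.mul_sum]
      apply Finset.sum_congr rfl
      intro C hCm
      rw [if_pos (Finset.mem_filter.1 hCm).2]
      ring
    have hs : ∑ C ∈ F.filter (fun C => ¬ IsHard F C),
        (w C : ℝ) * (1 - (if IsHard F C then (1:ℝ)/3 else 8/27))
        = 19/27 * (wt w (softF F) : ℝ) := by
      rw [softF, wt]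
      push_cast
      rw [Finset.mul_sum]
      apply Finset.sum_congr rfl
      intro C hCm
      rw [if_neg (Finset.mem_filter.1 hCm).2]
      ring
    rw [hh, hs]
  obtain ⟨A, -, hAle⟩ := exists_Ex_le h0 h1 f
  refine ⟨fun v => decide (v ∈ A), ?_⟩
  have : f A = (satWt w (fun v => decide (v ∈ A)) F : ℝ) := (satWt_cast F w _).symm
  linarith [hEx, hAle, this.symm.le, this.le]

end Stmt17

namespace Stmt17

lemma V1_subset_vars (F : Finset Clause) (hup : UnitPos F) : unitVars F ⊆ vars F := by
  intro x hx
  have hmem : ({(x, true)} : Clause) ∈ F := (mem_unitVars F hup).1 hx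
  exact Finset.mem_sup.2 ⟨_, hmem, Finset.mem_image.2 ⟨(x, true),
    Finset.mem_singleton_self _, rfl⟩⟩

lemma V2_subset_vars (F : Finset Clause) : V2set F ⊆ vars F := by
  intro y hy
  rw [V2set, Finset.mem_sdiff, Finset.mem_sup] at hy
  obtain ⟨⟨C, hC, hyC⟩, -⟩ := hy
  exact Finset.mem_sup.2 ⟨C, (Finset.mem_filter.1 hC).1, hyC⟩

lemma vars_card_split (F : Finset Clause) (hup : UnitPos F) :
    ((vars F).card : ℝ) = ((unitVars F).card : ℝ) + ((V2set F).card : ℝ)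
      + ((vars F \ (unitVars F ∪ V2set F)).card : ℝ) := by
  have hsub : unitVars F ∪ V2set F ⊆ vars F :=
    Finset.union_subset (V1_subset_vars F hup) (V2_subset_vars F)
  have hdisj : Disjoint (unitVars F) (V2set F) := by
    rw [Finset.disjoint_left]
    intro x hx hx2
    exact V2_not_unit F hx2 hx
  have h1 : (vars F \ (unitVars F ∪ V2set F)).card + (unitVars F ∪ V2set F).card
      = (vars F).card := Finset.card_sdiff_add_card_eq_card hsub
  have h2 : (unitVars F ∪ V2set F).card = (unitVars F).card + (V2set F).card :=
    Finset.card_union_of_disjoint hdisj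
  push_cast [← h1, h2]
  ring

lemma V3_le_soft (F : Finset Clause) (w : Clause → ℕ) (hup : UnitPos F)
    (hexp : Expanding F w) :
    ((vars F \ (unitVars F ∪ V2set F)).card : ℝ) ≤ (wt w (softF F) : ℝ) := by
  have hXsub : vars F \ (unitVars F ∪ V2set F) ⊆ vars F := Finset.sdiff_subset
  have h1 := hexp _ hXsub
  have h2 : FU F (vars F \ (unitVars F ∪ V2set F)) ⊆ softF F := by
    intro C hC
    rw [FU, Finset.mem_filter] at hC
    obtain ⟨hCF, l, hl, hlX⟩ := hC
    rw [Finset.mem_sdiff] at hlX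
    obtain ⟨-, hlnot⟩ := hlX
    rw [softF, Finset.mem_filter]
    refine ⟨hCF, ?_⟩
    intro hhard
    apply hlnot
    rcases hhard with ⟨x, hCeq⟩ | hd2
    · subst hCeq
      rw [Finset.mem_singleton] at hl
      subst hl
      exact Finset.mem_union_left _ ((mem_unitVars F hup).2 hCF)
    · have hC2 : C ∈ F2set F := Finset.mem_filter.2 ⟨hCF, hd2⟩
      obtain ⟨-, hxV, -, hCeq, -⟩ := F2_spec F hC2
      have hyV2 : yOf F C ∈ V2set F := yOf_mem_V2 F hC2
      rw [hCeq, Finset.mem_insert, Finset.mem_singleton] at hl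
      rcases hl with rfl | rfl
      · exact Finset.mem_union_left _ hxV
      · exact Finset.mem_union_right _ hyV2
  have h3 : wt w (FU F (vars F \ (unitVars F ∪ V2set F))) ≤ wt w (softF F) :=
    Finset.sum_le_sum_of_subset h2
  exact_mod_cast le_trans h1 h3

lemma wt_split (F : Finset Clause) (w : Clause → ℕ) :
    (wt w F : ℝ) = (wt w (F.filter (IsHard F)) : ℝ) + (wt w (softF F) : ℝ) := by
  rw [softF, wt, wt, wt, ← Finset.sum_filter_add_sum_filter_not F (IsHard F) w]
  push_cast
  ring

end Stmt17

theorem stmt17 (F : Finset Clause) (w : Clause → ℕ)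
    (hF : IsCNF F) (hw : ∀ C ∈ F, 0 < w C) (h3 : Sat3 F) (hup : UnitPos F)
    (hexp : Expanding F w)
    (hnotfat : (wt w (softF F) : ℝ)
              < (18:ℝ)/133 * (((unitVars F).card : ℝ) + ((V2set F).card : ℝ))) :
    ∃ τ : ℕ → Bool,
      (2:ℝ)/3 * wt w F + (2:ℝ)/453 * ((vars F).card : ℝ) ≤ (satWt w τ F : ℝ) := by
  classical
  obtain ⟨τ1, hτ1⟩ := Stmt17.strat_i F w hw h3 hup
  obtain ⟨τ2, hτ2⟩ := Stmt17.strat_ii F w hw h3 hup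
  obtain ⟨τ3, hτ3⟩ := Stmt17.strat_0 F w hF h3 hup
  set H : ℝ := (wt w (F.filter (IsHard F)) : ℝ) with hH
  set S : ℝ := (wt w (softF F) : ℝ) with hS
  set N1 : ℝ := ((unitVars F).card : ℝ) with hN1
  set N2 : ℝ := ((V2set F).card : ℝ) with hN2
  set N3 : ℝ := ((vars F \ (unitVars F ∪ V2set F)).card : ℝ) with hN3
  have hvars : ((vars F).card : ℝ) = N1 + N2 + N3 := Stmt17.vars_card_split F hup
  have hV3 : N3 ≤ S := Stmt17.V3_le_soft F w hup hexp
  have hwtF : (wt w F : ℝ) = H + S := Stmt17.wt_split F w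
  have hgoal : (2:ℝ)/3 * (wt w F : ℝ) + (2:ℝ)/453 * ((vars F).card : ℝ)
      ≤ 2/7 * (2/3 * H + N1/6) + 3/14 * (2/3 * H + 2/9 * N2)
        + 1/2 * (2/3 * H + 19/27 * S) := by
    rw [hwtF, hvars]
    linarith
  by_contra hcon
  push_neg at hcon
  have hc1 := hcon τ1
  have hc2 := hcon τ2
  have hc3 := hcon τ3
  linarith
end
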